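/- arXiv:2204.02432 — 9 statements merged into one kernel-verified Lean document; each statement's English description precedes it below -/
import Mathlib

section
/- Outcome-regression decomposition (identification of μ_a*, section 2.2): under Assumptions NI and POS, M = Γ·M_R + (1−Γ)·M_S = μ almost everywhere on {π > 0}; consequently, if π > 0 almost surely, the identified functional τ_a(P) := E[μ] equals the g-formula functional E[M] = E_P[E(Y | L, A = a)]. -/
open MeasureTheory

open Filter Topology

/-- Doob–Dynkin: a real-valued function strongly measurable w.r.t. the σ-algebra
pulled back along `T` factors measurably through `T`. -/
lemma doob_dynkin_real {α β : Type*} [mβ : MeasurableSpace β] {T : α → β} {φ : α → ℝ}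
    (hφ : StronglyMeasurable[mβ.comap T] φ) :
    ∃ G : β → ℝ, Measurable G ∧ ∀ x, φ x = G (T x) := by
  have hsf : ∀ s : @SimpleFunc α (mβ.comap T) ℝ,
      ∃ G : β → ℝ, Measurable G ∧ ∀ x, s x = G (T x) := by
    intro s
    refine @SimpleFunc.induction α ℝ (mβ.comap T) _
      (fun s => ∃ G : β → ℝ, Measurable G ∧ ∀ x, s x = G (T x)) ?_ ?_ s
    · rintro c u hu
      obtain ⟨u', hu', rfl⟩ := hu
      classical
      refine ⟨fun b => if b ∈ u' then c else 0, Measurable.ite hu' measurable_const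
        measurable_const, fun x => ?_⟩
      change Set.piecewise (T ⁻¹' u') _ _ x = _; simp only [Set.piecewise, Set.mem_preimage]; split_ifs <;> rfl
    · rintro f g _ ⟨Gf, hGf, hf⟩ ⟨Gg, hGg, hg⟩
      exact ⟨Gf + Gg, hGf.add hGg, fun x => by simp [hf x, hg x]⟩
  choose Gn hGn hGn_eq using fun n => hsf (hφ.approx n)
  set E : Set β := {b | ∃ c, Tendsto (fun n => Gn n b) atTop (𝓝 c)} with hE
  have hEm : MeasurableSet E := measurableSet_exists_tendsto hGn
  have hconv : ∀ b, ∃ c, Tendsto (fun n => E.indicator (Gn n) b) atTop (𝓝 c) := by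
    intro b
    by_cases hb : b ∈ E
    · obtain ⟨c, hc⟩ := id hb
      refine ⟨c, ?_⟩
      have : (fun n => E.indicator (Gn n) b) = fun n => Gn n b := by
        funext n; exact Set.indicator_of_mem hb _
      rw [this]; exact hc
    · refine ⟨0, ?_⟩
      have : (fun n => E.indicator (Gn n) b) = fun _ => (0:ℝ) := by
        funext n; exact Set.indicator_of_notMem hb _
      rw [this]; exact tendsto_const_nhds
  choose G hG using hconv
  refine ⟨G, ?_, ?_⟩
  · exact measurable_of_tendsto_metrizable (fun n => (hGn n).indicator hEm)
      (tendsto_pi_nhds.mpr hG)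
  · intro x
    have h1 : Tendsto (fun n => Gn n (T x)) atTop (𝓝 (φ x)) := by
      have := hφ.tendsto_approx x
      simpa [fun n => hGn_eq n x] using this
    have hTx : T x ∈ E := ⟨φ x, h1⟩
    have h2 : Tendsto (fun n => E.indicator (Gn n) (T x)) atTop (𝓝 (φ x)) := by
      have : (fun n => E.indicator (Gn n) (T x)) = fun n => Gn n (T x) := by
        funext n; exact Set.indicator_of_mem hTx _
      rw [this]; exact h1
    exact tendsto_nhds_unique h2 (hG (T x))

/-- Outcome-regression decomposition (section 2.2): under Assumptions NI and POS,
`μ = Γ·M_R + (1−Γ)·M_S = M` a.e. on `{π > 0}`; consequently, if `π > 0` a.s.,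
the identified functional `τ_a(P) = E[μ]` equals the g-formula functional `E[M]`. -/
theorem outcome_regression_decomposition
    {Ω : Type*} [MeasurableSpace Ω] (P : Measure Ω) [IsProbabilityMeasure P]
    {d : ℕ} (L : Ω → (Fin d → ℝ)) (A R S Y : Ω → ℝ)
    (hL : Measurable L) (hA : Measurable A) (hR : Measurable R)
    (hS : Measurable S) (hY : Integrable Y P)
    (hA01 : ∀ ω, A ω = 0 ∨ A ω = 1)
    (hR01 : ∀ ω, R ω = 0 ∨ R ω = 1)
    (hS01 : ∀ ω, S ω = 0 ∨ S ω = 1)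
    (hSR : ∀ ω, S ω * R ω = 0)
    (a : ℝ) (ha : a = 0 ∨ a = 1)
    (𝓛 : MeasurableSpace Ω) (h𝓛 : 𝓛 = MeasurableSpace.comap L inferInstance)
    (𝓖R : MeasurableSpace Ω)
    (h𝓖R : 𝓖R = MeasurableSpace.comap (fun ω => (L ω, A ω, R ω)) inferInstance)
    (ind : Ω → ℝ) (hind : ind = fun ω => if A ω = a then (1:ℝ) else 0)
    -- arm-a nuisance random variables
    (π Γ H M M_R M_S : Ω → ℝ)
    (hπ_meas : Measurable[𝓛] π) (hπ_int : Integrable π P)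
    (hΓ_meas : Measurable[𝓛] Γ) (hΓ_int : Integrable Γ P)
    (hH_meas : Measurable[𝓛] H) (hH_int : Integrable H P)
    (hM_meas : Measurable[𝓛] M) (hM_int : Integrable M P)
    (hMR_meas : Measurable[𝓛] M_R) (hMR_int : Integrable M_R P)
    (hMS_meas : Measurable[𝓛] M_S) (hMS_int : Integrable M_S P)
    (hπ01 : ∀ ω, 0 ≤ π ω ∧ π ω ≤ 1)
    (hΓ01 : ∀ ω, 0 ≤ Γ ω ∧ Γ ω ≤ 1)
    (hH01 : ∀ ω, 0 ≤ H ω ∧ H ω ≤ 1)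
    -- characterizations
    (hπ : P[ind | 𝓛] =ᵐ[P] π)
    (hΓ : P[fun ω => ind ω * R ω | 𝓛] =ᵐ[P] fun ω => Γ ω * π ω)
    (hH : P[fun ω => ind ω * S ω | 𝓛]
      =ᵐ[P] fun ω => H ω * (P[fun ω' => ind ω' * (1 - R ω') | 𝓛]) ω)
    (hM : P[fun ω => ind ω * Y ω | 𝓛] =ᵐ[P] fun ω => M ω * π ω)
    (hMR : P[fun ω => ind ω * R ω * Y ω | 𝓛] =ᵐ[P] fun ω => M_R ω * (Γ ω * π ω))
    (hMS : P[fun ω => ind ω * S ω * Y ω | 𝓛]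
      =ᵐ[P] fun ω => M_S ω * (H ω * ((1 - Γ ω) * π ω)))
    -- Assumption NI
    (hNI : ∀ f : ℝ → ℝ, Measurable f → (∃ B, ∀ x, |f x| ≤ B) →
      ∀ᵐ ω ∂P, R ω = 0 →
        (P[fun ω' => S ω' * f (Y ω') | 𝓖R]) ω
          = (P[S | 𝓖R]) ω * (P[fun ω' => f (Y ω') | 𝓖R]) ω)
    (hNIid : ∀ᵐ ω ∂P, R ω = 0 →
      (P[fun ω' => S ω' * Y ω' | 𝓖R]) ω = (P[S | 𝓖R]) ω * (P[Y | 𝓖R]) ω)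
    -- Assumption POS
    (ε : ℝ) (hε : 0 < ε)
    (hPOS : ∀ᵐ ω ∂P, R ω = 0 → ε ≤ (P[S | 𝓖R]) ω) :
    (∀ᵐ ω ∂P, 0 < π ω → Γ ω * M_R ω + (1 - Γ ω) * M_S ω = M ω)
    ∧ ((∀ᵐ ω ∂P, 0 < π ω) →
        ∫ ω, (Γ ω * M_R ω + (1 - Γ ω) * M_S ω) ∂P = ∫ ω, M ω ∂P) := by
  classical
  letI mΩ : MeasurableSpace Ω := (fun {m : MeasurableSpace Ω} (_ : @Measure Ω m) => m) P
  -- σ-algebra comparisons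
  have h𝓛le := le_trans (le_of_eq h𝓛) hL.comap_le
  set T : Ω → (Fin d → ℝ) × ℝ × ℝ := fun ω => (L ω, A ω, R ω) with hT_def
  have hT := hL.prodMk (hA.prodMk hR)
  have h𝓖Rle := le_trans (le_of_eq h𝓖R) hT.comap_le
  have h𝓛𝓖R : 𝓛 ≤ 𝓖R := by
    have hL' : L = Prod.fst ∘ T := rfl
    rw [h𝓛, h𝓖R, hL', ← MeasurableSpace.comap_comp]
    exact MeasurableSpace.comap_mono measurable_fst.comap_le
  haveI hSF : SigmaFinite (P.trim h𝓖Rle) := inferInstance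
  haveI hSF2 : SigmaFinite (P.trim h𝓛le) := inferInstance
  -- basic measurability/bounds
  have hstep : Measurable fun x : ℝ => if x = a then (1:ℝ) else 0 :=
    Measurable.ite measurableSet_eq measurable_const measurable_const
  have hind_aesm : AEStronglyMeasurable ind P := by
    rw [hind]; exact ((hstep.comp hA)).aestronglyMeasurable
  have hind01 : ∀ ω, ind ω = 0 ∨ ind ω = 1 := by
    intro ω; rw [hind]; by_cases h : A ω = a <;> simp [h]
  have habs1 : ∀ x : ℝ, x = 0 ∨ x = 1 → |x| ≤ 1 := by
    rintro x (rfl | rfl) <;> norm_num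
  set ρ : Ω → ℝ := fun ω => ind ω * (1 - R ω) with hρ_def
  have hρ01 : ∀ ω, ρ ω = 0 ∨ ρ ω = 1 := by
    intro ω
    rcases hind01 ω with h1 | h1 <;> rcases hR01 ω with h2 | h2 <;>
      simp [hρ_def, h1, h2]
  have hρ_aesm : AEStronglyMeasurable ρ P :=
    hind_aesm.mul (measurable_const.sub hR).aestronglyMeasurable
  have hA_𝓖R : Measurable[𝓖R] A := by
    rw [h𝓖R]
    exact (measurable_fst.comp measurable_snd).comp (comap_measurable T)
  have hR_𝓖R : Measurable[𝓖R] R := by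
    rw [h𝓖R]
    exact (measurable_snd.comp measurable_snd).comp (comap_measurable T)
  have hind_𝓖R : Measurable[𝓖R] ind := by
    rw [hind]; exact hstep.comp hA_𝓖R
  have hρ_𝓖R : StronglyMeasurable[𝓖R] ρ :=
    (hind_𝓖R.mul (measurable_const.sub hR_𝓖R)).stronglyMeasurable
  -- integrability helpers
  have hbd_int : ∀ f : Ω → ℝ, AEStronglyMeasurable f P → (∀ ω, |f ω| ≤ 1) →
      Integrable f P := by
    intro f hf hb
    exact (integrable_const (1:ℝ)).mono' hf
      (Eventually.of_forall fun ω => by simpa [Real.norm_eq_abs] using hb ω)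
  have hmulY_int : ∀ f : Ω → ℝ, AEStronglyMeasurable f P → (∀ ω, |f ω| ≤ 1) →
      Integrable (fun ω => f ω * Y ω) P := by
    intro f hf hb
    refine hY.abs.mono' (hf.mul hY.aestronglyMeasurable)
      (Eventually.of_forall fun ω => ?_)
    have := hb ω
    simp only [Real.norm_eq_abs, abs_mul, abs_abs]
    calc |f ω| * |Y ω| ≤ 1 * |Y ω| := mul_le_mul_of_nonneg_right this (abs_nonneg _)
      _ = |Y ω| := one_mul _
  have hS_aesm : AEStronglyMeasurable S P := hS.aestronglyMeasurable
  have hR_aesm : AEStronglyMeasurable R P := hR.aestronglyMeasurable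
  have hindR_aesm : AEStronglyMeasurable (fun ω => ind ω * R ω) P := hind_aesm.mul hR_aesm
  have hindS_aesm : AEStronglyMeasurable (fun ω => ind ω * S ω) P := hind_aesm.mul hS_aesm
  have hind_int : Integrable ind P := hbd_int ind hind_aesm fun ω => habs1 _ (hind01 ω)
  have hρ_int : Integrable ρ P := hbd_int ρ hρ_aesm fun ω => habs1 _ (hρ01 ω)
  have hindR01 : ∀ ω, ind ω * R ω = 0 ∨ ind ω * R ω = 1 := by
    intro ω
    rcases hind01 ω with h1 | h1 <;> rcases hR01 ω with h2 | h2 <;> simp [h1, h2]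
  have hindS01 : ∀ ω, ind ω * S ω = 0 ∨ ind ω * S ω = 1 := by
    intro ω
    rcases hind01 ω with h1 | h1 <;> rcases hS01 ω with h2 | h2 <;> simp [h1, h2]
  have hindR_int : Integrable (fun ω => ind ω * R ω) P :=
    hbd_int _ hindR_aesm fun ω => habs1 _ (hindR01 ω)
  have hS_int : Integrable S P := hbd_int S hS_aesm fun ω => habs1 _ (hS01 ω)
  have hindS_int : Integrable (fun ω => ind ω * S ω) P :=
    hbd_int _ hindS_aesm fun ω => habs1 _ (hindS01 ω)
  have hSY_int : Integrable (fun ω => S ω * Y ω) P :=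
    hmulY_int S hS_aesm fun ω => habs1 _ (hS01 ω)
  have hindY_int : Integrable (fun ω => ind ω * Y ω) P :=
    hmulY_int ind hind_aesm fun ω => habs1 _ (hind01 ω)
  have hρY_int : Integrable (fun ω => ρ ω * Y ω) P :=
    hmulY_int ρ hρ_aesm fun ω => habs1 _ (hρ01 ω)
  have hindRY_int : Integrable (fun ω => ind ω * R ω * Y ω) P :=
    hmulY_int (fun ω => ind ω * R ω) hindR_aesm fun ω => habs1 _ (hindR01 ω)
  have hindSY_int : Integrable (fun ω => ind ω * S ω * Y ω) P :=
    hmulY_int (fun ω => ind ω * S ω) hindS_aesm fun ω => habs1 _ (hindS01 ω)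
  -- conditional expectations at 𝓖R
  set g : Ω → ℝ := P[S | 𝓖R] with hg_def
  set h : Ω → ℝ := P[Y | 𝓖R] with hh_def
  set k : Ω → ℝ := P[fun ω' => S ω' * Y ω' | 𝓖R] with hk_def
  have hg0 : 0 ≤ᵐ[P] g :=
    condExp_nonneg (Eventually.of_forall fun ω => by rcases hS01 ω with h1 | h1 <;> simp [h1])
  have hg1 : g ≤ᵐ[P] fun _ => (1:ℝ) := by
    have h1 : g ≤ᵐ[P] P[fun _ => (1:ℝ) | 𝓖R] :=
      condExp_mono hS_int (integrable_const 1)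
        (Eventually.of_forall fun ω => by rcases hS01 ω with h1 | h1 <;> simp [h1])
    have h2 : P[fun _ : Ω => (1:ℝ) | 𝓖R] = fun _ => (1:ℝ) := condExp_const h𝓖Rle 1
    rw [h2] at h1; exact h1
  -- pull-out at 𝓖R
  have pull : ∀ u : Ω → ℝ, Integrable u P → Integrable (fun ω => ρ ω * u ω) P →
      P[fun ω => ρ ω * u ω | 𝓖R] =ᵐ[P] fun ω => ρ ω * (P[u | 𝓖R]) ω := by
    intro u hu hu2
    exact condExp_mul_of_stronglyMeasurable_left hρ_𝓖R hu2 hu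
  have tower : ∀ u : Ω → ℝ, P[P[u | 𝓖R] | 𝓛] =ᵐ[P] P[u | 𝓛] := fun u =>
    condExp_condExp_of_le h𝓛𝓖R h𝓖Rle
  -- pull-out at 𝓛
  have pullL : ∀ v u : Ω → ℝ, StronglyMeasurable[𝓛] v →
      Integrable (fun ω => v ω * u ω) P → Integrable u P →
      P[fun ω => v ω * u ω | 𝓛] =ᵐ[P] fun ω => v ω * (P[u | 𝓛]) ω := by
    intro v u hv hvu hu
    exact condExp_mul_of_stronglyMeasurable_left hv hvu hu
  -- Step 1: P[ρ|𝓛] = (1-Γ)π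
  have hρcond : P[ρ | 𝓛] =ᵐ[P] fun ω => (1 - Γ ω) * π ω := by
    have hsplit : ρ = fun ω => ind ω - ind ω * R ω := by
      funext ω; simp [hρ_def]; ring
    have h1 : P[ρ | 𝓛] =ᵐ[P] fun ω => (P[ind | 𝓛]) ω - (P[fun ω' => ind ω' * R ω' | 𝓛]) ω := by
      rw [hsplit]
      have := condExp_sub (m := 𝓛) (μ := P) hind_int hindR_int
      exact this
    filter_upwards [h1, hπ, hΓ] with ω e1 e2 e3
    rw [e1, e2, e3]; ring
  -- tower identities
  have hT1 : P[fun ω => ρ ω * Y ω | 𝓛] =ᵐ[P] P[fun ω => ρ ω * h ω | 𝓛] :=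
    (tower (fun ω => ρ ω * Y ω)).symm.trans (condExp_congr_ae (pull Y hY hρY_int))
  have hindS_eq : (fun ω => ind ω * S ω) = fun ω => ρ ω * S ω := by
    funext ω; simp only [hρ_def]; linear_combination (ind ω) * hSR ω
  have hT2 : P[fun ω => ind ω * S ω | 𝓛] =ᵐ[P] P[fun ω => ρ ω * g ω | 𝓛] := by
    rw [hindS_eq]
    exact (tower (fun ω => ρ ω * S ω)).symm.trans
      (condExp_congr_ae (pull S hS_int (by rw [← hindS_eq]; exact hindS_int)))
  have hindSY_eq : (fun ω => ind ω * S ω * Y ω) = fun ω => ρ ω * (S ω * Y ω) := by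
    funext ω; simp only [hρ_def]; linear_combination (ind ω * Y ω) * hSR ω
  have hT3 : P[fun ω => ind ω * S ω * Y ω | 𝓛] =ᵐ[P] P[fun ω => ρ ω * k ω | 𝓛] := by
    rw [hindSY_eq]
    exact (tower (fun ω => ρ ω * (S ω * Y ω))).symm.trans
      (condExp_congr_ae (pull (fun ω => S ω * Y ω) hSY_int
        (by rw [← hindSY_eq]; exact hindSY_int)))
  -- NI
  have hρ_ne : ∀ ω, ρ ω ≠ 0 → (A ω = a ∧ R ω = 0) := by
    intro ω hωρ
    have h1 : ind ω ≠ 0 ∧ (1 - R ω) ≠ 0 := by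
      constructor <;> intro hz <;> apply hωρ <;> simp [hρ_def, hz]
    constructor
    · by_contra hAa
      apply h1.1; rw [hind]; simp [hAa]
    · rcases hR01 ω with h2 | h2
      · exact h2
      · exfalso; apply h1.2; rw [h2]; ring
  have hk_gh : (fun ω => ρ ω * k ω) =ᵐ[P] fun ω => ρ ω * (g ω * h ω) := by
    filter_upwards [hNIid] with ω hω
    by_cases hz : ρ ω = 0
    · simp [hz]
    · rw [hω (hρ_ne ω hz).2]
  have hT3' : P[fun ω => ind ω * S ω * Y ω | 𝓛] =ᵐ[P]
      P[fun ω => ρ ω * (g ω * h ω) | 𝓛] :=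
    hT3.trans (condExp_congr_ae hk_gh)
  -- Doob–Dynkin factorizations
  have hgSM : StronglyMeasurable[MeasurableSpace.comap T inferInstance] g := by
    rw [← h𝓖R]; exact stronglyMeasurable_condExp
  have hhSM : StronglyMeasurable[MeasurableSpace.comap T inferInstance] h := by
    rw [← h𝓖R]; exact stronglyMeasurable_condExp
  obtain ⟨G, hG, hGeq⟩ := doob_dynkin_real hgSM
  obtain ⟨Hf, hHf, hHfeq⟩ := doob_dynkin_real hhSM
  set gt : Ω → ℝ := fun ω => max 0 (min (G (L ω, a, 0)) 1) with hgt_def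
  set ht : Ω → ℝ := fun ω => Hf (L ω, a, 0) with hht_def
  have hgt_meas : Measurable[𝓛] gt := by
    rw [h𝓛]
    have h1 : Measurable fun l : Fin d → ℝ => max 0 (min (G (l, a, 0)) 1) :=
      measurable_const.max ((hG.comp (measurable_id.prodMk measurable_const)).min
        measurable_const)
    exact h1.comp (comap_measurable L)
  have hht_meas : Measurable[𝓛] ht := by
    rw [h𝓛]
    exact (hHf.comp (measurable_id.prodMk measurable_const)).comp
      (comap_measurable L)
  have hgt01 : ∀ ω, 0 ≤ gt ω ∧ gt ω ≤ 1 := fun ω =>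
    ⟨le_max_left _ _, max_le (by norm_num) (min_le_right _ _)⟩
  -- pointwise identities
  have hρh : ∀ ω, ρ ω * h ω = ht ω * ρ ω := by
    intro ω
    by_cases hz : ρ ω = 0
    · rw [hz]; ring
    · obtain ⟨hAa, hR0⟩ := hρ_ne ω hz
      have : h ω = ht ω := by
        rw [hHfeq ω, hht_def]
        simp only [hT_def, hAa, hR0]
      rw [this]; ring
  have hgt_eqg0 : ∀ᵐ ω ∂P, ρ ω ≠ 0 → gt ω = g ω := by
    filter_upwards [hg0, hg1] with ω e0 e1 hz
    have e0' : (0:ℝ) ≤ g ω := e0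
    have e1' : g ω ≤ 1 := e1
    obtain ⟨hAa, hR0⟩ := hρ_ne ω hz
    have hgG : g ω = G (L ω, a, 0) := by rw [hGeq ω]; simp only [hT_def, hAa, hR0]
    rw [hgt_def]; dsimp only; rw [← hgG, min_eq_left e1', max_eq_right e0']
  have hρg : (fun ω => ρ ω * g ω) =ᵐ[P] fun ω => gt ω * ρ ω := by
    filter_upwards [hgt_eqg0] with ω e
    by_cases hz : ρ ω = 0
    · rw [hz]; ring
    · rw [e hz]; ring
  have hρgh : (fun ω => ρ ω * (g ω * h ω)) =ᵐ[P] fun ω => gt ω * ht ω * ρ ω := by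
    filter_upwards [hρg] with ω e1
    have e2 := hρh ω
    by_cases hz : ρ ω = 0
    · rw [hz]; ring
    · rcases hρ01 ω with h1 | h1
      · exact absurd h1 hz
      · have e1' : g ω = gt ω := by rw [h1] at e1; linarith
        have e2' : h ω = ht ω := by rw [h1] at e2; linarith
        rw [e1', e2']; ring
  -- integrability of products with h
  have hh_aesm : AEStronglyMeasurable h P :=
    (stronglyMeasurable_condExp.mono h𝓖Rle).aestronglyMeasurable
  have hρh_int : Integrable (fun ω => ρ ω * h ω) P := by
    refine (integrable_condExp (m := 𝓖R) (f := Y)).abs.mono'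
      (hρ_aesm.mul hh_aesm) (Eventually.of_forall fun ω => ?_)
    simp only [Real.norm_eq_abs, abs_mul]
    calc |ρ ω| * |h ω| ≤ 1 * |h ω| :=
          mul_le_mul_of_nonneg_right (habs1 _ (hρ01 ω)) (abs_nonneg _)
      _ = |h ω| := one_mul _
  have hhtρ_int : Integrable (fun ω => ht ω * ρ ω) P :=
    hρh_int.congr (Eventually.of_forall hρh)
  have hρgh_int : Integrable (fun ω => ρ ω * (g ω * h ω)) P := by
    have hg_aesm : AEStronglyMeasurable g P :=
      (stronglyMeasurable_condExp.mono h𝓖Rle).aestronglyMeasurable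
    refine (integrable_condExp (m := 𝓖R) (f := Y)).abs.mono'
      (hρ_aesm.mul (hg_aesm.mul hh_aesm)) ?_
    filter_upwards [hg0, hg1] with ω e0 e1
    have e0' : (0:ℝ) ≤ g ω := e0
    have e1' : g ω ≤ 1 := e1
    simp only [Real.norm_eq_abs, abs_mul]
    have h1 : |ρ ω| ≤ 1 := habs1 _ (hρ01 ω)
    have h2 : |g ω| ≤ 1 := by rw [abs_le]; constructor <;> linarith
    calc |ρ ω| * (|g ω| * |h ω|) ≤ 1 * (1 * |h ω|) := by
          refine mul_le_mul h1 (mul_le_mul h2 le_rfl (abs_nonneg _) zero_le_one)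
            (by positivity) zero_le_one
      _ = |h ω| := by ring
  have hgtht_int : Integrable (fun ω => gt ω * ht ω * ρ ω) P :=
    hρgh_int.congr hρgh
  -- C1 : P[ρY|𝓛] = ht·(1-Γ)π
  have hC1 : P[fun ω => ρ ω * Y ω | 𝓛] =ᵐ[P] fun ω => ht ω * ((1 - Γ ω) * π ω) := by
    have e1 : P[fun ω => ρ ω * h ω | 𝓛] =ᵐ[P] fun ω => ht ω * (P[ρ | 𝓛]) ω := by
      rw [show (fun ω => ρ ω * h ω) = fun ω => ht ω * ρ ω from funext hρh]
      exact pullL ht ρ hht_meas.stronglyMeasurable hhtρ_int hρ_int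
    filter_upwards [hT1, e1, hρcond] with ω a1 a2 a3
    rw [a1, a2, a3]
  -- E1 : H·c = gt·c
  have hgtρ_int : Integrable (fun ω => gt ω * ρ ω) P := by
    refine hbd_int _ ((hgt_meas.mono h𝓛le le_rfl).aestronglyMeasurable.mul hρ_aesm) fun ω => ?_
    rw [abs_mul]
    calc |gt ω| * |ρ ω| ≤ 1 * 1 :=
          mul_le_mul (abs_le.mpr ⟨by linarith [(hgt01 ω).1], (hgt01 ω).2⟩)
            (habs1 _ (hρ01 ω)) (abs_nonneg _) zero_le_one
      _ = 1 := one_mul _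
  have hE1 : (fun ω => H ω * ((1 - Γ ω) * π ω)) =ᵐ[P]
      fun ω => gt ω * ((1 - Γ ω) * π ω) := by
    have side1 : P[fun ω => ind ω * S ω | 𝓛] =ᵐ[P]
        fun ω => H ω * ((1 - Γ ω) * π ω) := by
      filter_upwards [hH, hρcond] with ω a1 a2
      rw [a1, a2]
    have side2 : P[fun ω => ind ω * S ω | 𝓛] =ᵐ[P]
        fun ω => gt ω * ((1 - Γ ω) * π ω) := by
      have e2 : P[fun ω => gt ω * ρ ω | 𝓛] =ᵐ[P] fun ω => gt ω * (P[ρ | 𝓛]) ω :=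
        pullL gt ρ hgt_meas.stronglyMeasurable hgtρ_int hρ_int
      filter_upwards [hT2, condExp_congr_ae (m := 𝓛) hρg, e2, hρcond] with ω a1 a2 a3 a4
      rw [a1, a2, a3, a4]
    exact side1.symm.trans side2
  -- E2 : M_S·(H·c) = gt·ht·c
  have hE2 : (fun ω => M_S ω * (H ω * ((1 - Γ ω) * π ω))) =ᵐ[P]
      fun ω => gt ω * ht ω * ((1 - Γ ω) * π ω) := by
    have e2 : P[fun ω => gt ω * ht ω * ρ ω | 𝓛] =ᵐ[P]
        fun ω => (gt ω * ht ω) * (P[ρ | 𝓛]) ω :=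
      pullL (fun ω => gt ω * ht ω) ρ
        (hgt_meas.mul hht_meas).stronglyMeasurable hgtht_int hρ_int
    filter_upwards [hMS, hT3', condExp_congr_ae (m := 𝓛) hρgh, e2, hρcond]
      with ω a1 a2 a3 a4 a5
    rw [← a1, a2, a3, a4, a5]
  -- POS transfer: a.e. on {(1-Γ)π ≠ 0}, ε ≤ gt
  set q : Ω → ℝ := fun ω => if gt ω < ε then (1:ℝ) else 0 with hq_def
  have hq_measL : Measurable[𝓛] q :=
    Measurable.ite (hgt_meas measurableSet_Iio) measurable_const measurable_const
  have hq_bd : ∀ ω, |q ω| ≤ 1 := by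
    intro ω; rw [hq_def]; dsimp only; split <;> norm_num
  have hqρ_int : Integrable (fun ω => q ω * ρ ω) P := by
    refine hbd_int _ ((hq_measL.mono h𝓛le le_rfl).aestronglyMeasurable.mul hρ_aesm) fun ω => ?_
    rw [abs_mul]
    calc |q ω| * |ρ ω| ≤ 1 * 1 :=
          mul_le_mul (hq_bd ω) (habs1 _ (hρ01 ω)) (abs_nonneg _) zero_le_one
      _ = 1 := one_mul _
  have hqρ0 : (fun ω => q ω * ρ ω) =ᵐ[P] fun _ => (0:ℝ) := by
    filter_upwards [hPOS, hgt_eqg0] with ω e1 e2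
    by_cases hz : ρ ω = 0
    · rw [hz, mul_zero]
    · have hR0 := (hρ_ne ω hz).2
      have hεg : ε ≤ gt ω := by rw [e2 hz]; exact e1 hR0
      have : ¬ gt ω < ε := not_lt.mpr hεg
      rw [hq_def]; dsimp only; rw [if_neg this, zero_mul]
  have hqc : (fun ω => q ω * ((1 - Γ ω) * π ω)) =ᵐ[P] fun _ => (0:ℝ) := by
    have e1 : P[fun ω => q ω * ρ ω | 𝓛] =ᵐ[P] fun ω => q ω * (P[ρ | 𝓛]) ω :=
      pullL q ρ hq_measL.stronglyMeasurable hqρ_int hρ_int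
    have e2 : P[fun ω => q ω * ρ ω | 𝓛] =ᵐ[P] fun _ => (0:ℝ) := by
      refine (condExp_congr_ae (m := 𝓛) hqρ0).trans ?_
      have : P[(fun _ : Ω => (0:ℝ)) | 𝓛] = fun _ => (0:ℝ) := condExp_const h𝓛le 0
      rw [this]
    filter_upwards [e1.symm.trans e2, hρcond] with ω a1 a2
    rw [← a2]; exact a1
  -- M_S·c = ht·c a.e.
  have hMSc : (fun ω => M_S ω * ((1 - Γ ω) * π ω)) =ᵐ[P]
      fun ω => ht ω * ((1 - Γ ω) * π ω) := by
    filter_upwards [hE1, hE2, hqc] with ω e1 e2 e3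
    by_cases hc : (1 - Γ ω) * π ω = 0
    · rw [hc, mul_zero, mul_zero]
    · have hεgt : ε ≤ gt ω := by
        by_contra hlt
        push_neg at hlt
        have hq1 : q ω = 1 := by rw [hq_def]; dsimp only; rw [if_pos hlt]
        rw [hq1, one_mul] at e3; exact hc e3
      have hgt_ne : gt ω ≠ 0 := (lt_of_lt_of_le hε hεgt).ne'
      have hH_eq : H ω = gt ω := mul_right_cancel₀ hc e1
      rw [hH_eq] at e2
      have h2 : M_S ω * (gt ω * ((1 - Γ ω) * π ω)) =
          ht ω * (gt ω * ((1 - Γ ω) * π ω)) := by linear_combination e2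
      have : M_S ω = ht ω := mul_right_cancel₀ (mul_ne_zero hgt_ne hc) h2
      rw [this]
  have hρY_MS : P[fun ω => ρ ω * Y ω | 𝓛] =ᵐ[P]
      fun ω => M_S ω * ((1 - Γ ω) * π ω) := hC1.trans hMSc.symm
  -- decomposition
  have hsum_eq : (fun ω => ind ω * Y ω) =
      fun ω => ind ω * R ω * Y ω + ρ ω * Y ω := by
    funext ω; simp only [hρ_def]; ring
  have hsum : P[fun ω => ind ω * Y ω | 𝓛] =ᵐ[P]
      fun ω => (P[fun ω' => ind ω' * R ω' * Y ω' | 𝓛]) ω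
        + (P[fun ω' => ρ ω' * Y ω' | 𝓛]) ω := by
    rw [hsum_eq]
    exact condExp_add hindRY_int hρY_int 𝓛
  have hkey : (fun ω => M ω * π ω) =ᵐ[P]
      fun ω => M_R ω * (Γ ω * π ω) + M_S ω * ((1 - Γ ω) * π ω) := by
    filter_upwards [hM, hsum, hMR, hρY_MS] with ω e1 e2 e3 e4
    rw [← e1, e2, e3, e4]
  have hpt : ∀ᵐ ω ∂P, 0 < π ω → Γ ω * M_R ω + (1 - Γ ω) * M_S ω = M ω := by
    filter_upwards [hkey] with ω e hπpos
    have h2 : (Γ ω * M_R ω + (1 - Γ ω) * M_S ω) * π ω = M ω * π ω := by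
      linear_combination -e
    exact mul_right_cancel₀ (ne_of_gt hπpos) h2
  refine ⟨hpt, fun hpos => integral_congr_ae ?_⟩
  filter_upwards [hpt, hpos] with ω h1 h2
  exact h1 h2
end

section
/- Inverse-probability-weighting identity for τ_a: if π ≥ ε and H ≥ ε almost surely for some ε > 0, then E[(1{A=a}/π)·(R + S/H)·Y] = E[μ] = τ_a(P). -/
open MeasureTheory

/-- Inverse-probability-weighting identity for `τ_a`: if `π ≥ ε` and `H ≥ ε` a.s.
for some `ε > 0`, then `E[(1{A=a}/π)·(R + S/H)·Y] = E[μ] = τ_a(P)`,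
where `μ = Γ·M_R + (1−Γ)·M_S`. -/
theorem ipw_identity_tau
    {Ω : Type*} [MeasurableSpace Ω] (P : Measure Ω) [IsProbabilityMeasure P]
    {d : ℕ} (L : Ω → (Fin d → ℝ)) (A R S Y : Ω → ℝ)
    (hL : Measurable L) (hA : Measurable A) (hR : Measurable R)
    (hS : Measurable S) (hY : Integrable Y P)
    (hA01 : ∀ ω, A ω = 0 ∨ A ω = 1)
    (hR01 : ∀ ω, R ω = 0 ∨ R ω = 1)
    (hS01 : ∀ ω, S ω = 0 ∨ S ω = 1)
    (hSR : ∀ ω, S ω * R ω = 0)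
    (a : ℝ) (ha : a = 0 ∨ a = 1)
    (𝓛 : MeasurableSpace Ω) (h𝓛 : 𝓛 = MeasurableSpace.comap L inferInstance)
    (ind : Ω → ℝ) (hind : ind = fun ω => if A ω = a then (1:ℝ) else 0)
    -- arm-a nuisance random variables
    (π Γ H M_R M_S : Ω → ℝ)
    (hπ_meas : Measurable[𝓛] π) (hπ_int : Integrable π P)
    (hΓ_meas : Measurable[𝓛] Γ) (hΓ_int : Integrable Γ P)
    (hH_meas : Measurable[𝓛] H) (hH_int : Integrable H P)
    (hMR_meas : Measurable[𝓛] M_R) (hMR_int : Integrable M_R P)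
    (hMS_meas : Measurable[𝓛] M_S) (hMS_int : Integrable M_S P)
    (hπ01 : ∀ ω, 0 ≤ π ω ∧ π ω ≤ 1)
    (hΓ01 : ∀ ω, 0 ≤ Γ ω ∧ Γ ω ≤ 1)
    (hH01 : ∀ ω, 0 ≤ H ω ∧ H ω ≤ 1)
    -- characterizations
    (hπ : P[ind | 𝓛] =ᵐ[P] π)
    (hΓ : P[fun ω => ind ω * R ω | 𝓛] =ᵐ[P] fun ω => Γ ω * π ω)
    (hH : P[fun ω => ind ω * S ω | 𝓛]
      =ᵐ[P] fun ω => H ω * (P[fun ω' => ind ω' * (1 - R ω') | 𝓛]) ω)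
    (hMR : P[fun ω => ind ω * R ω * Y ω | 𝓛] =ᵐ[P] fun ω => M_R ω * (Γ ω * π ω))
    (hMS : P[fun ω => ind ω * S ω * Y ω | 𝓛]
      =ᵐ[P] fun ω => M_S ω * (H ω * ((1 - Γ ω) * π ω)))
    -- positivity
    (ε : ℝ) (hε : 0 < ε)
    (hπpos : ∀ᵐ ω ∂P, ε ≤ π ω)
    (hHpos : ∀ᵐ ω ∂P, ε ≤ H ω) :
    ∫ ω, (ind ω / π ω) * (R ω + S ω / H ω) * Y ω ∂P
      = ∫ ω, (Γ ω * M_R ω + (1 - Γ ω) * M_S ω) ∂P := by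
  have hm := h𝓛.symm ▸ hL.comap_le
  have hπm := hπ_meas.mono hm le_rfl
  have hHm := hH_meas.mono hm le_rfl
  have hΓm := hΓ_meas.mono hm le_rfl
  have hindm := hind ▸ (Measurable.ite (mβ := inferInstance) (hA (measurableSet_singleton a))
    measurable_const measurable_const)
  have hind1 : ∀ ω, ‖ind ω‖ ≤ 1 := by
    intro ω; rw [hind]; dsimp only; split <;> simp
  have hR1 : ∀ ω, ‖R ω‖ ≤ 1 := by
    intro ω; rcases hR01 ω with h | h <;> simp [h]
  have hS1 : ∀ ω, ‖S ω‖ ≤ 1 := by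
    intro ω; rcases hS01 ω with h | h <;> simp [h]
  -- the two pieces
  set f1 : Ω → ℝ := fun ω => (π ω)⁻¹ with hf1
  set f2 : Ω → ℝ := fun ω => (π ω * H ω)⁻¹ with hf2
  set g1 : Ω → ℝ := fun ω => ind ω * R ω * Y ω with hg1
  set g2 : Ω → ℝ := fun ω => ind ω * S ω * Y ω with hg2
  have hg1_int : Integrable g1 P := by
    have := hY.bdd_mul ((hindm.mul hR).aestronglyMeasurable)
      (c := 1) (Filter.Eventually.of_forall fun ω => by
        calc ‖ind ω * R ω‖ = ‖ind ω‖ * ‖R ω‖ := norm_mul _ _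
        _ ≤ 1 * 1 := mul_le_mul (hind1 ω) (hR1 ω) (norm_nonneg _) zero_le_one
        _ = 1 := one_mul 1)
    simpa [hg1, mul_assoc] using this
  have hg2_int : Integrable g2 P := by
    have := hY.bdd_mul ((hindm.mul hS).aestronglyMeasurable)
      (c := 1) (Filter.Eventually.of_forall fun ω => by
        calc ‖ind ω * S ω‖ = ‖ind ω‖ * ‖S ω‖ := norm_mul _ _
        _ ≤ 1 * 1 := mul_le_mul (hind1 ω) (hS1 ω) (norm_nonneg _) zero_le_one
        _ = 1 := one_mul 1)
    simpa [hg2, mul_assoc] using this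
  have hf1_bdd : ∀ᵐ ω ∂P, ‖f1 ω‖ ≤ ε⁻¹ := by
    filter_upwards [hπpos] with ω hω
    have hπ0 : 0 < π ω := lt_of_lt_of_le hε hω
    rw [Real.norm_eq_abs, abs_of_nonneg (inv_nonneg.2 hπ0.le)]
    exact inv_anti₀ hε hω
  have hf2_bdd : ∀ᵐ ω ∂P, ‖f2 ω‖ ≤ (ε * ε)⁻¹ := by
    filter_upwards [hπpos, hHpos] with ω h1 h2
    have h0 : 0 < π ω * H ω := mul_pos (lt_of_lt_of_le hε h1) (lt_of_lt_of_le hε h2)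
    rw [Real.norm_eq_abs, abs_of_nonneg (inv_nonneg.2 h0.le)]
    exact inv_anti₀ (mul_pos hε hε)
      (mul_le_mul h1 h2 hε.le (le_trans hε.le h1))
  have hfg1_int : Integrable (f1 * g1) P :=
    hg1_int.bdd_mul (hπm.inv.aestronglyMeasurable) hf1_bdd
  have hfg2_int : Integrable (f2 * g2) P :=
    hg2_int.bdd_mul ((hπm.mul hHm).inv.aestronglyMeasurable) hf2_bdd
  have hf1_sm : StronglyMeasurable[𝓛] f1 := hπ_meas.inv.stronglyMeasurable
  have hf2_sm : StronglyMeasurable[𝓛] f2 := (hπ_meas.mul hH_meas).inv.stronglyMeasurable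
  -- first piece
  have key1 : ∫ ω, (f1 * g1) ω ∂P = ∫ ω, Γ ω * M_R ω ∂P := by
    have h1 : P[f1 * g1|𝓛] =ᵐ[P] f1 * P[g1|𝓛] :=
      condExp_mul_of_stronglyMeasurable_left hf1_sm hfg1_int hg1_int
    have h2 : (f1 * P[g1|𝓛]) =ᵐ[P] fun ω => Γ ω * M_R ω := by
      filter_upwards [hMR, hπpos] with ω he hp
      have hπ0 : π ω ≠ 0 := (lt_of_lt_of_le hε hp).ne'
      simp only [Pi.mul_apply]
      rw [show P[g1|𝓛] = P[fun ω => ind ω * R ω * Y ω|𝓛] from rfl, he]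
      simp only [hf1]
      field_simp
    calc ∫ ω, (f1 * g1) ω ∂P = ∫ ω, (P[f1 * g1|𝓛]) ω ∂P :=
          (integral_condExp hm).symm
      _ = ∫ ω, Γ ω * M_R ω ∂P := integral_congr_ae (h1.trans h2)
  -- second piece
  have key2 : ∫ ω, (f2 * g2) ω ∂P = ∫ ω, (1 - Γ ω) * M_S ω ∂P := by
    have h1 : P[f2 * g2|𝓛] =ᵐ[P] f2 * P[g2|𝓛] :=
      condExp_mul_of_stronglyMeasurable_left hf2_sm hfg2_int hg2_int
    have h2 : (f2 * P[g2|𝓛]) =ᵐ[P] fun ω => (1 - Γ ω) * M_S ω := by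
      filter_upwards [hMS, hπpos, hHpos] with ω he hp hh
      have hπ0 : π ω ≠ 0 := (lt_of_lt_of_le hε hp).ne'
      have hH0 : H ω ≠ 0 := (lt_of_lt_of_le hε hh).ne'
      simp only [Pi.mul_apply]
      rw [show P[g2|𝓛] = P[fun ω => ind ω * S ω * Y ω|𝓛] from rfl, he]
      simp only [hf2]
      field_simp
    calc ∫ ω, (f2 * g2) ω ∂P = ∫ ω, (P[f2 * g2|𝓛]) ω ∂P :=
          (integral_condExp hm).symm
      _ = ∫ ω, (1 - Γ ω) * M_S ω ∂P := integral_congr_ae (h1.trans h2)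
  -- integrability of the RHS pieces
  have hΓMR_int : Integrable (fun ω => Γ ω * M_R ω) P :=
    hMR_int.bdd_mul hΓm.aestronglyMeasurable
      (c := 1) (Filter.Eventually.of_forall fun ω => by
        rw [Real.norm_eq_abs, abs_of_nonneg (hΓ01 ω).1]; exact (hΓ01 ω).2)
  have hΓMS_int : Integrable (fun ω => (1 - Γ ω) * M_S ω) P :=
    hMS_int.bdd_mul ((measurable_const.sub hΓm).aestronglyMeasurable)
      (c := 1) (Filter.Eventually.of_forall fun ω => by
        rw [Real.norm_eq_abs, abs_of_nonneg (by linarith [(hΓ01 ω).2])]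
        linarith [(hΓ01 ω).1])
  -- put it together
  have hLHS : ∫ ω, (ind ω / π ω) * (R ω + S ω / H ω) * Y ω ∂P
      = ∫ ω, ((f1 * g1) ω + (f2 * g2) ω) ∂P := by
    refine integral_congr_ae (Filter.Eventually.of_forall fun ω => ?_)
    simp only [Pi.mul_apply, hf1, hf2, hg1, hg2, div_eq_mul_inv, mul_inv]
    ring
  rw [hLHS, integral_add hfg1_int hfg2_int, key1, key2,
    ← integral_add hΓMR_int hΓMS_int]
end

section
/- Mean-zero property of the nonparametric influence function (Theorem 1, first part): if π ≥ ε and H ≥ ε almost surely for some ε > 0, and M_S and μ are integrable, then E[ μ + (1{A=a}/π)·{ (R + S/H)·Y − μ + (1−R)·(1 − S/H)·M_S } ] = E[μ]; equivalently E[(1{A=a}/π)·{(R + S/H)·Y − μ + (1−R)·(1 − S/H)·M_S}] = 0, so the paper's influence function τ̇_a(O;P) = μ_a(L) − τ_a(P) + (1(A=a)/π_a(L))·{(R + S/η_{a,0}(L))·Y − μ_a(L) + (1−R)(1 − S/η_{a,0}(L))·μ_{a,S}(L)} has P-mean zero. -/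
open MeasureTheory

/-- Mean-zero property of the nonparametric influence function (Theorem 1, first part):
if `π ≥ ε` and `H ≥ ε` a.s., then
`E[μ + (1{A=a}/π)·{(R + S/H)·Y − μ + (1−R)(1 − S/H)·M_S}] = E[μ]`; equivalently the
centered influence-function term has `P`-mean zero. -/
theorem nonparametric_IF_mean_zero
    {Ω : Type*} [MeasurableSpace Ω] (P : Measure Ω) [IsProbabilityMeasure P]
    {d : ℕ} (L : Ω → (Fin d → ℝ)) (A R S Y : Ω → ℝ)
    (hL : Measurable L) (hA : Measurable A) (hR : Measurable R)
    (hS : Measurable S) (hY : Integrable Y P)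
    (hA01 : ∀ ω, A ω = 0 ∨ A ω = 1)
    (hR01 : ∀ ω, R ω = 0 ∨ R ω = 1)
    (hS01 : ∀ ω, S ω = 0 ∨ S ω = 1)
    (hSR : ∀ ω, S ω * R ω = 0)
    (a : ℝ) (ha : a = 0 ∨ a = 1)
    (𝓛 : MeasurableSpace Ω) (h𝓛 : 𝓛 = MeasurableSpace.comap L inferInstance)
    (ind : Ω → ℝ) (hind : ind = fun ω => if A ω = a then (1:ℝ) else 0)
    -- arm-a nuisance random variables
    (π Γ H M_R M_S : Ω → ℝ)
    (hπ_meas : Measurable[𝓛] π) (hπ_int : Integrable π P)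
    (hΓ_meas : Measurable[𝓛] Γ) (hΓ_int : Integrable Γ P)
    (hH_meas : Measurable[𝓛] H) (hH_int : Integrable H P)
    (hMR_meas : Measurable[𝓛] M_R) (hMR_int : Integrable M_R P)
    (hMS_meas : Measurable[𝓛] M_S) (hMS_int : Integrable M_S P)
    (hπ01 : ∀ ω, 0 ≤ π ω ∧ π ω ≤ 1)
    (hΓ01 : ∀ ω, 0 ≤ Γ ω ∧ Γ ω ≤ 1)
    (hH01 : ∀ ω, 0 ≤ H ω ∧ H ω ≤ 1)
    -- characterizations
    (hπ : P[ind | 𝓛] =ᵐ[P] π)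
    (hΓ : P[fun ω => ind ω * R ω | 𝓛] =ᵐ[P] fun ω => Γ ω * π ω)
    (hH : P[fun ω => ind ω * S ω | 𝓛]
      =ᵐ[P] fun ω => H ω * (P[fun ω' => ind ω' * (1 - R ω') | 𝓛]) ω)
    (hMR : P[fun ω => ind ω * R ω * Y ω | 𝓛] =ᵐ[P] fun ω => M_R ω * (Γ ω * π ω))
    (hMS : P[fun ω => ind ω * S ω * Y ω | 𝓛]
      =ᵐ[P] fun ω => M_S ω * (H ω * ((1 - Γ ω) * π ω)))
    -- definition of μ
    (μ : Ω → ℝ) (hμdef : μ = fun ω => Γ ω * M_R ω + (1 - Γ ω) * M_S ω)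
    -- positivity and integrability
    (ε : ℝ) (hε : 0 < ε)
    (hπpos : ∀ᵐ ω ∂P, ε ≤ π ω)
    (hHpos : ∀ᵐ ω ∂P, ε ≤ H ω)
    (hμ_int : Integrable μ P) :
    (∫ ω, (μ ω + (ind ω / π ω) *
        ((R ω + S ω / H ω) * Y ω - μ ω
          + (1 - R ω) * (1 - S ω / H ω) * M_S ω)) ∂P
      = ∫ ω, μ ω ∂P)
    ∧ ∫ ω, (ind ω / π ω) *
        ((R ω + S ω / H ω) * Y ω - μ ω
          + (1 - R ω) * (1 - S ω / H ω) * M_S ω) ∂P = 0 := by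

  -- setup
  rename_i m0 _
  have hm : 𝓛 ≤ m0 := by
    rw [h𝓛]; exact hL.comap_le
  have hind_meas : Measurable[m0] ind := by
    rw [hind]
    exact Measurable.ite (hA (measurableSet_singleton a)) measurable_const measurable_const
  have hind01 : ∀ ω, ind ω = 0 ∨ ind ω = 1 := by
    intro ω
    by_cases h : A ω = a
    · right; rw [hind]; simp [h]
    · left; rw [hind]; simp [h]
  have hπm : Measurable[m0] π := hπ_meas.mono hm le_rfl
  have hHm : Measurable[m0] H := hH_meas.mono hm le_rfl
  have hΓm : Measurable[m0] Γ := hΓ_meas.mono hm le_rfl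
  have hMRm : Measurable[m0] M_R := hMR_meas.mono hm le_rfl
  have hMSm : Measurable[m0] M_S := hMS_meas.mono hm le_rfl
  have hμ𝓛 : Measurable[𝓛] μ := by
    rw [hμdef]
    exact (hΓ_meas.mul hMR_meas).add ((measurable_const.sub hΓ_meas).mul hMS_meas)
  have hμm : Measurable[m0] μ := hμ𝓛.mono hm le_rfl
  -- generic integrability of bounded measurable functions
  have hbdd_int : ∀ f : Ω → ℝ, Measurable[m0] f → (∀ ω, |f ω| ≤ 1) → Integrable f P := by
    intro f hf hb
    exact (integrable_const (1:ℝ)).mono' hf.aestronglyMeasurable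
      (Filter.Eventually.of_forall (by simpa [Real.norm_eq_abs] using hb))
  have habs01 : ∀ x : ℝ, x = 0 ∨ x = 1 → |x| ≤ 1 := by
    rintro x (h | h) <;> simp [h]
  have hind_int : Integrable ind P := hbdd_int ind hind_meas fun ω => habs01 _ (hind01 ω)
  have hindR_int : Integrable (fun ω => ind ω * R ω) P := by
    refine hbdd_int _ (hind_meas.mul hR) fun ω => ?_
    rw [abs_mul]
    calc |ind ω| * |R ω| ≤ 1 * 1 :=
          mul_le_mul (habs01 _ (hind01 ω)) (habs01 _ (hR01 ω)) (abs_nonneg _) zero_le_one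
      _ = 1 := one_mul 1
  have hindS_int : Integrable (fun ω => ind ω * S ω) P := by
    refine hbdd_int _ (hind_meas.mul hS) fun ω => ?_
    rw [abs_mul]
    calc |ind ω| * |S ω| ≤ 1 * 1 :=
          mul_le_mul (habs01 _ (hind01 ω)) (habs01 _ (hS01 ω)) (abs_nonneg _) zero_le_one
      _ = 1 := one_mul 1
  have hind1R_int : Integrable (fun ω => ind ω * (1 - R ω)) P := by
    refine hbdd_int _ (hind_meas.mul (measurable_const.sub hR)) fun ω => ?_
    rw [abs_mul]
    have h1R : |1 - R ω| ≤ 1 := by rcases hR01 ω with h | h <;> simp [h]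
    calc |ind ω| * |1 - R ω| ≤ 1 * 1 :=
          mul_le_mul (habs01 _ (hind01 ω)) h1R (abs_nonneg _) zero_le_one
      _ = 1 := one_mul 1
  have hX1_int : Integrable (fun ω => ind ω * R ω * Y ω) P := by
    refine hY.bdd_mul (c := 1) ((hind_meas.mul hR).aestronglyMeasurable) ?_
    refine Filter.Eventually.of_forall fun ω => ?_
    rw [Real.norm_eq_abs, abs_mul]
    calc |ind ω| * |R ω| ≤ 1 * 1 :=
          mul_le_mul (habs01 _ (hind01 ω)) (habs01 _ (hR01 ω)) (abs_nonneg _) zero_le_one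
      _ = 1 := one_mul 1
  have hX2_int : Integrable (fun ω => ind ω * S ω * Y ω) P := by
    refine hY.bdd_mul (c := 1) ((hind_meas.mul hS).aestronglyMeasurable) ?_
    refine Filter.Eventually.of_forall fun ω => ?_
    rw [Real.norm_eq_abs, abs_mul]
    calc |ind ω| * |S ω| ≤ 1 * 1 :=
          mul_le_mul (habs01 _ (hind01 ω)) (habs01 _ (hS01 ω)) (abs_nonneg _) zero_le_one
      _ = 1 := one_mul 1
  -- a.e. bounds on inverses
  have hπ_ne : ∀ᵐ ω ∂P, π ω ≠ 0 := by
    filter_upwards [hπpos] with ω h1; exact ne_of_gt (lt_of_lt_of_le hε h1)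
  have hinv_bd : ∀ᵐ ω ∂P, |(π ω)⁻¹| ≤ ε⁻¹ ∧ |(π ω * H ω)⁻¹| ≤ (ε * ε)⁻¹ := by
    filter_upwards [hπpos, hHpos] with ω h1 h2
    have hπ0 : 0 < π ω := lt_of_lt_of_le hε h1
    have hH0 : 0 < H ω := lt_of_lt_of_le hε h2
    constructor
    · rw [abs_of_nonneg (inv_nonneg.2 hπ0.le)]
      exact inv_anti₀ hε h1
    · rw [abs_of_nonneg (inv_nonneg.2 (mul_nonneg hπ0.le hH0.le))]
      exact inv_anti₀ (mul_pos hε hε)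
        (mul_le_mul h1 h2 hε.le hπ0.le)
  -- integrability of product terms (bounded factor × integrable)
  have hprod_int : ∀ (b g : Ω → ℝ) (c : ℝ), Measurable[m0] b → (∀ᵐ ω ∂P, |b ω| ≤ c) →
      Integrable g P → Integrable (fun ω => b ω * g ω) P := by
    intro b g c hb hbc hg
    exact hg.bdd_mul hb.aestronglyMeasurable (by simpa [Real.norm_eq_abs] using hbc)
  have habs_mul_le : ∀ (x y : ℝ) (c : ℝ), |x| ≤ c → |y| ≤ 1 → |x * y| ≤ c := by
    intro x y c hx hy
    calc |x * y| = |x| * |y| := abs_mul x y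
      _ ≤ c * 1 := mul_le_mul hx hy (abs_nonneg _) ((abs_nonneg x).trans hx)
      _ = c := mul_one c
  have habs_ind : ∀ ω, |ind ω| ≤ 1 := fun ω => habs01 _ (hind01 ω)
  have habs_indR : ∀ ω, |ind ω * R ω| ≤ 1 := fun ω =>
    habs_mul_le _ _ _ (habs_ind ω) (habs01 _ (hR01 ω))
  have habs_indS : ∀ ω, |ind ω * S ω| ≤ 1 := fun ω =>
    habs_mul_le _ _ _ (habs_ind ω) (habs01 _ (hS01 ω))
  have habs_ind1R : ∀ ω, |ind ω * (1 - R ω)| ≤ 1 := fun ω =>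
    habs_mul_le _ _ _ (habs_ind ω) (by rcases hR01 ω with h | h <;> simp [h])
  have ht1 : Integrable (fun ω => (π ω)⁻¹ * (ind ω * R ω * Y ω)) P := by
    have := hprod_int (fun ω => (π ω)⁻¹ * (ind ω * R ω)) Y ε⁻¹
      (hπm.inv.mul (hind_meas.mul hR))
      (by filter_upwards [hinv_bd] with ω h; exact habs_mul_le _ _ _ h.1 (habs_indR ω)) hY
    exact this.congr (Filter.Eventually.of_forall fun ω => by ring)
  have ht2 : Integrable (fun ω => (π ω * H ω)⁻¹ * (ind ω * S ω * Y ω)) P := by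
    have := hprod_int (fun ω => (π ω * H ω)⁻¹ * (ind ω * S ω)) Y (ε * ε)⁻¹
      ((hπm.mul hHm).inv.mul (hind_meas.mul hS))
      (by filter_upwards [hinv_bd] with ω h; exact habs_mul_le _ _ _ h.2 (habs_indS ω)) hY
    exact this.congr (Filter.Eventually.of_forall fun ω => by ring)
  have ht3 : Integrable (fun ω => -(μ ω * (π ω)⁻¹) * ind ω) P := by
    have := hprod_int (fun ω => -(ind ω * (π ω)⁻¹)) μ ε⁻¹
      ((hind_meas.mul hπm.inv).neg)
      (by filter_upwards [hinv_bd] with ω h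
          rw [abs_neg, mul_comm]; exact habs_mul_le _ _ _ h.1 (habs_ind ω)) hμ_int
    exact this.congr (Filter.Eventually.of_forall fun ω => by ring)
  have ht4 : Integrable (fun ω => M_S ω * (π ω)⁻¹ * (ind ω * (1 - R ω))) P := by
    have := hprod_int (fun ω => ind ω * (1 - R ω) * (π ω)⁻¹) M_S ε⁻¹
      ((hind_meas.mul (measurable_const.sub hR)).mul hπm.inv)
      (by filter_upwards [hinv_bd] with ω h
          rw [mul_comm]; exact habs_mul_le _ _ _ h.1 (habs_ind1R ω)) hMS_int
    exact this.congr (Filter.Eventually.of_forall fun ω => by ring)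
  have ht5 : Integrable (fun ω => -(M_S ω * (π ω * H ω)⁻¹) * (ind ω * S ω)) P := by
    have := hprod_int (fun ω => -(ind ω * S ω * (π ω * H ω)⁻¹)) M_S (ε * ε)⁻¹
      (((hind_meas.mul hS).mul (hπm.mul hHm).inv).neg)
      (by filter_upwards [hinv_bd] with ω h
          rw [abs_neg, mul_comm]; exact habs_mul_le _ _ _ h.2 (habs_indS ω)) hMS_int
    exact this.congr (Filter.Eventually.of_forall fun ω => by ring)
  -- the influence function term
  set f : Ω → ℝ := fun ω => (ind ω / π ω) *
      ((R ω + S ω / H ω) * Y ω - μ ω + (1 - R ω) * (1 - S ω / H ω) * M_S ω) with hf_def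
  have hsum : ∀ ω, f ω =
      (π ω)⁻¹ * (ind ω * R ω * Y ω) + (π ω * H ω)⁻¹ * (ind ω * S ω * Y ω)
      + -(μ ω * (π ω)⁻¹) * ind ω + M_S ω * (π ω)⁻¹ * (ind ω * (1 - R ω))
      + -(M_S ω * (π ω * H ω)⁻¹) * (ind ω * S ω) := by
    intro ω
    rw [hf_def]
    simp only [div_eq_mul_inv, mul_inv]
    linear_combination (ind ω * (π ω)⁻¹ * M_S ω * (H ω)⁻¹) * hSR ω
  have hf_int : Integrable f P := by
    refine ((((ht1.add ht2).add ht3).add ht4).add ht5).congr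
      (Filter.Eventually.of_forall fun ω => (hsum ω).symm)
  -- pull-out computations: ∫ g·X = ∫ g·E[X|𝓛]
  have pull : ∀ (g X : Ω → ℝ), StronglyMeasurable[𝓛] g →
      Integrable (fun ω => g ω * X ω) P → Integrable X P →
      ∫ ω, g ω * X ω ∂P = ∫ ω, g ω * (P[X | 𝓛]) ω ∂P := by
    intro g X hg hgX hX
    have h1 : ∫ ω, g ω * X ω ∂P = ∫ ω, (P[fun ω => g ω * X ω | 𝓛]) ω ∂P :=
      (integral_condExp hm).symm
    have h2 : P[fun ω => g ω * X ω | 𝓛] =ᵐ[P] fun ω => g ω * (P[X | 𝓛]) ω := by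
      have := condExp_mul_of_stronglyMeasurable_left (μ := P) hg hgX hX
      filter_upwards [this] with ω hω
      exact hω
    rw [h1]
    exact integral_congr_ae h2
  -- conditional expectation of ind·(1-R)
  have hC4 : P[fun ω' => ind ω' * (1 - R ω') | 𝓛] =ᵐ[P] fun ω => (1 - Γ ω) * π ω := by
    have heq : (fun ω' => ind ω' * (1 - R ω')) = ind - fun ω' => ind ω' * R ω' := by
      funext ω; simp only [Pi.sub_apply]; ring
    rw [heq]
    refine (condExp_sub hind_int hindR_int _).trans ?_
    filter_upwards [hπ, hΓ] with ω h1 h2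
    simp only [Pi.sub_apply, h1, h2]
    ring
  -- compute the five integrals
  have hg1 : StronglyMeasurable[𝓛] (fun ω => (π ω)⁻¹) := hπ_meas.inv.stronglyMeasurable
  have hg2 : StronglyMeasurable[𝓛] (fun ω => (π ω * H ω)⁻¹) :=
    (hπ_meas.mul hH_meas).inv.stronglyMeasurable
  have hg3 : StronglyMeasurable[𝓛] (fun ω => -(μ ω * (π ω)⁻¹)) :=
    (hμ𝓛.mul hπ_meas.inv).neg.stronglyMeasurable
  have hg4 : StronglyMeasurable[𝓛] (fun ω => M_S ω * (π ω)⁻¹) :=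
    (hMS_meas.mul hπ_meas.inv).stronglyMeasurable
  have hg5 : StronglyMeasurable[𝓛] (fun ω => -(M_S ω * (π ω * H ω)⁻¹)) :=
    (hMS_meas.mul (hπ_meas.mul hH_meas).inv).neg.stronglyMeasurable
  have hΓMR_int : Integrable (fun ω => Γ ω * M_R ω) P := by
    refine hprod_int Γ M_R 1 hΓm (Filter.Eventually.of_forall fun ω => ?_) hMR_int
    rw [abs_of_nonneg (hΓ01 ω).1]; exact (hΓ01 ω).2
  have h1ΓMS_int : Integrable (fun ω => (1 - Γ ω) * M_S ω) P := by
    refine hprod_int (fun ω => 1 - Γ ω) M_S 1 (measurable_const.sub hΓm)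
      (Filter.Eventually.of_forall fun ω => ?_) hMS_int
    show |1 - Γ ω| ≤ 1
    have h1 : (0:ℝ) ≤ 1 - Γ ω := by linarith [(hΓ01 ω).2]
    rw [abs_of_nonneg h1]
    linarith [(hΓ01 ω).1]
  have hI1 : ∫ ω, (π ω)⁻¹ * (ind ω * R ω * Y ω) ∂P = ∫ ω, Γ ω * M_R ω ∂P := by
    rw [pull _ _ hg1 ht1 hX1_int]
    refine integral_congr_ae ?_
    filter_upwards [hMR, hπ_ne] with ω h1 h2
    rw [h1]; field_simp
  have hI2 : ∫ ω, (π ω * H ω)⁻¹ * (ind ω * S ω * Y ω) ∂P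
      = ∫ ω, (1 - Γ ω) * M_S ω ∂P := by
    rw [pull _ _ hg2 ht2 hX2_int]
    refine integral_congr_ae ?_
    filter_upwards [hMS, hπ_ne, hHpos] with ω h1 h2 h3
    have hH0 : H ω ≠ 0 := ne_of_gt (lt_of_lt_of_le hε h3)
    rw [h1]; field_simp
  have hI3 : ∫ ω, -(μ ω * (π ω)⁻¹) * ind ω ∂P = ∫ ω, -(μ ω) ∂P := by
    rw [pull _ _ hg3 ht3 hind_int]
    refine integral_congr_ae ?_
    filter_upwards [hπ, hπ_ne] with ω h1 h2
    rw [h1]; field_simp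
  have hI4 : ∫ ω, M_S ω * (π ω)⁻¹ * (ind ω * (1 - R ω)) ∂P
      = ∫ ω, (1 - Γ ω) * M_S ω ∂P := by
    rw [pull _ _ hg4 ht4 hind1R_int]
    refine integral_congr_ae ?_
    filter_upwards [hC4, hπ_ne] with ω h1 h2
    rw [h1]; field_simp
  have hI5 : ∫ ω, -(M_S ω * (π ω * H ω)⁻¹) * (ind ω * S ω) ∂P
      = ∫ ω, -((1 - Γ ω) * M_S ω) ∂P := by
    rw [pull _ _ hg5 ht5 hindS_int]
    refine integral_congr_ae ?_
    filter_upwards [hH, hC4, hπ_ne, hHpos] with ω h1 h2 h3 h4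
    have hH0 : H ω ≠ 0 := ne_of_gt (lt_of_lt_of_le hε h4)
    rw [h1, h2]; field_simp
  have hμ_split : ∫ ω, μ ω ∂P = ∫ ω, Γ ω * M_R ω ∂P + ∫ ω, (1 - Γ ω) * M_S ω ∂P := by
    rw [← integral_add hΓMR_int h1ΓMS_int]
    refine integral_congr_ae (Filter.Eventually.of_forall fun ω => ?_)
    rw [hμdef]
  have hfzero : ∫ ω, f ω ∂P = 0 := by
    have hsplit : ∫ ω, f ω ∂P =
        (∫ ω, (π ω)⁻¹ * (ind ω * R ω * Y ω) ∂P)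
        + (∫ ω, (π ω * H ω)⁻¹ * (ind ω * S ω * Y ω) ∂P)
        + (∫ ω, -(μ ω * (π ω)⁻¹) * ind ω ∂P)
        + (∫ ω, M_S ω * (π ω)⁻¹ * (ind ω * (1 - R ω)) ∂P)
        + (∫ ω, -(M_S ω * (π ω * H ω)⁻¹) * (ind ω * S ω) ∂P) := by
      have i12 : Integrable (fun ω => (π ω)⁻¹ * (ind ω * R ω * Y ω)
          + (π ω * H ω)⁻¹ * (ind ω * S ω * Y ω)) P := ht1.add ht2
      have i123 : Integrable (fun ω => (π ω)⁻¹ * (ind ω * R ω * Y ω)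
          + (π ω * H ω)⁻¹ * (ind ω * S ω * Y ω)
          + -(μ ω * (π ω)⁻¹) * ind ω) P := i12.add ht3
      have i1234 : Integrable (fun ω => (π ω)⁻¹ * (ind ω * R ω * Y ω)
          + (π ω * H ω)⁻¹ * (ind ω * S ω * Y ω)
          + -(μ ω * (π ω)⁻¹) * ind ω
          + M_S ω * (π ω)⁻¹ * (ind ω * (1 - R ω))) P := i123.add ht4
      calc ∫ ω, f ω ∂P
          = ∫ ω, ((π ω)⁻¹ * (ind ω * R ω * Y ω)
              + (π ω * H ω)⁻¹ * (ind ω * S ω * Y ω)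
              + -(μ ω * (π ω)⁻¹) * ind ω
              + M_S ω * (π ω)⁻¹ * (ind ω * (1 - R ω))
              + -(M_S ω * (π ω * H ω)⁻¹) * (ind ω * S ω)) ∂P :=
            integral_congr_ae (Filter.Eventually.of_forall fun ω => hsum ω)
        _ = (∫ ω, ((π ω)⁻¹ * (ind ω * R ω * Y ω)
              + (π ω * H ω)⁻¹ * (ind ω * S ω * Y ω)
              + -(μ ω * (π ω)⁻¹) * ind ω
              + M_S ω * (π ω)⁻¹ * (ind ω * (1 - R ω))) ∂P)
            + ∫ ω, -(M_S ω * (π ω * H ω)⁻¹) * (ind ω * S ω) ∂P :=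
            integral_add i1234 ht5
        _ = ((∫ ω, ((π ω)⁻¹ * (ind ω * R ω * Y ω)
              + (π ω * H ω)⁻¹ * (ind ω * S ω * Y ω)
              + -(μ ω * (π ω)⁻¹) * ind ω) ∂P)
            + ∫ ω, M_S ω * (π ω)⁻¹ * (ind ω * (1 - R ω)) ∂P)
            + ∫ ω, -(M_S ω * (π ω * H ω)⁻¹) * (ind ω * S ω) ∂P := by
            rw [integral_add i123 ht4]
        _ = (((∫ ω, ((π ω)⁻¹ * (ind ω * R ω * Y ω)
              + (π ω * H ω)⁻¹ * (ind ω * S ω * Y ω)) ∂P)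
            + ∫ ω, -(μ ω * (π ω)⁻¹) * ind ω ∂P)
            + ∫ ω, M_S ω * (π ω)⁻¹ * (ind ω * (1 - R ω)) ∂P)
            + ∫ ω, -(M_S ω * (π ω * H ω)⁻¹) * (ind ω * S ω) ∂P := by
            rw [integral_add i12 ht3]
        _ = _ := by rw [integral_add ht1 ht2]
    rw [hsplit, hI1, hI2, hI3, hI4, hI5, integral_neg, integral_neg, hμ_split]
    ring
  constructor
  · rw [integral_add hμ_int hf_int]
    rw [hfzero, add_zero]
  · exact hfzero
end

section
/- Mean-zero property of the MAR-efficient influence function (Theorem 1, second part): let D := π·(Γ + (1−Γ)·H) and assume D ≥ ε almost surely for some ε > 0 and that M_MAR is integrable. Then (i) E[1{A=a}·(R+S)|𝓛] = D almost everywhere, and (ii) E[1{A=a}·(R+S)·(Y − M_MAR)/D] = 0; equivalently, the paper's influence function τ̇_a*(O;P) = μ_{a,MAR}(L) − τ_a*(P) + 1(A=a)(R+S)(Y − μ_{a,MAR}(L)) / (π_a(L)·{γ_a(L) + (1−γ_a(L))·η_{a,0}(L)}) has P-mean zero, where τ_a*(P) := E[M_MAR]. -/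
open MeasureTheory

set_option maxHeartbeats 1000000 in
theorem MAR_aux
    {Ω : Type*} {m0 : MeasurableSpace Ω} (P : Measure Ω) [IsProbabilityMeasure P]
    {d : ℕ} (L : Ω → (Fin d → ℝ)) (A R S Y : Ω → ℝ)
    (hL : Measurable L) (hA : Measurable A) (hR : Measurable R)
    (hS : Measurable S) (hY : Integrable Y P)
    (hA01 : ∀ ω, A ω = 0 ∨ A ω = 1)
    (hR01 : ∀ ω, R ω = 0 ∨ R ω = 1)
    (hS01 : ∀ ω, S ω = 0 ∨ S ω = 1)
    (hSR : ∀ ω, S ω * R ω = 0)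
    (a : ℝ) (ha : a = 0 ∨ a = 1)
    (𝓛 : MeasurableSpace Ω) (h𝓛 : 𝓛 = MeasurableSpace.comap L inferInstance)
    (ind : Ω → ℝ) (hind : ind = fun ω => if A ω = a then (1:ℝ) else 0)
    (π Γ H M_MAR : Ω → ℝ)
    (hπ_meas : Measurable[𝓛] π) (hπ_int : Integrable π P)
    (hΓ_meas : Measurable[𝓛] Γ) (hΓ_int : Integrable Γ P)
    (hH_meas : Measurable[𝓛] H) (hH_int : Integrable H P)
    (hMMAR_meas : Measurable[𝓛] M_MAR) (hMMAR_int : Integrable M_MAR P)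
    (hπ01 : ∀ ω, 0 ≤ π ω ∧ π ω ≤ 1)
    (hΓ01 : ∀ ω, 0 ≤ Γ ω ∧ Γ ω ≤ 1)
    (hH01 : ∀ ω, 0 ≤ H ω ∧ H ω ≤ 1)
    (hπ : P[ind | 𝓛] =ᵐ[P] π)
    (hΓ : P[fun ω => ind ω * R ω | 𝓛] =ᵐ[P] fun ω => Γ ω * π ω)
    (hH : P[fun ω => ind ω * S ω | 𝓛]
      =ᵐ[P] fun ω => H ω * (P[fun ω' => ind ω' * (1 - R ω') | 𝓛]) ω)
    (hMMAR : P[fun ω => ind ω * (R ω + S ω) * Y ω | 𝓛]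
      =ᵐ[P] fun ω => M_MAR ω * (P[fun ω' => ind ω' * (R ω' + S ω') | 𝓛]) ω)
    (D : Ω → ℝ) (hDdef : D = fun ω => π ω * (Γ ω + (1 - Γ ω) * H ω))
    (ε : ℝ) (hε : 0 < ε)
    (hDpos : ∀ᵐ ω ∂P, ε ≤ D ω) :
    (P[fun ω => ind ω * (R ω + S ω) | 𝓛] =ᵐ[P] D)
    ∧ ∫ ω, ind ω * (R ω + S ω) * (Y ω - M_MAR ω) / D ω ∂P = 0 := by
  have hm : 𝓛 ≤ m0 := by
    rw [h𝓛]; exact hL.comap_le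
  have hind_meas : Measurable[m0] ind := by
    rw [hind]
    exact Measurable.ite (measurableSet_eq_fun hA measurable_const)
      measurable_const measurable_const
  have hind01 : ∀ ω, ind ω = 0 ∨ ind ω = 1 := by
    intro ω; rw [hind]; by_cases h : A ω = a <;> simp [h]
  have habs : ∀ (f : Ω → ℝ), (∀ ω, f ω = 0 ∨ f ω = 1) → ∀ ω, |f ω| ≤ 1 := by
    intro f hf ω; rcases hf ω with h | h <;> simp [h]
  have hint_of : ∀ (f : Ω → ℝ), Measurable[m0] f → (∀ ω, ‖f ω‖ ≤ 2) → Integrable f P := by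
    intro f hf hb
    exact (integrable_const (2:ℝ)).mono' hf.aestronglyMeasurable
      (Filter.Eventually.of_forall (by simpa using hb))
  have hbnd : ∀ ω, ‖ind ω * (R ω + S ω)‖ ≤ 2 := by
    intro ω
    have h1 := habs ind hind01 ω
    have h2 := habs R hR01 ω
    have h3 := habs S hS01 ω
    calc ‖ind ω * (R ω + S ω)‖ = |ind ω| * |R ω + S ω| := abs_mul _ _
      _ ≤ 1 * (|R ω| + |S ω|) :=
          mul_le_mul h1 (abs_add_le _ _) (abs_nonneg _) zero_le_one
      _ ≤ 1 * (1 + 1) := by nlinarith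
      _ = 2 := by norm_num
  have h_indRS : Integrable (fun ω => ind ω * (R ω + S ω)) P :=
    hint_of _ (hind_meas.mul (hR.add hS)) hbnd
  have h_ind : Integrable ind P :=
    hint_of _ hind_meas (fun ω => by
      have := habs ind hind01 ω; simp only [Real.norm_eq_abs]; linarith)
  have h_indR : Integrable (fun ω => ind ω * R ω) P := by
    refine hint_of _ (hind_meas.mul hR) (fun ω => ?_)
    have h1 := habs ind hind01 ω; have h2 := habs R hR01 ω
    have h3 := abs_nonneg (ind ω); have h4 := abs_nonneg (R ω)
    simp only [Real.norm_eq_abs, abs_mul]; nlinarith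
  have h_indS : Integrable (fun ω => ind ω * S ω) P := by
    refine hint_of _ (hind_meas.mul hS) (fun ω => ?_)
    have h1 := habs ind hind01 ω; have h2 := habs S hS01 ω
    have h3 := abs_nonneg (ind ω); have h4 := abs_nonneg (S ω)
    simp only [Real.norm_eq_abs, abs_mul]; nlinarith
  have h_ind1R : Integrable (fun ω => ind ω * (1 - R ω)) P := by
    refine hint_of _ (hind_meas.mul (measurable_const.sub hR)) (fun ω => ?_)
    have h1 := habs ind hind01 ω
    have h2 : |1 - R ω| ≤ 1 := by rcases hR01 ω with h | h <;> simp [h]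
    have h3 := abs_nonneg (ind ω); have h4 := abs_nonneg (1 - R ω)
    simp only [Real.norm_eq_abs, abs_mul]; nlinarith
  -- Part (i)
  have hsplit : (fun ω => ind ω * (R ω + S ω))
      = (fun ω => ind ω * R ω) + (fun ω => ind ω * S ω) := by
    funext ω; simp only [Pi.add_apply]; ring
  have hcondRS : P[fun ω => ind ω * (R ω + S ω) | 𝓛]
      =ᵐ[P] (fun ω => Γ ω * π ω) + (fun ω => H ω * (P[fun ω' => ind ω' * (1 - R ω') | 𝓛]) ω) := by
    calc P[fun ω => ind ω * (R ω + S ω) | 𝓛]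
        =ᵐ[P] P[fun ω => ind ω * R ω | 𝓛] + P[fun ω => ind ω * S ω | 𝓛] := by
          rw [hsplit]; exact condExp_add h_indR h_indS 𝓛
      _ =ᵐ[P] _ := Filter.EventuallyEq.add hΓ hH
  have hsplit2 : (fun ω => ind ω * (1 - R ω)) = ind - (fun ω => ind ω * R ω) := by
    funext ω; simp only [Pi.sub_apply]; ring
  have hcond1R : P[fun ω => ind ω * (1 - R ω) | 𝓛] =ᵐ[P] fun ω => π ω - Γ ω * π ω := by
    calc P[fun ω => ind ω * (1 - R ω) | 𝓛]
        =ᵐ[P] P[ind | 𝓛] - P[fun ω => ind ω * R ω | 𝓛] := by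
          rw [hsplit2]; exact condExp_sub h_ind h_indR 𝓛
      _ =ᵐ[P] fun ω => π ω - Γ ω * π ω := Filter.EventuallyEq.sub hπ hΓ
  have hpart1 : P[fun ω => ind ω * (R ω + S ω) | 𝓛] =ᵐ[P] D := by
    filter_upwards [hcondRS, hcond1R] with ω h1 h2
    rw [hDdef]
    simp only [Pi.add_apply] at h1
    rw [h1, h2]; ring
  refine ⟨hpart1, ?_⟩
  -- Part (ii)
  have hD_meas : Measurable[𝓛] D := by
    rw [hDdef]
    exact hπ_meas.mul (hΓ_meas.add ((hΓ_meas.const_sub 1).mul hH_meas))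
  set W : Ω → ℝ := fun ω => (D ω)⁻¹ with hW
  have hW_meas : Measurable[𝓛] W := hD_meas.inv
  have hW_bound : ∀ᵐ ω ∂P, ‖W ω‖ ≤ ε⁻¹ := by
    filter_upwards [hDpos] with ω hω
    have hDpos' : 0 < D ω := lt_of_lt_of_le hε hω
    rw [Real.norm_eq_abs, abs_of_nonneg (inv_nonneg.mpr hDpos'.le)]
    exact inv_anti₀ hε hω
  set g : Ω → ℝ := fun ω => ind ω * (R ω + S ω) * (Y ω - M_MAR ω) with hg
  have hRS_asm : AEStronglyMeasurable[m0] (fun ω => ind ω * (R ω + S ω)) P :=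
    (hind_meas.mul (hR.add hS)).aestronglyMeasurable
  have h_indRSY : Integrable (fun ω => ind ω * (R ω + S ω) * Y ω) P :=
    hY.bdd_mul hRS_asm (Filter.Eventually.of_forall hbnd)
  have h_indRSM : Integrable (fun ω => ind ω * (R ω + S ω) * M_MAR ω) P :=
    hMMAR_int.bdd_mul hRS_asm (Filter.Eventually.of_forall hbnd)
  have hg_split : g = (fun ω => ind ω * (R ω + S ω) * Y ω)
      - (fun ω => ind ω * (R ω + S ω) * M_MAR ω) := by
    funext ω; simp only [Pi.sub_apply, hg]; ring
  have hg_int : Integrable g P := by rw [hg_split]; exact h_indRSY.sub h_indRSM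
  have hWg_int : Integrable (W * g) P :=
    hg_int.bdd_mul ((hW_meas.mono hm le_rfl).aestronglyMeasurable) hW_bound
  have hMprod_int : Integrable (M_MAR * fun ω => ind ω * (R ω + S ω)) P := by
    have heq : (M_MAR * fun ω => ind ω * (R ω + S ω))
        = fun ω => ind ω * (R ω + S ω) * M_MAR ω := by
      funext ω; simp only [Pi.mul_apply]; ring
    rw [heq]; exact h_indRSM
  have hpullM := condExp_mul_of_stronglyMeasurable_left hMMAR_meas.stronglyMeasurable hMprod_int h_indRS
  have hcondM : P[fun ω => ind ω * (R ω + S ω) * M_MAR ω | 𝓛]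
      =ᵐ[P] fun ω => M_MAR ω * (P[fun ω' => ind ω' * (R ω' + S ω') | 𝓛]) ω := by
    have heq : (fun ω => ind ω * (R ω + S ω) * M_MAR ω)
        = M_MAR * fun ω => ind ω * (R ω + S ω) := by
      funext ω; simp only [Pi.mul_apply]; ring
    rw [heq]; exact hpullM
  have hcondg : P[g | 𝓛] =ᵐ[P] 0 := by
    calc P[g | 𝓛]
        =ᵐ[P] P[fun ω => ind ω * (R ω + S ω) * Y ω | 𝓛]
          - P[fun ω => ind ω * (R ω + S ω) * M_MAR ω | 𝓛] := by
          rw [hg_split]; exact condExp_sub h_indRSY h_indRSM 𝓛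
      _ =ᵐ[P] 0 := by
          filter_upwards [hMMAR, hcondM] with ω h1 h2
          simp only [Pi.sub_apply, Pi.zero_apply, h1, h2]; ring
  have hpullW := condExp_mul_of_stronglyMeasurable_left hW_meas.stronglyMeasurable hWg_int hg_int
  have hcondWg : P[W * g | 𝓛] =ᵐ[P] 0 := by
    calc P[W * g | 𝓛] =ᵐ[P] W * P[g | 𝓛] := hpullW
      _ =ᵐ[P] 0 := by
          filter_upwards [hcondg] with ω h1
          simp only [Pi.mul_apply, Pi.zero_apply, h1]; ring
  have hint0 : ∫ ω, (W * g) ω ∂P = 0 := by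
    rw [← integral_condExp hm (f := W * g), integral_congr_ae hcondWg]
    simp
  have hfin : ∫ ω, ind ω * (R ω + S ω) * (Y ω - M_MAR ω) / D ω ∂P = ∫ ω, (W * g) ω ∂P := by
    refine integral_congr_ae (Filter.Eventually.of_forall (fun ω => ?_))
    simp only [Pi.mul_apply, hg, hW]
    rw [div_eq_mul_inv, mul_comm]
  rw [hfin, hint0]

/-- Mean-zero property of the MAR-efficient influence function (Theorem 1, second part):
with `D := π·(Γ + (1−Γ)·H) ≥ ε` a.s., (i) `E[1{A=a}(R+S)|𝓛] = D` a.e., and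
(ii) `E[1{A=a}(R+S)(Y − M_MAR)/D] = 0`, i.e. the MAR-efficient influence function
has `P`-mean zero. -/

theorem MAR_IF_mean_zero
    {Ω : Type*} [MeasurableSpace Ω] (P : Measure Ω) [IsProbabilityMeasure P]
    {d : ℕ} (L : Ω → (Fin d → ℝ)) (A R S Y : Ω → ℝ)
    (hL : Measurable L) (hA : Measurable A) (hR : Measurable R)
    (hS : Measurable S) (hY : Integrable Y P)
    (hA01 : ∀ ω, A ω = 0 ∨ A ω = 1)
    (hR01 : ∀ ω, R ω = 0 ∨ R ω = 1)
    (hS01 : ∀ ω, S ω = 0 ∨ S ω = 1)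
    (hSR : ∀ ω, S ω * R ω = 0)
    (a : ℝ) (ha : a = 0 ∨ a = 1)
    (𝓛 : MeasurableSpace Ω) (h𝓛 : 𝓛 = MeasurableSpace.comap L inferInstance)
    (ind : Ω → ℝ) (hind : ind = fun ω => if A ω = a then (1:ℝ) else 0)
    -- arm-a nuisance random variables
    (π Γ H M_MAR : Ω → ℝ)
    (hπ_meas : Measurable[𝓛] π) (hπ_int : Integrable π P)
    (hΓ_meas : Measurable[𝓛] Γ) (hΓ_int : Integrable Γ P)
    (hH_meas : Measurable[𝓛] H) (hH_int : Integrable H P)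
    (hMMAR_meas : Measurable[𝓛] M_MAR) (hMMAR_int : Integrable M_MAR P)
    (hπ01 : ∀ ω, 0 ≤ π ω ∧ π ω ≤ 1)
    (hΓ01 : ∀ ω, 0 ≤ Γ ω ∧ Γ ω ≤ 1)
    (hH01 : ∀ ω, 0 ≤ H ω ∧ H ω ≤ 1)
    -- characterizations
    (hπ : P[ind | 𝓛] =ᵐ[P] π)
    (hΓ : P[fun ω => ind ω * R ω | 𝓛] =ᵐ[P] fun ω => Γ ω * π ω)
    (hH : P[fun ω => ind ω * S ω | 𝓛]
      =ᵐ[P] fun ω => H ω * (P[fun ω' => ind ω' * (1 - R ω') | 𝓛]) ω)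
    (hMMAR : P[fun ω => ind ω * (R ω + S ω) * Y ω | 𝓛]
      =ᵐ[P] fun ω => M_MAR ω * (P[fun ω' => ind ω' * (R ω' + S ω') | 𝓛]) ω)
    -- definition of D and positivity
    (D : Ω → ℝ) (hDdef : D = fun ω => π ω * (Γ ω + (1 - Γ ω) * H ω))
    (ε : ℝ) (hε : 0 < ε)
    (hDpos : ∀ᵐ ω ∂P, ε ≤ D ω) :
    (P[fun ω => ind ω * (R ω + S ω) | 𝓛] =ᵐ[P] D)
    ∧ ∫ ω, ind ω * (R ω + S ω) * (Y ω - M_MAR ω) / D ω ∂P = 0 := by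
  exact MAR_aux P L A R S Y hL hA hR hS hY hA01 hR01 hS01 hSR a ha 𝓛 h𝓛 ind hind π Γ H M_MAR hπ_meas hπ_int hΓ_meas hΓ_int hH_meas hH_int hMMAR_meas hMMAR_int hπ01 hΓ01 hH01 hπ hΓ hH hMMAR D hDdef ε hε hDpos
end

section
/- Joint conditional independence of (R,S) and Y given (L,A) (section 2.3, third approach): assume (i) outcome missing at random (Assumption 1 of the paper): E[R·f(Y)|𝓖] = E[R|𝓖]·E[f(Y)|𝓖] almost everywhere for every bounded measurable f : ℝ → ℝ; and (ii) Assumption NI. Then for every bounded g : {0,1}×{0,1} → ℝ and every bounded measurable f : ℝ → ℝ, E[g(R,S)·f(Y)|𝓖] = E[g(R,S)|𝓖]·E[f(Y)|𝓖] almost everywhere; that is, (R,S) ⫫ Y | L, A. -/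
open MeasureTheory

/-- Joint conditional independence of `(R,S)` and `Y` given `(L,A)` (section 2.3):
under initial MAR (Assumption 1) and Assumption NI, for every bounded measurable
`g : ℝ×ℝ → ℝ` and bounded measurable `f : ℝ → ℝ`,
`E[g(R,S)·f(Y)|𝓖] = E[g(R,S)|𝓖]·E[f(Y)|𝓖]` a.e.; that is, `(R,S) ⫫ Y | L, A`. -/
theorem joint_conditional_independence
    {Ω : Type*} [MeasurableSpace Ω] (P : Measure Ω) [IsProbabilityMeasure P]
    {d : ℕ} (L : Ω → (Fin d → ℝ)) (A R S Y : Ω → ℝ)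
    (hL : Measurable L) (hA : Measurable A) (hR : Measurable R)
    (hS : Measurable S) (hY : Integrable Y P)
    (hA01 : ∀ ω, A ω = 0 ∨ A ω = 1)
    (hR01 : ∀ ω, R ω = 0 ∨ R ω = 1)
    (hS01 : ∀ ω, S ω = 0 ∨ S ω = 1)
    (hSR : ∀ ω, S ω * R ω = 0)
    (𝓖 : MeasurableSpace Ω)
    (h𝓖 : 𝓖 = MeasurableSpace.comap (fun ω => (L ω, A ω)) inferInstance)
    (𝓖R : MeasurableSpace Ω)
    (h𝓖R : 𝓖R = MeasurableSpace.comap (fun ω => (L ω, A ω, R ω)) inferInstance)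
    -- Assumption 1 of the paper: outcomes missing at random
    (hMAR : ∀ f : ℝ → ℝ, Measurable f → (∃ B, ∀ x, |f x| ≤ B) →
      P[fun ω => R ω * f (Y ω) | 𝓖]
        =ᵐ[P] fun ω => (P[R | 𝓖]) ω * (P[fun ω' => f (Y ω') | 𝓖]) ω)
    -- Assumption NI (no informative second-stage selection)
    (hNI : ∀ f : ℝ → ℝ, Measurable f → (∃ B, ∀ x, |f x| ≤ B) →
      ∀ᵐ ω ∂P, R ω = 0 →
        (P[fun ω' => S ω' * f (Y ω') | 𝓖R]) ω
          = (P[S | 𝓖R]) ω * (P[fun ω' => f (Y ω') | 𝓖R]) ω)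
    (hNIid : ∀ᵐ ω ∂P, R ω = 0 →
      (P[fun ω' => S ω' * Y ω' | 𝓖R]) ω = (P[S | 𝓖R]) ω * (P[Y | 𝓖R]) ω) :
    ∀ g : ℝ × ℝ → ℝ, Measurable g → (∃ B, ∀ x, |g x| ≤ B) →
      ∀ f : ℝ → ℝ, Measurable f → (∃ B, ∀ x, |f x| ≤ B) →
        P[fun ω => g (R ω, S ω) * f (Y ω) | 𝓖]
          =ᵐ[P] fun ω => (P[fun ω' => g (R ω', S ω') | 𝓖]) ω
            * (P[fun ω' => f (Y ω') | 𝓖]) ω := by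
  rename_i m0 _hPP
  intro g hgm hgB f hfm hfB
  letI : MeasurableSpace Ω := m0
  obtain ⟨Bg, hBg⟩ := hgB
  obtain ⟨Bf, hBf⟩ := hfB
  -- basic measurable-space facts
  have hle𝓖 : 𝓖 ≤ m0 := by
    rw [h𝓖]; exact (hL.prodMk hA).comap_le
  have hle𝓖R : 𝓖R ≤ m0 := by
    rw [h𝓖R]; exact (hL.prodMk (hA.prodMk hR)).comap_le
  have h𝓖𝓖R : 𝓖 ≤ 𝓖R := by
    rw [h𝓖, h𝓖R]
    have : (fun ω => (L ω, A ω))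
        = (fun p : (Fin d → ℝ) × ℝ × ℝ => (p.1, p.2.1)) ∘ (fun ω => (L ω, A ω, R ω)) := rfl
    rw [this, ← MeasurableSpace.comap_comp]
    exact MeasurableSpace.comap_mono
      ((measurable_fst.prodMk (measurable_fst.comp measurable_snd)).comap_le)
  have hRmeas𝓖R : Measurable[𝓖R] R := by
    rw [h𝓖R]
    have : R = (fun p : (Fin d → ℝ) × ℝ × ℝ => p.2.2) ∘ (fun ω => (L ω, A ω, R ω)) := rfl
    refine Measurable.of_comap_le ?_
    rw [this, ← MeasurableSpace.comap_comp]
    exact MeasurableSpace.comap_mono ((measurable_snd.comp measurable_snd).comap_le)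
  -- bounds
  have hRb : ∀ ω, |R ω| ≤ 1 := fun ω => by rcases hR01 ω with h | h <;> simp [h]
  have hSb : ∀ ω, |S ω| ≤ 1 := fun ω => by rcases hS01 ω with h | h <;> simp [h]
  have hBf0 : 0 ≤ Bf := le_trans (abs_nonneg _) (hBf 0)
  -- integrability helpers
  have int_of_bdd : ∀ (h : Ω → ℝ), AEStronglyMeasurable h P → ∀ B : ℝ, (∀ ω, |h ω| ≤ B) →
      Integrable h P := fun h hm B hb =>
    ⟨hm, HasFiniteIntegral.of_bounded (C := B) (Filter.Eventually.of_forall fun ω => by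
      simpa [Real.norm_eq_abs] using hb ω)⟩
  have hfY_meas : AEStronglyMeasurable (fun ω => f (Y ω)) P :=
    (hfm.comp_aemeasurable hY.aemeasurable).aestronglyMeasurable
  have hfY_int : Integrable (fun ω => f (Y ω)) P :=
    int_of_bdd _ hfY_meas Bf fun ω => hBf _
  have hR_int : Integrable R P := int_of_bdd _ hR.aestronglyMeasurable 1 hRb
  have hS_int : Integrable S P := int_of_bdd _ hS.aestronglyMeasurable 1 hSb
  have hRfY_int : Integrable (fun ω => R ω * f (Y ω)) P :=
    hfY_int.bdd_mul (c := 1) hR.aestronglyMeasurable (Filter.Eventually.of_forall fun ω => by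
      simpa [Real.norm_eq_abs] using hRb ω)
  have hSfY_int : Integrable (fun ω => S ω * f (Y ω)) P :=
    hfY_int.bdd_mul (c := 1) hS.aestronglyMeasurable (Filter.Eventually.of_forall fun ω => by
      simpa [Real.norm_eq_abs] using hSb ω)
  -- notation
  set Wf : Ω → ℝ := P[fun ω => f (Y ω) | 𝓖] with hWf
  -- Step 0: set-integral characterization over 𝓖-sets
  have key0 : ∀ t : Set Ω, MeasurableSet[𝓖] t →
      ∫ ω in t, f (Y ω) ∂P = ∫ ω in t, Wf ω ∂P := fun t ht =>
    (setIntegral_condExp hle𝓖 hfY_int ht).symm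
  -- Step 1: ∫_t R·f(Y) = ∫_t R·Wf for 𝓖-measurable t
  have hWfR_int : Integrable (fun ω => R ω * Wf ω) P :=
    integrable_condExp.bdd_mul (c := 1) hR.aestronglyMeasurable (Filter.Eventually.of_forall fun ω => by
      simpa [Real.norm_eq_abs] using hRb ω)
  have hpullR : P[Wf * R | 𝓖] =ᵐ[P] Wf * P[R | 𝓖] :=
    condExp_mul_of_stronglyMeasurable_left stronglyMeasurable_condExp
      (hWfR_int.congr (Filter.Eventually.of_forall fun ω => mul_comm _ _)) hR_int
  have key1 : ∀ t : Set Ω, MeasurableSet[𝓖] t →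
      ∫ ω in t, R ω * f (Y ω) ∂P = ∫ ω in t, R ω * Wf ω ∂P := by
    intro t ht
    have h1 : ∫ ω in t, R ω * f (Y ω) ∂P
        = ∫ ω in t, (P[fun ω => R ω * f (Y ω) | 𝓖]) ω ∂P :=
      (setIntegral_condExp hle𝓖 hRfY_int ht).symm
    have h2 : ∫ ω in t, (P[fun ω => R ω * f (Y ω) | 𝓖]) ω ∂P
        = ∫ ω in t, (P[R | 𝓖]) ω * Wf ω ∂P :=
      integral_congr_ae (ae_restrict_of_ae (hMAR f hfm ⟨Bf, hBf⟩))
    have h3 : ∫ ω in t, R ω * Wf ω ∂P = ∫ ω in t, (Wf * R) ω ∂P :=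
      integral_congr_ae (Filter.Eventually.of_forall fun ω => mul_comm _ _)
    have h4 : ∫ ω in t, (Wf * R) ω ∂P = ∫ ω in t, (P[Wf * R | 𝓖]) ω ∂P :=
      (setIntegral_condExp hle𝓖
        (hWfR_int.congr (Filter.Eventually.of_forall fun ω => mul_comm _ _)) ht).symm
    have h5 : ∫ ω in t, (P[Wf * R | 𝓖]) ω ∂P = ∫ ω in t, (P[R | 𝓖]) ω * Wf ω ∂P := by
      refine integral_congr_ae (ae_restrict_of_ae ?_)
      filter_upwards [hpullR] with ω hω
      simpa [mul_comm] using hω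
    rw [h1, h2, ← h5, ← h4, ← h3]
  -- Step A: E[f(Y)|𝓖R] = E[f(Y)|𝓖] a.e.
  haveI : SigmaFinite (P.trim hle𝓖R) := by infer_instance
  haveI : SigmaFinite (P.trim hle𝓖) := by infer_instance
  have stepA : P[fun ω => f (Y ω) | 𝓖R] =ᵐ[P] Wf := by
    refine (ae_eq_condExp_of_forall_setIntegral_eq hle𝓖R hfY_int
      ?_ (fun s hs _ => ?_)
      ((stronglyMeasurable_condExp.mono h𝓖𝓖R).aestronglyMeasurable)).symm
    · exact fun s _ _ => integrable_condExp.integrableOn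
    -- s is 𝓖R-measurable; decompose along R ∈ {0,1}
    rw [h𝓖R] at hs
    obtain ⟨B, hB, rfl⟩ := hs
    set t1 : Set Ω := (fun ω => (L ω, A ω)) ⁻¹' {p : (Fin d → ℝ) × ℝ | (p.1, p.2, (1:ℝ)) ∈ B}
      with ht1def
    set t0 : Set Ω := (fun ω => (L ω, A ω)) ⁻¹' {p : (Fin d → ℝ) × ℝ | (p.1, p.2, (0:ℝ)) ∈ B}
      with ht0def
    have ht1𝓖 : MeasurableSet[𝓖] t1 := by
      rw [h𝓖]
      exact ⟨_, hB.preimage (measurable_fst.prodMk (measurable_snd.prodMk measurable_const)),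
        rfl⟩
    have ht0𝓖 : MeasurableSet[𝓖] t0 := by
      rw [h𝓖]
      exact ⟨_, hB.preimage (measurable_fst.prodMk (measurable_snd.prodMk measurable_const)),
        rfl⟩
    have ht1 : MeasurableSet[m0] t1 := hle𝓖 _ ht1𝓖
    have ht0 : MeasurableSet[m0] t0 := hle𝓖 _ ht0𝓖
    have hsmeas : MeasurableSet[m0] ((fun ω => (L ω, A ω, R ω)) ⁻¹' B) :=
      hB.preimage (hL.prodMk (hA.prodMk hR))
    -- splitting of set integrals
    have hsplit : ∀ h : Ω → ℝ, Integrable h P →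
        Integrable (fun ω => R ω * h ω) P → Integrable (fun ω => (1 - R ω) * h ω) P →
        ∫ ω in (fun ω => (L ω, A ω, R ω)) ⁻¹' B, h ω ∂P
          = ∫ ω in t1, R ω * h ω ∂P + ∫ ω in t0, (1 - R ω) * h ω ∂P := by
      intro h hint hint1 hint0
      have hpt : ∀ ω, ((fun ω => (L ω, A ω, R ω)) ⁻¹' B).indicator h ω
          = t1.indicator (fun ω => R ω * h ω) ω + t0.indicator (fun ω => (1 - R ω) * h ω) ω := by
        intro ω
        rcases hR01 ω with h0 | h1
        · have hmem : (ω ∈ (fun ω => (L ω, A ω, R ω)) ⁻¹' B) = (ω ∈ t0) := by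
            show ((L ω, A ω, R ω) ∈ B) = ((L ω, A ω, (0:ℝ)) ∈ B)
            rw [h0]
          have e1 : t1.indicator (fun ω => R ω * h ω) ω = 0 := by
            by_cases hw : ω ∈ t1 <;> simp [hw, h0]
          have e0 : t0.indicator (fun ω => (1 - R ω) * h ω) ω = t0.indicator h ω := by
            by_cases hw : ω ∈ t0 <;> simp [hw, h0]
          rw [e0, e1, zero_add]
          by_cases hw : ω ∈ t0
          · rw [Set.indicator_of_mem (hmem.symm ▸ hw), Set.indicator_of_mem hw]
          · rw [Set.indicator_of_notMem (by rw [hmem]; exact hw),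
              Set.indicator_of_notMem hw]
        · have hmem : (ω ∈ (fun ω => (L ω, A ω, R ω)) ⁻¹' B) = (ω ∈ t1) := by
            show ((L ω, A ω, R ω) ∈ B) = ((L ω, A ω, (1:ℝ)) ∈ B)
            rw [h1]
          have e1 : t1.indicator (fun ω => R ω * h ω) ω = t1.indicator h ω := by
            by_cases hw : ω ∈ t1 <;> simp [hw, h1]
          have e0 : t0.indicator (fun ω => (1 - R ω) * h ω) ω = 0 := by
            by_cases hw : ω ∈ t0 <;> simp [hw, h1]
          rw [e0, e1, add_zero]
          by_cases hw : ω ∈ t1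
          · rw [Set.indicator_of_mem (hmem.symm ▸ hw), Set.indicator_of_mem hw]
          · rw [Set.indicator_of_notMem (by rw [hmem]; exact hw),
              Set.indicator_of_notMem hw]
      calc ∫ ω in (fun ω => (L ω, A ω, R ω)) ⁻¹' B, h ω ∂P
          = ∫ ω, ((fun ω => (L ω, A ω, R ω)) ⁻¹' B).indicator h ω ∂P :=
            (integral_indicator hsmeas).symm
        _ = ∫ ω, (t1.indicator (fun ω => R ω * h ω) ω
              + t0.indicator (fun ω => (1 - R ω) * h ω) ω) ∂P :=
            integral_congr_ae (Filter.Eventually.of_forall hpt)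
        _ = ∫ ω, t1.indicator (fun ω => R ω * h ω) ω ∂P
              + ∫ ω, t0.indicator (fun ω => (1 - R ω) * h ω) ω ∂P :=
            integral_add (hint1.indicator ht1) (hint0.indicator ht0)
        _ = ∫ ω in t1, R ω * h ω ∂P + ∫ ω in t0, (1 - R ω) * h ω ∂P := by
            rw [integral_indicator ht1, integral_indicator ht0]
    -- integrability side conditions
    have h1mR_meas : AEStronglyMeasurable (fun ω => 1 - R ω) P :=
      (measurable_const.sub hR).aestronglyMeasurable
    have h1mRb : ∀ ω, ‖1 - R ω‖ ≤ 1 := fun ω => by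
      rcases hR01 ω with h | h <;> simp [h]
    have hfY1 : Integrable (fun ω => (1 - R ω) * f (Y ω)) P :=
      hfY_int.bdd_mul (c := 1) h1mR_meas (Filter.Eventually.of_forall h1mRb)
    have hWf1 : Integrable (fun ω => (1 - R ω) * Wf ω) P :=
      integrable_condExp.bdd_mul (c := 1) h1mR_meas (Filter.Eventually.of_forall h1mRb)
    -- the (1 - R) analog of key1
    have key1' : ∀ t : Set Ω, MeasurableSet[𝓖] t →
        ∫ ω in t, (1 - R ω) * f (Y ω) ∂P = ∫ ω in t, (1 - R ω) * Wf ω ∂P := by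
      intro t ht
      have e1 : ∫ ω in t, (1 - R ω) * f (Y ω) ∂P
          = ∫ ω in t, f (Y ω) ∂P - ∫ ω in t, R ω * f (Y ω) ∂P := by
        rw [← integral_sub (hfY_int.integrableOn) (hRfY_int.integrableOn)]
        exact integral_congr_ae (Filter.Eventually.of_forall fun ω => by ring)
      have e2 : ∫ ω in t, (1 - R ω) * Wf ω ∂P
          = ∫ ω in t, Wf ω ∂P - ∫ ω in t, R ω * Wf ω ∂P := by
        rw [← integral_sub (integrable_condExp.integrableOn) (hWfR_int.integrableOn)]
        exact integral_congr_ae (Filter.Eventually.of_forall fun ω => by ring)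
      rw [e1, e2, key0 t ht, key1 t ht]
    rw [hsplit _ hfY_int hRfY_int hfY1, hsplit _ integrable_condExp hWfR_int hWf1,
      key1 t1 ht1𝓖, key1' t0 ht0𝓖]
  -- Step 2: E[S·f(Y)|𝓖] = E[S|𝓖]·Wf a.e.
  have hSf : P[fun ω => S ω * f (Y ω) | 𝓖] =ᵐ[P] fun ω => (P[S | 𝓖]) ω * Wf ω := by
    -- first: on 𝓖R, vanishing on {R = 1}
    have h1mR_sm : StronglyMeasurable[𝓖R] (fun ω => 1 - R ω) :=
      (measurable_const.sub hRmeas𝓖R).stronglyMeasurable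
    have hSfY_eq : (fun ω => S ω * f (Y ω))
        = (fun ω => 1 - R ω) * (fun ω => S ω * f (Y ω)) := by
      funext ω
      rcases hR01 ω with h0 | h1
      · simp [h0]
      · have hs0 : S ω = 0 := by have := hSR ω; rwa [h1, mul_one] at this
        simp [hs0]
    have hS_eq : S = (fun ω => 1 - R ω) * S := by
      funext ω
      rcases hR01 ω with h0 | h1
      · simp [h0]
      · have hs0 : S ω = 0 := by have := hSR ω; rwa [h1, mul_one] at this
        simp [hs0]
    have hvan1 : P[fun ω => S ω * f (Y ω) | 𝓖R]
        =ᵐ[P] (fun ω => 1 - R ω) * P[fun ω => S ω * f (Y ω) | 𝓖R] := by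
      nth_rewrite 1 [hSfY_eq]
      exact condExp_mul_of_stronglyMeasurable_left h1mR_sm (hSfY_eq ▸ hSfY_int) hSfY_int
    have hvan2 : P[S | 𝓖R] =ᵐ[P] (fun ω => 1 - R ω) * P[S | 𝓖R] := by
      nth_rewrite 1 [hS_eq]
      exact condExp_mul_of_stronglyMeasurable_left h1mR_sm (hS_eq ▸ hS_int) hS_int
    have hSfR : P[fun ω => S ω * f (Y ω) | 𝓖R]
        =ᵐ[P] fun ω => (P[S | 𝓖R]) ω * Wf ω := by
      filter_upwards [hNI f hfm ⟨Bf, hBf⟩, stepA, hvan1, hvan2] with ω hni ha hv1 hv2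
      rcases hR01 ω with h0 | h1
      · rw [hni h0, ha]
      · have z1 : (P[fun ω => S ω * f (Y ω) | 𝓖R]) ω = 0 := by
          rw [hv1]; simp [h1]
        have z2 : (P[S | 𝓖R]) ω = 0 := by rw [hv2]; simp [h1]
        rw [z1, z2, zero_mul]
    -- tower property
    have htower : P[fun ω => S ω * f (Y ω) | 𝓖]
        =ᵐ[P] P[P[fun ω => S ω * f (Y ω) | 𝓖R] | 𝓖] :=
      (condExp_condExp_of_le h𝓖𝓖R hle𝓖R).symm
    have hcongr : P[P[fun ω => S ω * f (Y ω) | 𝓖R] | 𝓖]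
        =ᵐ[P] P[Wf * P[S | 𝓖R] | 𝓖] :=
      condExp_congr_ae (hSfR.trans (Filter.Eventually.of_forall fun ω => mul_comm _ _))
    -- bound on E[S|𝓖R]
    have hbdd : ∀ᵐ ω ∂P, ‖(P[S | 𝓖R]) ω‖ ≤ (1 : ℝ) := by
      filter_upwards [ae_bdd_condExp_of_ae_bdd (R := 1) (f := S) (m := 𝓖R) (μ := P)
        (Filter.Eventually.of_forall fun ω => by simpa using hSb ω)] with ω hω
      simpa [Real.norm_eq_abs] using hω
    have hint : Integrable (Wf * P[S | 𝓖R]) P := by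
      have h1 : Integrable (fun ω => (P[S | 𝓖R]) ω * Wf ω) P :=
        Integrable.bdd_mul integrable_condExp
          ((stronglyMeasurable_condExp.mono hle𝓖R).aestronglyMeasurable) hbdd
      exact h1.congr (Filter.Eventually.of_forall fun ω => mul_comm _ _)
    have hpull : P[Wf * P[S | 𝓖R] | 𝓖] =ᵐ[P] Wf * P[P[S | 𝓖R] | 𝓖] :=
      condExp_mul_of_stronglyMeasurable_left stronglyMeasurable_condExp hint integrable_condExp
    have htower2 : P[P[S | 𝓖R] | 𝓖] =ᵐ[P] P[S | 𝓖] :=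
      condExp_condExp_of_le h𝓖𝓖R hle𝓖R
    filter_upwards [htower, hcongr, hpull, htower2] with ω h1 h2 h3 h4
    rw [h1, h2, h3]
    simp only [Pi.mul_apply]
    rw [h4, mul_comm]
  -- Final combination: decompose g (R, S) as an affine combination of R, S, 1
  set c₁ : ℝ := g (1, 0) - g (0, 0) with hc₁
  set c₂ : ℝ := g (0, 1) - g (0, 0) with hc₂
  set c₃ : ℝ := g (0, 0) with hc₃
  have hgd : ∀ ω, g (R ω, S ω) = c₁ * R ω + (c₂ * S ω + c₃) := by
    intro ω
    rcases hR01 ω with h0 | h1 <;> rcases hS01 ω with hs0 | hs1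
    · rw [h0, hs0, hc₁, hc₂, hc₃]; ring
    · rw [h0, hs1, hc₁, hc₂, hc₃]; ring
    · rw [h1, hs0, hc₁, hc₂, hc₃]; ring
    · exfalso; have := hSR ω; rw [h1, hs1] at this; norm_num at this
  have hcadd : ∀ (u v w : Ω → ℝ), Integrable u P → Integrable v P → Integrable w P →
      P[c₁ • u + (c₂ • v + c₃ • w) | 𝓖]
        =ᵐ[P] fun ω => c₁ * (P[u | 𝓖]) ω + (c₂ * (P[v | 𝓖]) ω + c₃ * (P[w | 𝓖]) ω) := by
    intro u v w hu hv hw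
    have h1 := condExp_add (μ := P) (m := 𝓖) (hu.smul c₁) ((hv.smul c₂).add (hw.smul c₃))
    have h2 := condExp_add (μ := P) (m := 𝓖) (hv.smul c₂) (hw.smul c₃)
    have h3 := condExp_smul (μ := P) (m := 𝓖) c₁ u
    have h4 := condExp_smul (μ := P) (m := 𝓖) c₂ v
    have h5 := condExp_smul (μ := P) (m := 𝓖) c₃ w
    filter_upwards [h1, h2, h3, h4, h5] with ω e1 e2 e3 e4 e5
    simp only [Pi.add_apply, Pi.smul_apply, smul_eq_mul] at e1 e2 e3 e4 e5 ⊢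
    rw [e1, e2, e3, e4, e5]
  have hLfun : (fun ω => g (R ω, S ω) * f (Y ω))
      = c₁ • (fun ω => R ω * f (Y ω)) + (c₂ • (fun ω => S ω * f (Y ω))
          + c₃ • (fun ω => f (Y ω))) := by
    funext ω
    simp only [Pi.add_apply, Pi.smul_apply, smul_eq_mul]
    rw [hgd ω]; ring
  have hRfun : (fun ω => g (R ω, S ω))
      = c₁ • R + (c₂ • S + c₃ • (fun _ => (1 : ℝ))) := by
    funext ω
    simp only [Pi.add_apply, Pi.smul_apply, smul_eq_mul]
    rw [hgd ω]; ring
  rw [hLfun, hRfun]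
  filter_upwards [hcadd _ _ _ hRfY_int hSfY_int hfY_int,
    hcadd R S (fun _ => (1 : ℝ)) hR_int hS_int (integrable_const 1),
    hMAR f hfm ⟨Bf, hBf⟩, hSf] with ω e1 e2 e3 e4
  rw [e1, e2, e3, e4]
  simp only [condExp_const hle𝓖]
  ring
end

section
/- Product-error bias decomposition for the nonparametric estimator (Theorem 2, first part): under π ≥ ε and H ≥ ε almost surely, with M_R, M_S integrable and candidate nuisances as specified, E[ μ̃ + (1{A=a}/π̃)·{ (R + S/η̃)·Y − μ̃ + (1−R)·(1 − S/η̃)·μ̃_S } ] − E[μ] = E[(1 − π/π̃)·(μ̃ − μ)] + E[(1−Γ)·(π/π̃)·(1 − H/η̃)·(μ̃_S − M_S)]. The left-hand side is the paper's Bias_{τ_a}(P̃; P) = E_P(τ̇_a(O; P̃)) + τ_a(P̃) − τ_a(P). -/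
open MeasureTheory

private lemma abs_div_le' {x p B ε : ℝ} (hx : |x| ≤ B) (hε : 0 < ε) (hp : ε ≤ p) :
    |x / p| ≤ B / ε := by
  rw [abs_div, abs_of_pos (lt_of_lt_of_le hε hp)]
  exact div_le_div₀ (le_trans (abs_nonneg x) hx) hx hε hp

private lemma integral_mul_condexp_eq {Ω : Type*} [m0 : MeasurableSpace Ω]
    (P : Measure Ω) [IsProbabilityMeasure P] {m : MeasurableSpace Ω} (hm : m ≤ m0)
    {c g h : Ω → ℝ} (hc : Measurable[m] c) (B : ℝ) (hcb : ∀ ω, ‖c ω‖ ≤ B)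
    (hg : Integrable g P) (hgh : P[g|m] =ᵐ[P] h) :
    ∫ ω, c ω * g ω ∂P = ∫ ω, c ω * h ω ∂P := by
  have hcprod : Integrable (fun ω => c ω * g ω) P :=
    hg.bdd_mul ((hc.mono hm le_rfl).aestronglyMeasurable) (c := B) (Filter.Eventually.of_forall hcb)
  have h1 : P[fun ω => c ω * g ω | m] =ᵐ[P] fun ω => c ω * h ω := by
    refine (condExp_mul_of_stronglyMeasurable_left hc.stronglyMeasurable hcprod hg).trans ?_
    filter_upwards [hgh] with ω hω
    simp [hω]
  calc ∫ ω, c ω * g ω ∂P = ∫ ω, (P[fun ω => c ω * g ω | m]) ω ∂P :=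
        (integral_condExp hm).symm
    _ = ∫ ω, c ω * h ω ∂P := integral_congr_ae h1

set_option maxHeartbeats 1000000 in
/-- Product-error bias decomposition for the nonparametric estimator (Theorem 2, first
part): `E[τ̇_a(O;P̃) + τ_a(P̃)] − τ_a(P)
= E[(1 − π/π̃)(μ̃ − μ)] + E[(1−Γ)(π/π̃)(1 − H/η̃)(μ̃_S − M_S)]`. -/
theorem product_error_bias_tau
    {Ω : Type*} [MeasurableSpace Ω] (P : Measure Ω) [IsProbabilityMeasure P]
    {d : ℕ} (L : Ω → (Fin d → ℝ)) (A R S Y : Ω → ℝ)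
    (hL : Measurable L) (hA : Measurable A) (hR : Measurable R)
    (hS : Measurable S) (hY : Integrable Y P)
    (hA01 : ∀ ω, A ω = 0 ∨ A ω = 1)
    (hR01 : ∀ ω, R ω = 0 ∨ R ω = 1)
    (hS01 : ∀ ω, S ω = 0 ∨ S ω = 1)
    (hSR : ∀ ω, S ω * R ω = 0)
    (a : ℝ) (ha : a = 0 ∨ a = 1)
    (𝓛 : MeasurableSpace Ω) (h𝓛 : 𝓛 = MeasurableSpace.comap L inferInstance)
    (ind : Ω → ℝ) (hind : ind = fun ω => if A ω = a then (1:ℝ) else 0)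
    -- arm-a nuisance random variables
    (π Γ H M_R M_S : Ω → ℝ)
    (hπ_meas : Measurable[𝓛] π) (hπ_int : Integrable π P)
    (hΓ_meas : Measurable[𝓛] Γ) (hΓ_int : Integrable Γ P)
    (hH_meas : Measurable[𝓛] H) (hH_int : Integrable H P)
    (hMR_meas : Measurable[𝓛] M_R) (hMR_int : Integrable M_R P)
    (hMS_meas : Measurable[𝓛] M_S) (hMS_int : Integrable M_S P)
    (hπ01 : ∀ ω, 0 ≤ π ω ∧ π ω ≤ 1)
    (hΓ01 : ∀ ω, 0 ≤ Γ ω ∧ Γ ω ≤ 1)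
    (hH01 : ∀ ω, 0 ≤ H ω ∧ H ω ≤ 1)
    -- characterizations
    (hπ : P[ind | 𝓛] =ᵐ[P] π)
    (hΓ : P[fun ω => ind ω * R ω | 𝓛] =ᵐ[P] fun ω => Γ ω * π ω)
    (hH : P[fun ω => ind ω * S ω | 𝓛]
      =ᵐ[P] fun ω => H ω * (P[fun ω' => ind ω' * (1 - R ω') | 𝓛]) ω)
    (hMR : P[fun ω => ind ω * R ω * Y ω | 𝓛] =ᵐ[P] fun ω => M_R ω * (Γ ω * π ω))
    (hMS : P[fun ω => ind ω * S ω * Y ω | 𝓛]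
      =ᵐ[P] fun ω => M_S ω * (H ω * ((1 - Γ ω) * π ω)))
    -- true outcome regression μ
    (μ : Ω → ℝ) (hμdef : μ = fun ω => Γ ω * M_R ω + (1 - Γ ω) * M_S ω)
    -- positivity of true nuisances
    (ε : ℝ) (hε : 0 < ε)
    (hπpos : ∀ᵐ ω ∂P, ε ≤ π ω)
    (hHpos : ∀ᵐ ω ∂P, ε ≤ H ω)
    -- candidate (possibly misspecified) nuisances
    (πt ηt γt μtR μtS : Ω → ℝ)
    (hπt_meas : Measurable[𝓛] πt) (hηt_meas : Measurable[𝓛] ηt)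
    (hγt_meas : Measurable[𝓛] γt) (hμtR_meas : Measurable[𝓛] μtR)
    (hμtS_meas : Measurable[𝓛] μtS)
    (hπt_bdd : ∃ B, ∀ ω, |πt ω| ≤ B) (hηt_bdd : ∃ B, ∀ ω, |ηt ω| ≤ B)
    (hμtR_bdd : ∃ B, ∀ ω, |μtR ω| ≤ B) (hμtS_bdd : ∃ B, ∀ ω, |μtS ω| ≤ B)
    (hπt_pos : ∀ ω, ε ≤ πt ω) (hηt_pos : ∀ ω, ε ≤ ηt ω)
    (hγt01 : ∀ ω, 0 ≤ γt ω ∧ γt ω ≤ 1)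
    (μt : Ω → ℝ) (hμtdef : μt = fun ω => γt ω * μtR ω + (1 - γt ω) * μtS ω) :
    ∫ ω, (μt ω + (ind ω / πt ω) *
        ((R ω + S ω / ηt ω) * Y ω - μt ω
          + (1 - R ω) * (1 - S ω / ηt ω) * μtS ω)) ∂P
      - ∫ ω, μ ω ∂P
    = ∫ ω, (1 - π ω / πt ω) * (μt ω - μ ω) ∂P
      + ∫ ω, (1 - Γ ω) * (π ω / πt ω) * (1 - H ω / ηt ω) * (μtS ω - M_S ω) ∂P := by
  classical
  subst h𝓛
  have hm : MeasurableSpace.comap L inferInstance ≤ ‹MeasurableSpace Ω› := hL.comap_le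
  obtain ⟨BR, hBR⟩ := hμtR_bdd
  obtain ⟨BS, hBS⟩ := hμtS_bdd
  -- basic bounds
  have habs1 : ∀ x : ℝ, (x = 0 ∨ x = 1) → |x| ≤ 1 := by rintro x (rfl|rfl) <;> norm_num
  have hind01 : ∀ ω, ind ω = 0 ∨ ind ω = 1 := by
    intro ω; rw [hind]; by_cases h : A ω = a <;> simp [h]
  have hπt_ne : ∀ ω, πt ω ≠ 0 := fun ω => ne_of_gt (lt_of_lt_of_le hε (hπt_pos ω))
  have hηt_ne : ∀ ω, ηt ω ≠ 0 := fun ω => ne_of_gt (lt_of_lt_of_le hε (hηt_pos ω))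
  have hμt_bdd : ∀ ω, |μt ω| ≤ |BR| + |BS| := by
    intro ω
    rw [hμtdef]
    have h1 : |γt ω * μtR ω| ≤ |BR| := by
      rw [abs_mul, abs_of_nonneg (hγt01 ω).1]
      calc γt ω * |μtR ω| ≤ 1 * |BR| :=
            mul_le_mul (hγt01 ω).2 ((hBR ω).trans (le_abs_self _)) (abs_nonneg _) zero_le_one
        _ = |BR| := one_mul _
    have h2 : |(1 - γt ω) * μtS ω| ≤ |BS| := by
      rw [abs_mul, abs_of_nonneg (by linarith [(hγt01 ω).2] : (0:ℝ) ≤ 1 - γt ω)]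
      calc (1 - γt ω) * |μtS ω| ≤ 1 * |BS| :=
            mul_le_mul (by linarith [(hγt01 ω).1]) ((hBS ω).trans (le_abs_self _))
              (abs_nonneg _) zero_le_one
        _ = |BS| := one_mul _
    calc |γt ω * μtR ω + (1 - γt ω) * μtS ω| ≤ |γt ω * μtR ω| + |(1 - γt ω) * μtS ω| :=
          abs_add_le _ _
      _ ≤ |BR| + |BS| := add_le_add h1 h2
  -- measurability
  have hμt_measL : Measurable[MeasurableSpace.comap L inferInstance] μt := by
    rw [hμtdef]
    exact (hγt_meas.mul hμtR_meas).add ((measurable_const.sub hγt_meas).mul hμtS_meas)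
  have hind_meas : Measurable ind := by
    rw [hind]
    exact Measurable.ite (hA (measurableSet_singleton a)) measurable_const measurable_const
  -- integrability of indicator-type products
  have hbnd_int : ∀ (f : Ω → ℝ), Measurable f → (∀ ω, ‖f ω‖ ≤ 1) → Integrable f P := by
    intro f hf hb
    have : Integrable (fun ω => f ω * (1:ℝ)) P :=
      (integrable_const (1:ℝ)).bdd_mul hf.aestronglyMeasurable (c := 1) (Filter.Eventually.of_forall hb)
    simpa using this
  have hind_int : Integrable ind P :=
    hbnd_int ind hind_meas (fun ω => by rw [Real.norm_eq_abs]; exact habs1 _ (hind01 ω))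
  have hnorm01mul : ∀ (u v : ℝ), (u = 0 ∨ u = 1) → (v = 0 ∨ v = 1) → ‖u * v‖ ≤ 1 := by
    rintro u v (rfl|rfl) (rfl|rfl) <;> norm_num
  have hindR_int : Integrable (fun ω => ind ω * R ω) P :=
    hbnd_int _ (hind_meas.mul hR) (fun ω => hnorm01mul _ _ (hind01 ω) (hR01 ω))
  have hindS_int : Integrable (fun ω => ind ω * S ω) P :=
    hbnd_int _ (hind_meas.mul hS) (fun ω => hnorm01mul _ _ (hind01 ω) (hS01 ω))
  have hindRY_int : Integrable (fun ω => ind ω * R ω * Y ω) P :=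
    hY.bdd_mul (hind_meas.mul hR).aestronglyMeasurable
      (c := 1) (Filter.Eventually.of_forall fun ω => hnorm01mul _ _ (hind01 ω) (hR01 ω))
  have hindSY_int : Integrable (fun ω => ind ω * S ω * Y ω) P :=
    hY.bdd_mul (hind_meas.mul hS).aestronglyMeasurable
      (c := 1) (Filter.Eventually.of_forall fun ω => hnorm01mul _ _ (hind01 ω) (hS01 ω))
  -- derived conditional expectation facts
  have hH5 : P[fun ω => ind ω * S ω | MeasurableSpace.comap L inferInstance]
      =ᵐ[P] fun ω => H ω * (π ω - Γ ω * π ω) := by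
    have heq : (fun ω => ind ω * (1 - R ω)) = ind - fun ω => ind ω * R ω := by
      funext ω; simp [Pi.sub_apply]; ring
    have hsub : P[fun ω' => ind ω' * (1 - R ω') | MeasurableSpace.comap L inferInstance]
        =ᵐ[P] fun ω => π ω - Γ ω * π ω := by
      rw [heq]
      refine (condExp_sub hind_int hindR_int _).trans ?_
      filter_upwards [hπ, hΓ] with ω h1 h2
      simp [Pi.sub_apply, h1, h2]
    filter_upwards [hH, hsub] with ω h1 h2
    rw [h1, h2]
  -- the five coefficient identities
  have E1 : ∫ ω, (πt ω)⁻¹ * (ind ω * R ω * Y ω) ∂P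
      = ∫ ω, (πt ω)⁻¹ * (M_R ω * (Γ ω * π ω)) ∂P := by
    refine integral_mul_condexp_eq P hm hπt_meas.inv (ε⁻¹) (fun ω => ?_) hindRY_int hMR
    rw [Real.norm_eq_abs, abs_inv]
    exact inv_anti₀ hε (le_trans (hπt_pos ω) (le_abs_self _))
  have E2 : ∫ ω, (πt ω * ηt ω)⁻¹ * (ind ω * S ω * Y ω) ∂P
      = ∫ ω, (πt ω * ηt ω)⁻¹ * (M_S ω * (H ω * ((1 - Γ ω) * π ω))) ∂P := by
    refine integral_mul_condexp_eq P hm (hπt_meas.mul hηt_meas).inv ((ε*ε)⁻¹)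
      (fun ω => ?_) hindSY_int hMS
    rw [Real.norm_eq_abs, abs_inv]
    refine inv_anti₀ (by positivity) ?_
    calc ε * ε ≤ πt ω * ηt ω :=
          mul_le_mul (hπt_pos ω) (hηt_pos ω) (le_of_lt hε) (le_trans (le_of_lt hε) (hπt_pos ω))
      _ ≤ |πt ω * ηt ω| := le_abs_self _
  have E3 : ∫ ω, ((μtS ω - μt ω) / πt ω) * ind ω ∂P
      = ∫ ω, ((μtS ω - μt ω) / πt ω) * π ω ∂P := by
    refine integral_mul_condexp_eq P hm ((hμtS_meas.sub hμt_measL).div hπt_meas)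
      ((|BS| + (|BR| + |BS|)) / ε) (fun ω => ?_) hind_int hπ
    rw [Real.norm_eq_abs]
    refine abs_div_le' ?_ hε (hπt_pos ω)
    calc |μtS ω - μt ω| ≤ |μtS ω| + |μt ω| := abs_sub _ _
      _ ≤ |BS| + (|BR| + |BS|) := add_le_add ((hBS ω).trans (le_abs_self _)) (hμt_bdd ω)
  have E4 : ∫ ω, (-(μtS ω / πt ω)) * (ind ω * R ω) ∂P
      = ∫ ω, (-(μtS ω / πt ω)) * (Γ ω * π ω) ∂P := by
    refine integral_mul_condexp_eq P hm (hμtS_meas.div hπt_meas).neg (|BS| / ε)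
      (fun ω => ?_) hindR_int hΓ
    rw [Real.norm_eq_abs, abs_neg]
    exact abs_div_le' ((hBS ω).trans (le_abs_self _)) hε (hπt_pos ω)
  have E5 : ∫ ω, (-(μtS ω / (πt ω * ηt ω))) * (ind ω * S ω) ∂P
      = ∫ ω, (-(μtS ω / (πt ω * ηt ω))) * (H ω * (π ω - Γ ω * π ω)) ∂P := by
    refine integral_mul_condexp_eq P hm (hμtS_meas.div (hπt_meas.mul hηt_meas)).neg
      (|BS| / (ε*ε)) (fun ω => ?_) hindS_int hH5
    rw [Real.norm_eq_abs, abs_neg]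
    refine abs_div_le' ((hBS ω).trans (le_abs_self _)) (by positivity) ?_
    exact mul_le_mul (hπt_pos ω) (hηt_pos ω) (le_of_lt hε) (le_trans (le_of_lt hε) (hπt_pos ω))
  -- ambient-measurable versions
  have hπM : Measurable π := hπ_meas.mono hm le_rfl
  have hΓM : Measurable Γ := hΓ_meas.mono hm le_rfl
  have hHM : Measurable H := hH_meas.mono hm le_rfl
  have hπtM : Measurable πt := hπt_meas.mono hm le_rfl
  have hηtM : Measurable ηt := hηt_meas.mono hm le_rfl
  have hμtSM : Measurable μtS := hμtS_meas.mono hm le_rfl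
  have hμtM : Measurable μt := hμt_measL.mono hm le_rfl
  have hπA : AEStronglyMeasurable π P := hπM.aestronglyMeasurable
  have hΓA : AEStronglyMeasurable Γ P := hΓM.aestronglyMeasurable
  have hHA : AEStronglyMeasurable H P := hHM.aestronglyMeasurable
  have hμtSA : AEStronglyMeasurable μtS P := hμtSM.aestronglyMeasurable
  have hμtA : AEStronglyMeasurable μt P := hμtM.aestronglyMeasurable
  -- norm bounds for coefficients
  have hb1 : ∀ ω, ‖(πt ω)⁻¹‖ ≤ ε⁻¹ := by
    intro ω
    rw [Real.norm_eq_abs, abs_inv]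
    exact inv_anti₀ hε (le_trans (hπt_pos ω) (le_abs_self _))
  have hprodge : ∀ ω, ε * ε ≤ πt ω * ηt ω := fun ω =>
    mul_le_mul (hπt_pos ω) (hηt_pos ω) (le_of_lt hε) (le_trans (le_of_lt hε) (hπt_pos ω))
  have hb2 : ∀ ω, ‖(πt ω * ηt ω)⁻¹‖ ≤ (ε * ε)⁻¹ := by
    intro ω
    rw [Real.norm_eq_abs, abs_inv]
    exact inv_anti₀ (by positivity) (le_trans (hprodge ω) (le_abs_self _))
  have hb3 : ∀ ω, ‖(μtS ω - μt ω) / πt ω‖ ≤ (|BS| + (|BR| + |BS|)) / ε := by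
    intro ω
    rw [Real.norm_eq_abs]
    refine abs_div_le' ?_ hε (hπt_pos ω)
    calc |μtS ω - μt ω| ≤ |μtS ω| + |μt ω| := abs_sub _ _
      _ ≤ |BS| + (|BR| + |BS|) := add_le_add ((hBS ω).trans (le_abs_self _)) (hμt_bdd ω)
  have hb4 : ∀ ω, ‖-(μtS ω / πt ω)‖ ≤ |BS| / ε := by
    intro ω
    rw [Real.norm_eq_abs, abs_neg]
    exact abs_div_le' ((hBS ω).trans (le_abs_self _)) hε (hπt_pos ω)
  have hb5 : ∀ ω, ‖-(μtS ω / (πt ω * ηt ω))‖ ≤ |BS| / (ε * ε) := by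
    intro ω
    rw [Real.norm_eq_abs, abs_neg]
    exact abs_div_le' ((hBS ω).trans (le_abs_self _)) (by positivity) (hprodge ω)
  have h01abs : ∀ x : ℝ, 0 ≤ x → x ≤ 1 → |x| ≤ 1 := fun x h1 h2 => by
    rw [abs_of_nonneg h1]; exact h2
  have hbπ : ∀ ω, ‖π ω‖ ≤ 1 := fun ω => h01abs _ (hπ01 ω).1 (hπ01 ω).2
  have hbΓπ : ∀ ω, ‖Γ ω * π ω‖ ≤ 1 := by
    intro ω
    rw [Real.norm_eq_abs, abs_mul]
    calc |Γ ω| * |π ω| ≤ 1 * 1 := mul_le_mul (h01abs _ (hΓ01 ω).1 (hΓ01 ω).2)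
          (h01abs _ (hπ01 ω).1 (hπ01 ω).2) (abs_nonneg _) zero_le_one
      _ = 1 := one_mul 1
  have hbH1Γπ : ∀ ω, ‖H ω * ((1 - Γ ω) * π ω)‖ ≤ 1 := by
    intro ω
    rw [Real.norm_eq_abs, abs_mul, abs_mul]
    have e1 := h01abs _ (hH01 ω).1 (hH01 ω).2
    have e2 : |1 - Γ ω| ≤ 1 := h01abs _ (by linarith [(hΓ01 ω).2]) (by linarith [(hΓ01 ω).1])
    have e3 := h01abs _ (hπ01 ω).1 (hπ01 ω).2
    have h23 : |1 - Γ ω| * |π ω| ≤ 1 := mul_le_one₀ e2 (abs_nonneg _) e3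
    calc |H ω| * (|1 - Γ ω| * |π ω|) ≤ 1 * 1 :=
          mul_le_mul e1 h23 (by positivity) zero_le_one
      _ = 1 := one_mul 1
  have hbHπΓπ : ∀ ω, ‖H ω * (π ω - Γ ω * π ω)‖ ≤ 1 := by
    intro ω
    have : π ω - Γ ω * π ω = (1 - Γ ω) * π ω := by ring
    rw [this]
    exact hbH1Γπ ω
  -- integrability of the pieces
  have int0 : Integrable μt P := by
    have : Integrable (fun ω => μt ω * (1 : ℝ)) P :=
      (integrable_const (1:ℝ)).bdd_mul hμtA (c := |BR| + |BS|) (Filter.Eventually.of_forall fun ω => by rw [Real.norm_eq_abs]; exact hμt_bdd ω)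
    simpa using this
  have i1 : Integrable (fun ω => (πt ω)⁻¹ * (ind ω * R ω * Y ω)) P :=
    hindRY_int.bdd_mul (hπtM.inv.aestronglyMeasurable) (c := ε⁻¹) (Filter.Eventually.of_forall hb1)
  have i2 : Integrable (fun ω => (πt ω * ηt ω)⁻¹ * (ind ω * S ω * Y ω)) P :=
    hindSY_int.bdd_mul ((hπtM.mul hηtM).inv.aestronglyMeasurable) (c := (ε*ε)⁻¹) (Filter.Eventually.of_forall hb2)
  have i3 : Integrable (fun ω => ((μtS ω - μt ω) / πt ω) * ind ω) P :=
    hind_int.bdd_mul ((hμtSM.sub hμtM).div hπtM).aestronglyMeasurable (c := (|BS| + (|BR| + |BS|)) / ε) (Filter.Eventually.of_forall hb3)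
  have i4 : Integrable (fun ω => (-(μtS ω / πt ω)) * (ind ω * R ω)) P :=
    hindR_int.bdd_mul ((hμtSM.div hπtM).neg.aestronglyMeasurable) (c := |BS| / ε) (Filter.Eventually.of_forall hb4)
  have i5 : Integrable (fun ω => (-(μtS ω / (πt ω * ηt ω))) * (ind ω * S ω)) P :=
    hindS_int.bdd_mul ((hμtSM.div (hπtM.mul hηtM)).neg.aestronglyMeasurable) (c := |BS| / (ε*ε)) (Filter.Eventually.of_forall hb5)
  have g1'int : Integrable (fun ω => M_R ω * (Γ ω * π ω)) P := by
    have : Integrable (fun ω => (Γ ω * π ω) * M_R ω) P :=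
      hMR_int.bdd_mul (hΓA.mul hπA) (c := 1) (Filter.Eventually.of_forall hbΓπ)
    exact this.congr (Filter.Eventually.of_forall fun ω => by ring)
  have g2'int : Integrable (fun ω => M_S ω * (H ω * ((1 - Γ ω) * π ω))) P := by
    have : Integrable (fun ω => (H ω * ((1 - Γ ω) * π ω)) * M_S ω) P :=
      hMS_int.bdd_mul (hHA.mul ((aestronglyMeasurable_const.sub hΓA).mul hπA)) (c := 1) (Filter.Eventually.of_forall hbH1Γπ)
    exact this.congr (Filter.Eventually.of_forall fun ω => by ring)
  have gΓπ_int : Integrable (fun ω => Γ ω * π ω) P :=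
    hπ_int.bdd_mul hΓA (c := 1) (Filter.Eventually.of_forall fun ω => h01abs _ (hΓ01 ω).1 (hΓ01 ω).2)
  have g5'int : Integrable (fun ω => H ω * (π ω - Γ ω * π ω)) P := by
    have : Integrable (fun ω => H ω * (π ω - Γ ω * π ω) * (1:ℝ)) P :=
      (integrable_const (1:ℝ)).bdd_mul
        (hHA.mul (hπA.sub (hΓA.mul hπA))) (c := 1) (Filter.Eventually.of_forall hbHπΓπ)
    simpa using this
  have j1 : Integrable (fun ω => (πt ω)⁻¹ * (M_R ω * (Γ ω * π ω))) P :=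
    g1'int.bdd_mul (hπtM.inv.aestronglyMeasurable) (c := ε⁻¹) (Filter.Eventually.of_forall hb1)
  have j2 : Integrable (fun ω => (πt ω * ηt ω)⁻¹ * (M_S ω * (H ω * ((1 - Γ ω) * π ω)))) P :=
    g2'int.bdd_mul ((hπtM.mul hηtM).inv.aestronglyMeasurable) (c := (ε*ε)⁻¹) (Filter.Eventually.of_forall hb2)
  have j3 : Integrable (fun ω => ((μtS ω - μt ω) / πt ω) * π ω) P :=
    hπ_int.bdd_mul ((hμtSM.sub hμtM).div hπtM).aestronglyMeasurable (c := (|BS| + (|BR| + |BS|)) / ε) (Filter.Eventually.of_forall hb3)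
  have j4 : Integrable (fun ω => (-(μtS ω / πt ω)) * (Γ ω * π ω)) P :=
    gΓπ_int.bdd_mul ((hμtSM.div hπtM).neg.aestronglyMeasurable) (c := |BS| / ε) (Filter.Eventually.of_forall hb4)
  have j5 : Integrable (fun ω => (-(μtS ω / (πt ω * ηt ω))) * (H ω * (π ω - Γ ω * π ω))) P :=
    g5'int.bdd_mul ((hμtSM.div (hπtM.mul hηtM)).neg.aestronglyMeasurable) (c := |BS| / (ε*ε)) (Filter.Eventually.of_forall hb5)
  have hμ_int : Integrable μ P := by
    rw [hμdef]
    exact (hMR_int.bdd_mul hΓA (c := 1) (Filter.Eventually.of_forall fun ω => h01abs _ (hΓ01 ω).1 (hΓ01 ω).2)).add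
      (hMS_int.bdd_mul (aestronglyMeasurable_const.sub hΓA)
        (c := 1) (Filter.Eventually.of_forall fun ω => by
          rw [Real.norm_eq_abs]
          exact h01abs _ (by linarith [(hΓ01 ω).2]) (by linarith [(hΓ01 ω).1])))
  -- integrability of the RHS integrands
  have hbr1 : ∀ ω, ‖1 - π ω / πt ω‖ ≤ 1 + 1 / ε := by
    intro ω
    rw [Real.norm_eq_abs]
    calc |1 - π ω / πt ω| ≤ |1| + |π ω / πt ω| := abs_sub _ _
      _ ≤ 1 + 1 / ε := by
          rw [abs_one]
          exact add_le_add le_rfl (abs_div_le' (hbπ ω) hε (hπt_pos ω))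
  have hbr2 : ∀ ω, ‖(1 - Γ ω) * (π ω / πt ω) * (1 - H ω / ηt ω)‖ ≤ 1 * (1/ε) * (1 + 1/ε) := by
    intro ω
    rw [Real.norm_eq_abs, abs_mul, abs_mul]
    have e1 : |1 - Γ ω| ≤ 1 := by
      rw [abs_of_nonneg (by linarith [(hΓ01 ω).2])]; linarith [(hΓ01 ω).1]
    have e2 : |π ω / πt ω| ≤ 1/ε := abs_div_le' (hbπ ω) hε (hπt_pos ω)
    have e3 : |1 - H ω / ηt ω| ≤ 1 + 1/ε := by
      calc |1 - H ω / ηt ω| ≤ |1| + |H ω / ηt ω| := abs_sub _ _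
        _ ≤ 1 + 1/ε := by
            rw [abs_one]
            exact add_le_add le_rfl
              (abs_div_le' (h01abs _ (hH01 ω).1 (hH01 ω).2) hε (hηt_pos ω))
    calc |1 - Γ ω| * |π ω / πt ω| * |1 - H ω / ηt ω| ≤ 1 * (1/ε) * (1 + 1/ε) :=
          mul_le_mul (mul_le_mul e1 e2 (abs_nonneg _) zero_le_one) e3 (abs_nonneg _)
            (by positivity)
      _ = 1 * (1/ε) * (1 + 1/ε) := rfl
  have r1_int : Integrable (fun ω => (1 - π ω / πt ω) * (μt ω - μ ω)) P :=
    (int0.sub hμ_int).bdd_mul (measurable_const.sub (hπM.div hπtM)).aestronglyMeasurable (c := 1 + 1/ε) (Filter.Eventually.of_forall hbr1)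
  have r2_int : Integrable
      (fun ω => (1 - Γ ω) * (π ω / πt ω) * (1 - H ω / ηt ω) * (μtS ω - M_S ω)) P := by
    have hμtS_int : Integrable μtS P := by
      have : Integrable (fun ω => μtS ω * (1:ℝ)) P :=
        (integrable_const (1:ℝ)).bdd_mul hμtSA (c := |BS|) (Filter.Eventually.of_forall fun ω => by rw [Real.norm_eq_abs]; exact (hBS ω).trans (le_abs_self _))
      simpa using this
    exact (hμtS_int.sub hMS_int).bdd_mul
      ((((measurable_const.sub hΓM).mul (hπM.div hπtM)).mul
        (measurable_const.sub (hHM.div hηtM))).aestronglyMeasurable)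
      (c := 1 * (1/ε) * (1 + 1/ε)) (Filter.Eventually.of_forall hbr2)
  -- pointwise decomposition of the LHS integrand
  have hpt : ∀ ω, μt ω + (ind ω / πt ω) *
        ((R ω + S ω / ηt ω) * Y ω - μt ω + (1 - R ω) * (1 - S ω / ηt ω) * μtS ω)
      = μt ω + (πt ω)⁻¹ * (ind ω * R ω * Y ω) + (πt ω * ηt ω)⁻¹ * (ind ω * S ω * Y ω)
        + ((μtS ω - μt ω) / πt ω) * ind ω + (-(μtS ω / πt ω)) * (ind ω * R ω)
        + (-(μtS ω / (πt ω * ηt ω))) * (ind ω * S ω) := by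
    intro ω
    have h0 := hSR ω
    have h1 := hπt_ne ω
    have h2 := hηt_ne ω
    rcases hR01 ω with hr | hr <;> rcases hS01 ω with hs | hs <;>
      rw [hr, hs] at h0 ⊢ <;> [skip; skip; skip; norm_num at h0] <;> field_simp <;> ring
  have sL1 : ∫ ω, (μt ω + (πt ω)⁻¹ * (ind ω * R ω * Y ω)) ∂P
      = (∫ ω, (μt ω) ∂P) + ∫ ω, (πt ω)⁻¹ * (ind ω * R ω * Y ω) ∂P :=
    integral_add int0 i1
  have sL2 : ∫ ω, (μt ω + (πt ω)⁻¹ * (ind ω * R ω * Y ω) + (πt ω * ηt ω)⁻¹ * (ind ω * S ω * Y ω)) ∂P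
      = (∫ ω, (μt ω + (πt ω)⁻¹ * (ind ω * R ω * Y ω)) ∂P) + ∫ ω, (πt ω * ηt ω)⁻¹ * (ind ω * S ω * Y ω) ∂P :=
    integral_add (int0.add i1) i2
  have sL3 : ∫ ω, (μt ω + (πt ω)⁻¹ * (ind ω * R ω * Y ω) + (πt ω * ηt ω)⁻¹ * (ind ω * S ω * Y ω) + ((μtS ω - μt ω) / πt ω) * ind ω) ∂P
      = (∫ ω, (μt ω + (πt ω)⁻¹ * (ind ω * R ω * Y ω) + (πt ω * ηt ω)⁻¹ * (ind ω * S ω * Y ω)) ∂P) + ∫ ω, ((μtS ω - μt ω) / πt ω) * ind ω ∂P :=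
    integral_add ((int0.add i1).add i2) i3
  have sL4 : ∫ ω, (μt ω + (πt ω)⁻¹ * (ind ω * R ω * Y ω) + (πt ω * ηt ω)⁻¹ * (ind ω * S ω * Y ω) + ((μtS ω - μt ω) / πt ω) * ind ω + (-(μtS ω / πt ω)) * (ind ω * R ω)) ∂P
      = (∫ ω, (μt ω + (πt ω)⁻¹ * (ind ω * R ω * Y ω) + (πt ω * ηt ω)⁻¹ * (ind ω * S ω * Y ω) + ((μtS ω - μt ω) / πt ω) * ind ω) ∂P) + ∫ ω, (-(μtS ω / πt ω)) * (ind ω * R ω) ∂P :=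
    integral_add (((int0.add i1).add i2).add i3) i4
  have sL5 : ∫ ω, (μt ω + (πt ω)⁻¹ * (ind ω * R ω * Y ω) + (πt ω * ηt ω)⁻¹ * (ind ω * S ω * Y ω) + ((μtS ω - μt ω) / πt ω) * ind ω + (-(μtS ω / πt ω)) * (ind ω * R ω) + (-(μtS ω / (πt ω * ηt ω))) * (ind ω * S ω)) ∂P
      = (∫ ω, (μt ω + (πt ω)⁻¹ * (ind ω * R ω * Y ω) + (πt ω * ηt ω)⁻¹ * (ind ω * S ω * Y ω) + ((μtS ω - μt ω) / πt ω) * ind ω + (-(μtS ω / πt ω)) * (ind ω * R ω)) ∂P) + ∫ ω, (-(μtS ω / (πt ω * ηt ω))) * (ind ω * S ω) ∂P :=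
    integral_add ((((int0.add i1).add i2).add i3).add i4) i5
  have sLp1 : ∫ ω, (μt ω + (πt ω)⁻¹ * (M_R ω * (Γ ω * π ω))) ∂P
      = (∫ ω, (μt ω) ∂P) + ∫ ω, (πt ω)⁻¹ * (M_R ω * (Γ ω * π ω)) ∂P :=
    integral_add int0 j1
  have sLp2 : ∫ ω, (μt ω + (πt ω)⁻¹ * (M_R ω * (Γ ω * π ω)) + (πt ω * ηt ω)⁻¹ * (M_S ω * (H ω * ((1 - Γ ω) * π ω)))) ∂P
      = (∫ ω, (μt ω + (πt ω)⁻¹ * (M_R ω * (Γ ω * π ω))) ∂P) + ∫ ω, (πt ω * ηt ω)⁻¹ * (M_S ω * (H ω * ((1 - Γ ω) * π ω))) ∂P :=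
    integral_add (int0.add j1) j2
  have sLp3 : ∫ ω, (μt ω + (πt ω)⁻¹ * (M_R ω * (Γ ω * π ω)) + (πt ω * ηt ω)⁻¹ * (M_S ω * (H ω * ((1 - Γ ω) * π ω))) + ((μtS ω - μt ω) / πt ω) * π ω) ∂P
      = (∫ ω, (μt ω + (πt ω)⁻¹ * (M_R ω * (Γ ω * π ω)) + (πt ω * ηt ω)⁻¹ * (M_S ω * (H ω * ((1 - Γ ω) * π ω)))) ∂P) + ∫ ω, ((μtS ω - μt ω) / πt ω) * π ω ∂P :=
    integral_add ((int0.add j1).add j2) j3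
  have sLp4 : ∫ ω, (μt ω + (πt ω)⁻¹ * (M_R ω * (Γ ω * π ω)) + (πt ω * ηt ω)⁻¹ * (M_S ω * (H ω * ((1 - Γ ω) * π ω))) + ((μtS ω - μt ω) / πt ω) * π ω + (-(μtS ω / πt ω)) * (Γ ω * π ω)) ∂P
      = (∫ ω, (μt ω + (πt ω)⁻¹ * (M_R ω * (Γ ω * π ω)) + (πt ω * ηt ω)⁻¹ * (M_S ω * (H ω * ((1 - Γ ω) * π ω))) + ((μtS ω - μt ω) / πt ω) * π ω) ∂P) + ∫ ω, (-(μtS ω / πt ω)) * (Γ ω * π ω) ∂P :=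
    integral_add (((int0.add j1).add j2).add j3) j4
  have sLp5 : ∫ ω, (μt ω + (πt ω)⁻¹ * (M_R ω * (Γ ω * π ω)) + (πt ω * ηt ω)⁻¹ * (M_S ω * (H ω * ((1 - Γ ω) * π ω))) + ((μtS ω - μt ω) / πt ω) * π ω + (-(μtS ω / πt ω)) * (Γ ω * π ω) + (-(μtS ω / (πt ω * ηt ω))) * (H ω * (π ω - Γ ω * π ω))) ∂P
      = (∫ ω, (μt ω + (πt ω)⁻¹ * (M_R ω * (Γ ω * π ω)) + (πt ω * ηt ω)⁻¹ * (M_S ω * (H ω * ((1 - Γ ω) * π ω))) + ((μtS ω - μt ω) / πt ω) * π ω + (-(μtS ω / πt ω)) * (Γ ω * π ω)) ∂P) + ∫ ω, (-(μtS ω / (πt ω * ηt ω))) * (H ω * (π ω - Γ ω * π ω)) ∂P :=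
    integral_add ((((int0.add j1).add j2).add j3).add j4) j5
  -- split the LHS integral
  have splitL : ∫ ω, (μt ω + (πt ω)⁻¹ * (ind ω * R ω * Y ω)
        + (πt ω * ηt ω)⁻¹ * (ind ω * S ω * Y ω)
        + ((μtS ω - μt ω) / πt ω) * ind ω + (-(μtS ω / πt ω)) * (ind ω * R ω)
        + (-(μtS ω / (πt ω * ηt ω))) * (ind ω * S ω)) ∂P
      = (∫ ω, μt ω ∂P) + (∫ ω, (πt ω)⁻¹ * (ind ω * R ω * Y ω) ∂P)
        + (∫ ω, (πt ω * ηt ω)⁻¹ * (ind ω * S ω * Y ω) ∂P)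
        + (∫ ω, ((μtS ω - μt ω) / πt ω) * ind ω ∂P)
        + (∫ ω, (-(μtS ω / πt ω)) * (ind ω * R ω) ∂P)
        + (∫ ω, (-(μtS ω / (πt ω * ηt ω))) * (ind ω * S ω) ∂P) := by
    rw [sL5, sL4, sL3, sL2, sL1]
  have splitL' : ∫ ω, (μt ω + (πt ω)⁻¹ * (M_R ω * (Γ ω * π ω))
        + (πt ω * ηt ω)⁻¹ * (M_S ω * (H ω * ((1 - Γ ω) * π ω)))
        + ((μtS ω - μt ω) / πt ω) * π ω + (-(μtS ω / πt ω)) * (Γ ω * π ω)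
        + (-(μtS ω / (πt ω * ηt ω))) * (H ω * (π ω - Γ ω * π ω))) ∂P
      = (∫ ω, μt ω ∂P) + (∫ ω, (πt ω)⁻¹ * (M_R ω * (Γ ω * π ω)) ∂P)
        + (∫ ω, (πt ω * ηt ω)⁻¹ * (M_S ω * (H ω * ((1 - Γ ω) * π ω))) ∂P)
        + (∫ ω, ((μtS ω - μt ω) / πt ω) * π ω ∂P)
        + (∫ ω, (-(μtS ω / πt ω)) * (Γ ω * π ω) ∂P)
        + (∫ ω, (-(μtS ω / (πt ω * ηt ω))) * (H ω * (π ω - Γ ω * π ω)) ∂P) := by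
    rw [sLp5, sLp4, sLp3, sLp2, sLp1]
  have sum_int : Integrable (fun ω => μt ω + (πt ω)⁻¹ * (M_R ω * (Γ ω * π ω))
        + (πt ω * ηt ω)⁻¹ * (M_S ω * (H ω * ((1 - Γ ω) * π ω)))
        + ((μtS ω - μt ω) / πt ω) * π ω + (-(μtS ω / πt ω)) * (Γ ω * π ω)
        + (-(μtS ω / (πt ω * ηt ω))) * (H ω * (π ω - Γ ω * π ω))) P :=
    ((((int0.add j1).add j2).add j3).add j4).add j5
  -- final pointwise identity
  have hfinal : ∀ ω, (μt ω + (πt ω)⁻¹ * (M_R ω * (Γ ω * π ω))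
        + (πt ω * ηt ω)⁻¹ * (M_S ω * (H ω * ((1 - Γ ω) * π ω)))
        + ((μtS ω - μt ω) / πt ω) * π ω + (-(μtS ω / πt ω)) * (Γ ω * π ω)
        + (-(μtS ω / (πt ω * ηt ω))) * (H ω * (π ω - Γ ω * π ω))) - μ ω
      = (1 - π ω / πt ω) * (μt ω - μ ω)
        + (1 - Γ ω) * (π ω / πt ω) * (1 - H ω / ηt ω) * (μtS ω - M_S ω) := by
    intro ω
    have h1 := hπt_ne ω
    have h2 := hηt_ne ω
    rw [hμdef]
    field_simp
    ring
  calc ∫ ω, (μt ω + (ind ω / πt ω) *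
          ((R ω + S ω / ηt ω) * Y ω - μt ω + (1 - R ω) * (1 - S ω / ηt ω) * μtS ω)) ∂P
        - ∫ ω, μ ω ∂P
      = ((∫ ω, μt ω ∂P) + (∫ ω, (πt ω)⁻¹ * (ind ω * R ω * Y ω) ∂P)
          + (∫ ω, (πt ω * ηt ω)⁻¹ * (ind ω * S ω * Y ω) ∂P)
          + (∫ ω, ((μtS ω - μt ω) / πt ω) * ind ω ∂P)
          + (∫ ω, (-(μtS ω / πt ω)) * (ind ω * R ω) ∂P)
          + (∫ ω, (-(μtS ω / (πt ω * ηt ω))) * (ind ω * S ω) ∂P)) - ∫ ω, μ ω ∂P := by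
        rw [integral_congr_ae (Filter.Eventually.of_forall hpt), splitL]
    _ = ((∫ ω, μt ω ∂P) + (∫ ω, (πt ω)⁻¹ * (M_R ω * (Γ ω * π ω)) ∂P)
          + (∫ ω, (πt ω * ηt ω)⁻¹ * (M_S ω * (H ω * ((1 - Γ ω) * π ω))) ∂P)
          + (∫ ω, ((μtS ω - μt ω) / πt ω) * π ω ∂P)
          + (∫ ω, (-(μtS ω / πt ω)) * (Γ ω * π ω) ∂P)
          + (∫ ω, (-(μtS ω / (πt ω * ηt ω))) * (H ω * (π ω - Γ ω * π ω)) ∂P)) - ∫ ω, μ ω ∂P := by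
        rw [E1, E2, E3, E4, E5]
    _ = (∫ ω, (μt ω + (πt ω)⁻¹ * (M_R ω * (Γ ω * π ω))
          + (πt ω * ηt ω)⁻¹ * (M_S ω * (H ω * ((1 - Γ ω) * π ω)))
          + ((μtS ω - μt ω) / πt ω) * π ω + (-(μtS ω / πt ω)) * (Γ ω * π ω)
          + (-(μtS ω / (πt ω * ηt ω))) * (H ω * (π ω - Γ ω * π ω))) ∂P) - ∫ ω, μ ω ∂P := by
        rw [splitL']
    _ = ∫ ω, ((μt ω + (πt ω)⁻¹ * (M_R ω * (Γ ω * π ω))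
          + (πt ω * ηt ω)⁻¹ * (M_S ω * (H ω * ((1 - Γ ω) * π ω)))
          + ((μtS ω - μt ω) / πt ω) * π ω + (-(μtS ω / πt ω)) * (Γ ω * π ω)
          + (-(μtS ω / (πt ω * ηt ω))) * (H ω * (π ω - Γ ω * π ω))) - μ ω) ∂P :=
        (integral_sub sum_int hμ_int).symm
    _ = ∫ ω, ((1 - π ω / πt ω) * (μt ω - μ ω)
          + (1 - Γ ω) * (π ω / πt ω) * (1 - H ω / ηt ω) * (μtS ω - M_S ω)) ∂P :=
        integral_congr_ae (Filter.Eventually.of_forall hfinal)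
    _ = (∫ ω, (1 - π ω / πt ω) * (μt ω - μ ω) ∂P)
          + ∫ ω, (1 - Γ ω) * (π ω / πt ω) * (1 - H ω / ηt ω) * (μtS ω - M_S ω) ∂P :=
        integral_add r1_int r2_int
end

section
/- Triple robustness of the nonparametric estimator (section 3.1): in the setting of the product-error bias decomposition, the bias Bias_{τ_a}(P̃;P) := E[ μ̃ + (1{A=a}/π̃)·{ (R + S/η̃)·Y − μ̃ + (1−R)·(1 − S/η̃)·μ̃_S } ] − E[μ] equals zero if any one of the following holds almost everywhere: (i) μ̃_R = M_R, μ̃_S = M_S and γ̃ = Γ; (ii) μ̃_S = M_S and π̃ = π; or (iii) π̃ = π and η̃ = H. -/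
set_option maxHeartbeats 1000000


open MeasureTheory

/-- Key step: for an `m`-measurable `c` and integrable `f` whose conditional
expectation given `m` is `g`, the integral of `c * f` equals the integral of `c * g`. -/
lemma integral_mul_eq_integral_mul_condexp
    {Ω : Type*} {m m0 : MeasurableSpace Ω} (hm : m ≤ m0) (P : Measure Ω)
    [IsFiniteMeasure P] {c f g : Ω → ℝ}
    (hc : StronglyMeasurable[m] c) (hcf : Integrable (fun ω => c ω * f ω) P)
    (hf : Integrable f P) (hg : P[f | m] =ᵐ[P] g) :
    ∫ ω, c ω * f ω ∂P = ∫ ω, c ω * g ω ∂P := by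
  haveI : SigmaFinite (P.trim hm) := inferInstance
  have h1 : ∫ ω, c ω * f ω ∂P = ∫ ω, (P[(fun ω => c ω * f ω) | m]) ω ∂P :=
    (integral_condExp hm).symm
  have h2 : P[(fun ω => c ω * f ω) | m] =ᵐ[P] fun ω => c ω * g ω := by
    have := condExp_mul_of_stronglyMeasurable_left (μ := P) hc hcf hf
    refine this.trans ?_
    filter_upwards [hg] with ω hω
    simp [hω]
  rw [h1, integral_congr_ae h2]

/-- Triple robustness of the nonparametric estimator (section 3.1): the bias
`Bias_{τ_a}(P̃;P)` vanishes if (i) `μ̃_R = M_R`, `μ̃_S = M_S`, `γ̃ = Γ` a.e.; or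
(ii) `μ̃_S = M_S`, `π̃ = π` a.e.; or (iii) `π̃ = π`, `η̃ = H` a.e. -/
theorem triple_robustness_tau
    {Ω : Type*} [MeasurableSpace Ω] (P : Measure Ω) [IsProbabilityMeasure P]
    {d : ℕ} (L : Ω → (Fin d → ℝ)) (A R S Y : Ω → ℝ)
    (hL : Measurable L) (hA : Measurable A) (hR : Measurable R)
    (hS : Measurable S) (hY : Integrable Y P)
    (hA01 : ∀ ω, A ω = 0 ∨ A ω = 1)
    (hR01 : ∀ ω, R ω = 0 ∨ R ω = 1)
    (hS01 : ∀ ω, S ω = 0 ∨ S ω = 1)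
    (hSR : ∀ ω, S ω * R ω = 0)
    (a : ℝ) (ha : a = 0 ∨ a = 1)
    (𝓛 : MeasurableSpace Ω) (h𝓛 : 𝓛 = MeasurableSpace.comap L inferInstance)
    (ind : Ω → ℝ) (hind : ind = fun ω => if A ω = a then (1:ℝ) else 0)
    -- arm-a nuisance random variables
    (π Γ H M_R M_S : Ω → ℝ)
    (hπ_meas : Measurable[𝓛] π) (hπ_int : Integrable π P)
    (hΓ_meas : Measurable[𝓛] Γ) (hΓ_int : Integrable Γ P)
    (hH_meas : Measurable[𝓛] H) (hH_int : Integrable H P)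
    (hMR_meas : Measurable[𝓛] M_R) (hMR_int : Integrable M_R P)
    (hMS_meas : Measurable[𝓛] M_S) (hMS_int : Integrable M_S P)
    (hπ01 : ∀ ω, 0 ≤ π ω ∧ π ω ≤ 1)
    (hΓ01 : ∀ ω, 0 ≤ Γ ω ∧ Γ ω ≤ 1)
    (hH01 : ∀ ω, 0 ≤ H ω ∧ H ω ≤ 1)
    -- characterizations
    (hπ : P[ind | 𝓛] =ᵐ[P] π)
    (hΓ : P[fun ω => ind ω * R ω | 𝓛] =ᵐ[P] fun ω => Γ ω * π ω)
    (hH : P[fun ω => ind ω * S ω | 𝓛]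
      =ᵐ[P] fun ω => H ω * (P[fun ω' => ind ω' * (1 - R ω') | 𝓛]) ω)
    (hMR : P[fun ω => ind ω * R ω * Y ω | 𝓛] =ᵐ[P] fun ω => M_R ω * (Γ ω * π ω))
    (hMS : P[fun ω => ind ω * S ω * Y ω | 𝓛]
      =ᵐ[P] fun ω => M_S ω * (H ω * ((1 - Γ ω) * π ω)))
    -- true outcome regression μ
    (μ : Ω → ℝ) (hμdef : μ = fun ω => Γ ω * M_R ω + (1 - Γ ω) * M_S ω)
    -- positivity of true nuisances
    (ε : ℝ) (hε : 0 < ε)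
    (hπpos : ∀ᵐ ω ∂P, ε ≤ π ω)
    (hHpos : ∀ᵐ ω ∂P, ε ≤ H ω)
    -- candidate (possibly misspecified) nuisances
    (πt ηt γt μtR μtS : Ω → ℝ)
    (hπt_meas : Measurable[𝓛] πt) (hηt_meas : Measurable[𝓛] ηt)
    (hγt_meas : Measurable[𝓛] γt) (hμtR_meas : Measurable[𝓛] μtR)
    (hμtS_meas : Measurable[𝓛] μtS)
    (hπt_bdd : ∃ B, ∀ ω, |πt ω| ≤ B) (hηt_bdd : ∃ B, ∀ ω, |ηt ω| ≤ B)
    (hμtR_bdd : ∃ B, ∀ ω, |μtR ω| ≤ B) (hμtS_bdd : ∃ B, ∀ ω, |μtS ω| ≤ B)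
    (hπt_pos : ∀ ω, ε ≤ πt ω) (hηt_pos : ∀ ω, ε ≤ ηt ω)
    (hγt01 : ∀ ω, 0 ≤ γt ω ∧ γt ω ≤ 1)
    (μt : Ω → ℝ) (hμtdef : μt = fun ω => γt ω * μtR ω + (1 - γt ω) * μtS ω)
    -- any one of the three robustness conditions
    (hrob : (μtR =ᵐ[P] M_R ∧ μtS =ᵐ[P] M_S ∧ γt =ᵐ[P] Γ)
      ∨ (μtS =ᵐ[P] M_S ∧ πt =ᵐ[P] π)
      ∨ (πt =ᵐ[P] π ∧ ηt =ᵐ[P] H)) :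
    ∫ ω, (μt ω + (ind ω / πt ω) *
        ((R ω + S ω / ηt ω) * Y ω - μt ω
          + (1 - R ω) * (1 - S ω / ηt ω) * μtS ω)) ∂P
      - ∫ ω, μ ω ∂P = 0 := by
  -- name the ambient measurable-space instance (shadowed by 𝓛 in TC search)
  rename_i mΩ _
  have hm : 𝓛 ≤ mΩ := by rw [h𝓛]; exact hL.comap_le
  obtain ⟨BR0, hBR0⟩ := hμtR_bdd
  obtain ⟨BS0, hBS0⟩ := hμtS_bdd
  obtain ⟨BR, hBR, hBRpos⟩ : ∃ B, (∀ ω, |μtR ω| ≤ B) ∧ 0 ≤ B :=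
    ⟨max BR0 0, fun ω => (hBR0 ω).trans (le_max_left _ _), le_max_right _ _⟩
  obtain ⟨BS, hBS, hBSpos⟩ : ∃ B, (∀ ω, |μtS ω| ≤ B) ∧ 0 ≤ B :=
    ⟨max BS0 0, fun ω => (hBS0 ω).trans (le_max_left _ _), le_max_right _ _⟩
  -- pointwise nonvanishing of candidate propensities
  have hπt0 : ∀ ω, πt ω ≠ 0 := fun ω => ne_of_gt (lt_of_lt_of_le hε (hπt_pos ω))
  have hηt0 : ∀ ω, ηt ω ≠ 0 := fun ω => ne_of_gt (lt_of_lt_of_le hε (hηt_pos ω))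
  -- boundedness of the elementary indicators
  have hindb : ∀ ω, |ind ω| ≤ 1 := by
    intro ω; rw [hind]; dsimp only; split_ifs <;> simp
  have hRb : ∀ ω, |R ω| ≤ 1 := fun ω => by rcases hR01 ω with h | h <;> simp [h]
  have hSb : ∀ ω, |S ω| ≤ 1 := fun ω => by rcases hS01 ω with h | h <;> simp [h]
  -- measurability of ind
  have hind_meas : Measurable[mΩ] ind := by
    rw [hind]; exact Measurable.ite (hA (measurableSet_singleton a)) measurable_const
      measurable_const
  -- measurability of μt with respect to 𝓛
  have hμt_meas : Measurable[𝓛] μt := by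
    rw [hμtdef]
    exact (hγt_meas.mul hμtR_meas).add ((measurable_const.sub hγt_meas).mul hμtS_meas)
  -- bound for μt
  have hμtb : ∀ ω, |μt ω| ≤ BR + BS := by
    intro ω
    rw [hμtdef]; dsimp only
    obtain ⟨hg0, hg1⟩ := hγt01 ω
    have h5 := abs_le.mp (hBR ω)
    have h6 := abs_le.mp (hBS ω)
    rw [abs_le]
    constructor <;>
      nlinarith [mul_le_mul_of_nonneg_left h5.2 hg0, mul_le_mul_of_nonneg_left h5.1 hg0,
        mul_le_mul_of_nonneg_left h6.2 (by linarith : (0:ℝ) ≤ 1 - γt ω),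
        mul_le_mul_of_nonneg_left h6.1 (by linarith : (0:ℝ) ≤ 1 - γt ω),
        mul_le_mul_of_nonneg_right hg1 hBRpos, mul_le_mul_of_nonneg_right hg1 hBSpos]
  -- generic integrability helpers
  have intBdd : ∀ (f : Ω → ℝ), Measurable[mΩ] f → (∃ C, ∀ ω, |f ω| ≤ C) → Integrable f P := by
    rintro f hf ⟨C, hC⟩
    exact Integrable.mono' (integrable_const C) hf.aestronglyMeasurable
      (Filter.Eventually.of_forall fun ω => by simpa using hC ω)
  have mulInt : ∀ (c f : Ω → ℝ), Measurable[mΩ] c → (∃ C, ∀ ω, |c ω| ≤ C) → Integrable f P →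
      Integrable (fun ω => c ω * f ω) P := by
    rintro c f hc ⟨C, hC⟩ hf
    exact hf.bdd_mul (c := C) hc.aestronglyMeasurable (Filter.Eventually.of_forall fun ω => by simpa using hC ω)
  -- bounds for the 𝓛-measurable multipliers
  have habsπt : ∀ ω, |πt ω| = πt ω := fun ω =>
    abs_of_pos (lt_of_lt_of_le hε (hπt_pos ω))
  have habsηt : ∀ ω, |ηt ω| = ηt ω := fun ω =>
    abs_of_pos (lt_of_lt_of_le hε (hηt_pos ω))
  have hdivb : ∀ (x : ℝ) (C : ℝ), |x| ≤ C → ∀ ω, |x / πt ω| ≤ C / ε := by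
    intro x C hx ω
    rw [abs_div, habsπt ω]
    exact div_le_div₀ ((abs_nonneg x).trans hx) hx hε (hπt_pos ω)
  have hdivb2 : ∀ (x : ℝ) (C : ℝ), |x| ≤ C → ∀ ω, |x / (πt ω * ηt ω)| ≤ C / (ε * ε) := by
    intro x C hx ω
    rw [abs_div, abs_mul, habsπt ω, habsηt ω]
    exact div_le_div₀ ((abs_nonneg x).trans hx) hx (mul_pos hε hε)
      (mul_le_mul (hπt_pos ω) (hηt_pos ω) hε.le (hε.le.trans (hπt_pos ω)))
  -- the five 𝓛-measurable multipliers
  have hc1m : Measurable[𝓛] fun ω => 1 / πt ω := measurable_const.div hπt_meas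
  have hc2m : Measurable[𝓛] fun ω => 1 / (πt ω * ηt ω) :=
    measurable_const.div (hπt_meas.mul hηt_meas)
  have hc3m : Measurable[𝓛] fun ω => (μtS ω - μt ω) / πt ω :=
    (hμtS_meas.sub hμt_meas).div hπt_meas
  have hc4m : Measurable[𝓛] fun ω => -μtS ω / πt ω := hμtS_meas.neg.div hπt_meas
  have hc5m : Measurable[𝓛] fun ω => -μtS ω / (πt ω * ηt ω) :=
    hμtS_meas.neg.div (hπt_meas.mul hηt_meas)
  have hc1b : ∃ C, ∀ ω, |1 / πt ω| ≤ C := ⟨1 / ε, fun ω => hdivb 1 1 (by simp) ω⟩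
  have hc2b : ∃ C, ∀ ω, |1 / (πt ω * ηt ω)| ≤ C :=
    ⟨1 / (ε * ε), fun ω => hdivb2 1 1 (by simp) ω⟩
  have hc3b : ∃ C, ∀ ω, |(μtS ω - μt ω) / πt ω| ≤ C := by
    refine ⟨(BS + (BR + BS)) / ε, fun ω => hdivb _ _ ?_ ω⟩
    exact (abs_sub _ _).trans (add_le_add (hBS ω) (hμtb ω))
  have hc4b : ∃ C, ∀ ω, |-μtS ω / πt ω| ≤ C :=
    ⟨BS / ε, fun ω => hdivb _ _ (by rw [abs_neg]; exact hBS ω) ω⟩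
  have hc5b : ∃ C, ∀ ω, |-μtS ω / (πt ω * ηt ω)| ≤ C :=
    ⟨BS / (ε * ε), fun ω => hdivb2 _ _ (by rw [abs_neg]; exact hBS ω) ω⟩
  -- integrability of the base random variables
  have hfind : Integrable ind P := intBdd ind hind_meas ⟨1, hindb⟩
  have hfIR : Integrable (fun ω => ind ω * R ω) P :=
    intBdd _ (hind_meas.mul hR) ⟨1, fun ω => by
      rw [abs_mul]; exact mul_le_one₀ (hindb ω) (abs_nonneg _) (hRb ω)⟩
  have hfIS : Integrable (fun ω => ind ω * S ω) P :=
    intBdd _ (hind_meas.mul hS) ⟨1, fun ω => by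
      rw [abs_mul]; exact mul_le_one₀ (hindb ω) (abs_nonneg _) (hSb ω)⟩
  have hf1 : Integrable (fun ω => ind ω * R ω * Y ω) P :=
    hY.bdd_mul (c := 1) (hind_meas.mul hR).aestronglyMeasurable (Filter.Eventually.of_forall fun ω => by
      simp only [Real.norm_eq_abs, abs_mul]
      exact mul_le_one₀ (hindb ω) (abs_nonneg _) (hRb ω))
  have hf2 : Integrable (fun ω => ind ω * S ω * Y ω) P :=
    hY.bdd_mul (c := 1) (hind_meas.mul hS).aestronglyMeasurable (Filter.Eventually.of_forall fun ω => by
      simp only [Real.norm_eq_abs, abs_mul]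
      exact mul_le_one₀ (hindb ω) (abs_nonneg _) (hSb ω))
  -- bounds for Γ, π, H used for the conditional-mean targets
  have hΓb : ∀ ω, |Γ ω| ≤ 1 := fun ω => abs_le.mpr ⟨by linarith [(hΓ01 ω).1], (hΓ01 ω).2⟩
  have hπb : ∀ ω, |π ω| ≤ 1 := fun ω => abs_le.mpr ⟨by linarith [(hπ01 ω).1], (hπ01 ω).2⟩
  have hHb : ∀ ω, |H ω| ≤ 1 := fun ω => abs_le.mpr ⟨by linarith [(hH01 ω).1], (hH01 ω).2⟩
  have hΓπb : ∀ ω, |Γ ω * π ω| ≤ 1 := fun ω => by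
    rw [abs_mul]; exact mul_le_one₀ (hΓb ω) (abs_nonneg _) (hπb ω)
  have h1Γπb : ∀ ω, |(1 - Γ ω) * π ω| ≤ 1 := fun ω => by
    rw [abs_mul]
    refine mul_le_one₀ (abs_le.mpr ⟨by linarith [(hΓ01 ω).2], by linarith [(hΓ01 ω).1]⟩)
      (abs_nonneg _) (hπb ω)
  have hH1Γπb : ∀ ω, |H ω * ((1 - Γ ω) * π ω)| ≤ 1 := fun ω => by
    rw [abs_mul]; exact mul_le_one₀ (hHb ω) (abs_nonneg _) (h1Γπb ω)
  -- measurability (ambient) of the conditional-mean targets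
  have hΓπ_meas : Measurable[mΩ] fun ω => Γ ω * π ω :=
    ((hΓ_meas.mul hπ_meas).mono hm le_rfl)
  have hH1Γπ_meas : Measurable[mΩ] fun ω => H ω * ((1 - Γ ω) * π ω) :=
    ((hH_meas.mul ((measurable_const.sub hΓ_meas).mul hπ_meas)).mono hm le_rfl)
  -- integrability of the conditional-mean targets
  have hg1 : Integrable (fun ω => M_R ω * (Γ ω * π ω)) P :=
    (mulInt _ M_R hΓπ_meas ⟨1, hΓπb⟩ hMR_int).congr
      (Filter.Eventually.of_forall fun ω => mul_comm _ _)
  have hg2 : Integrable (fun ω => M_S ω * (H ω * ((1 - Γ ω) * π ω))) P :=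
    (mulInt _ M_S hH1Γπ_meas ⟨1, hH1Γπb⟩ hMS_int).congr
      (Filter.Eventually.of_forall fun ω => mul_comm _ _)
  have hg4 : Integrable (fun ω => Γ ω * π ω) P := intBdd _ hΓπ_meas ⟨1, hΓπb⟩
  have hg5 : Integrable (fun ω => H ω * ((1 - Γ ω) * π ω)) P :=
    intBdd _ hH1Γπ_meas ⟨1, hH1Γπb⟩
  -- conditional expectation of ind·S in closed form
  have h1R : P[fun ω' => ind ω' * (1 - R ω') | 𝓛] =ᵐ[P] fun ω => (1 - Γ ω) * π ω := by
    have heq : (fun ω' => ind ω' * (1 - R ω')) = ind - fun ω' => ind ω' * R ω' :=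
      funext fun ω => by
        show ind ω * (1 - R ω) = ind ω - ind ω * R ω; ring
    rw [heq]
    refine (condExp_sub hfind hfIR 𝓛).trans ?_
    filter_upwards [hπ, hΓ] with ω h1 h2
    rw [Pi.sub_apply, h1, h2]; ring
  have hH' : P[fun ω => ind ω * S ω | 𝓛] =ᵐ[P] fun ω => H ω * ((1 - Γ ω) * π ω) := by
    refine hH.trans ?_
    filter_upwards [h1R] with ω h
    rw [h]
  -- ambient measurability of the multipliers
  have hc1m' : Measurable[mΩ] fun ω => 1 / πt ω := hc1m.mono hm le_rfl
  have hc2m' : Measurable[mΩ] fun ω => 1 / (πt ω * ηt ω) := hc2m.mono hm le_rfl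
  have hc3m' : Measurable[mΩ] fun ω => (μtS ω - μt ω) / πt ω := hc3m.mono hm le_rfl
  have hc4m' : Measurable[mΩ] fun ω => -μtS ω / πt ω := hc4m.mono hm le_rfl
  have hc5m' : Measurable[mΩ] fun ω => -μtS ω / (πt ω * ηt ω) := hc5m.mono hm le_rfl
  -- integrability of each product term (left: with base r.v.'s; right: with targets)
  have hi1 : Integrable (fun ω => (1 / πt ω) * (ind ω * R ω * Y ω)) P :=
    mulInt _ _ hc1m' hc1b hf1
  have hi2 : Integrable (fun ω => (1 / (πt ω * ηt ω)) * (ind ω * S ω * Y ω)) P :=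
    mulInt _ _ hc2m' hc2b hf2
  have hi3 : Integrable (fun ω => ((μtS ω - μt ω) / πt ω) * ind ω) P :=
    mulInt _ _ hc3m' hc3b hfind
  have hi4 : Integrable (fun ω => (-μtS ω / πt ω) * (ind ω * R ω)) P :=
    mulInt _ _ hc4m' hc4b hfIR
  have hi5 : Integrable (fun ω => (-μtS ω / (πt ω * ηt ω)) * (ind ω * S ω)) P :=
    mulInt _ _ hc5m' hc5b hfIS
  have hj1 : Integrable (fun ω => (1 / πt ω) * (M_R ω * (Γ ω * π ω))) P :=
    mulInt _ _ hc1m' hc1b hg1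
  have hj2 : Integrable
      (fun ω => (1 / (πt ω * ηt ω)) * (M_S ω * (H ω * ((1 - Γ ω) * π ω)))) P :=
    mulInt _ _ hc2m' hc2b hg2
  have hj3 : Integrable (fun ω => ((μtS ω - μt ω) / πt ω) * π ω) P :=
    mulInt _ _ hc3m' hc3b hπ_int
  have hj4 : Integrable (fun ω => (-μtS ω / πt ω) * (Γ ω * π ω)) P :=
    mulInt _ _ hc4m' hc4b hg4
  have hj5 : Integrable (fun ω => (-μtS ω / (πt ω * ηt ω)) * (H ω * ((1 - Γ ω) * π ω))) P :=
    mulInt _ _ hc5m' hc5b hg5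
  have hμt_int : Integrable μt P := intBdd μt (hμt_meas.mono hm le_rfl) ⟨BR + BS, hμtb⟩
  -- step 1: algebraic decomposition of the integrand
  have step1 : ∫ ω, (μt ω + (ind ω / πt ω) *
        ((R ω + S ω / ηt ω) * Y ω - μt ω
          + (1 - R ω) * (1 - S ω / ηt ω) * μtS ω)) ∂P
      = ∫ ω, (μt ω + ((1 / πt ω) * (ind ω * R ω * Y ω)
          + ((1 / (πt ω * ηt ω)) * (ind ω * S ω * Y ω)
          + (((μtS ω - μt ω) / πt ω) * ind ω
          + ((-μtS ω / πt ω) * (ind ω * R ω)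
          + (-μtS ω / (πt ω * ηt ω)) * (ind ω * S ω)))))) ∂P := by
    refine integral_congr_ae (Filter.Eventually.of_forall fun ω => ?_)
    have hp := hπt0 ω
    have hq := hηt0 ω
    dsimp only
    rcases hR01 ω with h | h
    · rw [h]; field_simp; ring
    · have hS0 : S ω = 0 := by have := hSR ω; rwa [h, mul_one] at this
      rw [h, hS0]; field_simp; ring
  rw [step1]
  -- step 2: split the integral into six pieces
  have s45 : Integrable (fun ω => (-μtS ω / πt ω) * (ind ω * R ω) + (-μtS ω / (πt ω * ηt ω)) * (ind ω * S ω)) P := hi4.add hi5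
  have s345 : Integrable (fun ω => ((μtS ω - μt ω) / πt ω) * ind ω + ((-μtS ω / πt ω) * (ind ω * R ω) + (-μtS ω / (πt ω * ηt ω)) * (ind ω * S ω))) P := hi3.add s45
  have s2345 : Integrable (fun ω => (1 / (πt ω * ηt ω)) * (ind ω * S ω * Y ω) + (((μtS ω - μt ω) / πt ω) * ind ω + ((-μtS ω / πt ω) * (ind ω * R ω) + (-μtS ω / (πt ω * ηt ω)) * (ind ω * S ω)))) P := hi2.add s345
  have s12345 : Integrable (fun ω => (1 / πt ω) * (ind ω * R ω * Y ω) + ((1 / (πt ω * ηt ω)) * (ind ω * S ω * Y ω) + (((μtS ω - μt ω) / πt ω) * ind ω + ((-μtS ω / πt ω) * (ind ω * R ω) + (-μtS ω / (πt ω * ηt ω)) * (ind ω * S ω))))) P := hi1.add s2345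
  have st1 : ∫ ω, (μt ω + ((1 / πt ω) * (ind ω * R ω * Y ω) + ((1 / (πt ω * ηt ω)) * (ind ω * S ω * Y ω) + (((μtS ω - μt ω) / πt ω) * ind ω + ((-μtS ω / πt ω) * (ind ω * R ω) + (-μtS ω / (πt ω * ηt ω)) * (ind ω * S ω)))))) ∂P
      = (∫ ω, μt ω ∂P) + ∫ ω, (1 / πt ω) * (ind ω * R ω * Y ω) + ((1 / (πt ω * ηt ω)) * (ind ω * S ω * Y ω) + (((μtS ω - μt ω) / πt ω) * ind ω + ((-μtS ω / πt ω) * (ind ω * R ω) + (-μtS ω / (πt ω * ηt ω)) * (ind ω * S ω)))) ∂P :=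
    integral_add hμt_int s12345
  have st2 : ∫ ω, (1 / πt ω) * (ind ω * R ω * Y ω) + ((1 / (πt ω * ηt ω)) * (ind ω * S ω * Y ω) + (((μtS ω - μt ω) / πt ω) * ind ω + ((-μtS ω / πt ω) * (ind ω * R ω) + (-μtS ω / (πt ω * ηt ω)) * (ind ω * S ω)))) ∂P
      = ∫ ω, (1 / πt ω) * (ind ω * R ω * Y ω) ∂P + ∫ ω, (1 / (πt ω * ηt ω)) * (ind ω * S ω * Y ω) + (((μtS ω - μt ω) / πt ω) * ind ω + ((-μtS ω / πt ω) * (ind ω * R ω) + (-μtS ω / (πt ω * ηt ω)) * (ind ω * S ω))) ∂P := integral_add hi1 s2345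
  have st3 : ∫ ω, (1 / (πt ω * ηt ω)) * (ind ω * S ω * Y ω) + (((μtS ω - μt ω) / πt ω) * ind ω + ((-μtS ω / πt ω) * (ind ω * R ω) + (-μtS ω / (πt ω * ηt ω)) * (ind ω * S ω))) ∂P
      = ∫ ω, (1 / (πt ω * ηt ω)) * (ind ω * S ω * Y ω) ∂P + ∫ ω, ((μtS ω - μt ω) / πt ω) * ind ω + ((-μtS ω / πt ω) * (ind ω * R ω) + (-μtS ω / (πt ω * ηt ω)) * (ind ω * S ω)) ∂P := integral_add hi2 s345
  have st4 : ∫ ω, ((μtS ω - μt ω) / πt ω) * ind ω + ((-μtS ω / πt ω) * (ind ω * R ω) + (-μtS ω / (πt ω * ηt ω)) * (ind ω * S ω)) ∂P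
      = ∫ ω, ((μtS ω - μt ω) / πt ω) * ind ω ∂P + ∫ ω, (-μtS ω / πt ω) * (ind ω * R ω) + (-μtS ω / (πt ω * ηt ω)) * (ind ω * S ω) ∂P := integral_add hi3 s45
  have st5 : ∫ ω, (-μtS ω / πt ω) * (ind ω * R ω) + (-μtS ω / (πt ω * ηt ω)) * (ind ω * S ω) ∂P = ∫ ω, (-μtS ω / πt ω) * (ind ω * R ω) ∂P + ∫ ω, (-μtS ω / (πt ω * ηt ω)) * (ind ω * S ω) ∂P := integral_add hi4 hi5
  rw [st1, st2, st3, st4, st5]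
  -- replace each piece by its conditional mean
  have e1 : ∫ ω, (1 / πt ω) * (ind ω * R ω * Y ω) ∂P = ∫ ω, (1 / πt ω) * (M_R ω * (Γ ω * π ω)) ∂P :=
    integral_mul_eq_integral_mul_condexp hm P hc1m.stronglyMeasurable hi1 hf1 hMR
  have e2 : ∫ ω, (1 / (πt ω * ηt ω)) * (ind ω * S ω * Y ω) ∂P = ∫ ω, (1 / (πt ω * ηt ω)) * (M_S ω * (H ω * ((1 - Γ ω) * π ω))) ∂P :=
    integral_mul_eq_integral_mul_condexp hm P hc2m.stronglyMeasurable hi2 hf2 hMS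
  have e3 : ∫ ω, ((μtS ω - μt ω) / πt ω) * ind ω ∂P = ∫ ω, ((μtS ω - μt ω) / πt ω) * π ω ∂P :=
    integral_mul_eq_integral_mul_condexp hm P hc3m.stronglyMeasurable hi3 hfind hπ
  have e4 : ∫ ω, (-μtS ω / πt ω) * (ind ω * R ω) ∂P = ∫ ω, (-μtS ω / πt ω) * (Γ ω * π ω) ∂P :=
    integral_mul_eq_integral_mul_condexp hm P hc4m.stronglyMeasurable hi4 hfIR hΓ
  have e5 : ∫ ω, (-μtS ω / (πt ω * ηt ω)) * (ind ω * S ω) ∂P = ∫ ω, (-μtS ω / (πt ω * ηt ω)) * (H ω * ((1 - Γ ω) * π ω)) ∂P :=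
    integral_mul_eq_integral_mul_condexp hm P hc5m.stronglyMeasurable hi5 hfIS hH'
  rw [e1, e2, e3, e4, e5]
  -- step 3: reassemble into a single integral
  have t45 : Integrable (fun ω => (-μtS ω / πt ω) * (Γ ω * π ω) + (-μtS ω / (πt ω * ηt ω)) * (H ω * ((1 - Γ ω) * π ω))) P := hj4.add hj5
  have t345 : Integrable (fun ω => ((μtS ω - μt ω) / πt ω) * π ω + ((-μtS ω / πt ω) * (Γ ω * π ω) + (-μtS ω / (πt ω * ηt ω)) * (H ω * ((1 - Γ ω) * π ω)))) P := hj3.add t45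
  have t2345 : Integrable (fun ω => (1 / (πt ω * ηt ω)) * (M_S ω * (H ω * ((1 - Γ ω) * π ω))) + (((μtS ω - μt ω) / πt ω) * π ω + ((-μtS ω / πt ω) * (Γ ω * π ω) + (-μtS ω / (πt ω * ηt ω)) * (H ω * ((1 - Γ ω) * π ω))))) P := hj2.add t345
  have t12345 : Integrable (fun ω => (1 / πt ω) * (M_R ω * (Γ ω * π ω)) + ((1 / (πt ω * ηt ω)) * (M_S ω * (H ω * ((1 - Γ ω) * π ω))) + (((μtS ω - μt ω) / πt ω) * π ω + ((-μtS ω / πt ω) * (Γ ω * π ω) + (-μtS ω / (πt ω * ηt ω)) * (H ω * ((1 - Γ ω) * π ω)))))) P :=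
    hj1.add t2345
  have u5 : ∫ ω, (-μtS ω / πt ω) * (Γ ω * π ω) + (-μtS ω / (πt ω * ηt ω)) * (H ω * ((1 - Γ ω) * π ω)) ∂P = ∫ ω, (-μtS ω / πt ω) * (Γ ω * π ω) ∂P + ∫ ω, (-μtS ω / (πt ω * ηt ω)) * (H ω * ((1 - Γ ω) * π ω)) ∂P := integral_add hj4 hj5
  have u4 : ∫ ω, ((μtS ω - μt ω) / πt ω) * π ω + ((-μtS ω / πt ω) * (Γ ω * π ω) + (-μtS ω / (πt ω * ηt ω)) * (H ω * ((1 - Γ ω) * π ω))) ∂P = ∫ ω, ((μtS ω - μt ω) / πt ω) * π ω ∂P + ∫ ω, (-μtS ω / πt ω) * (Γ ω * π ω) + (-μtS ω / (πt ω * ηt ω)) * (H ω * ((1 - Γ ω) * π ω)) ∂P :=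
    integral_add hj3 t45
  have u3 : ∫ ω, (1 / (πt ω * ηt ω)) * (M_S ω * (H ω * ((1 - Γ ω) * π ω))) + (((μtS ω - μt ω) / πt ω) * π ω + ((-μtS ω / πt ω) * (Γ ω * π ω) + (-μtS ω / (πt ω * ηt ω)) * (H ω * ((1 - Γ ω) * π ω)))) ∂P = ∫ ω, (1 / (πt ω * ηt ω)) * (M_S ω * (H ω * ((1 - Γ ω) * π ω))) ∂P + ∫ ω, ((μtS ω - μt ω) / πt ω) * π ω + ((-μtS ω / πt ω) * (Γ ω * π ω) + (-μtS ω / (πt ω * ηt ω)) * (H ω * ((1 - Γ ω) * π ω))) ∂P :=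
    integral_add hj2 t345
  have u2 : ∫ ω, (1 / πt ω) * (M_R ω * (Γ ω * π ω)) + ((1 / (πt ω * ηt ω)) * (M_S ω * (H ω * ((1 - Γ ω) * π ω))) + (((μtS ω - μt ω) / πt ω) * π ω + ((-μtS ω / πt ω) * (Γ ω * π ω) + (-μtS ω / (πt ω * ηt ω)) * (H ω * ((1 - Γ ω) * π ω))))) ∂P
      = ∫ ω, (1 / πt ω) * (M_R ω * (Γ ω * π ω)) ∂P + ∫ ω, (1 / (πt ω * ηt ω)) * (M_S ω * (H ω * ((1 - Γ ω) * π ω))) + (((μtS ω - μt ω) / πt ω) * π ω + ((-μtS ω / πt ω) * (Γ ω * π ω) + (-μtS ω / (πt ω * ηt ω)) * (H ω * ((1 - Γ ω) * π ω)))) ∂P := integral_add hj1 t2345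
  have u1 : ∫ ω, (μt ω + ((1 / πt ω) * (M_R ω * (Γ ω * π ω)) + ((1 / (πt ω * ηt ω)) * (M_S ω * (H ω * ((1 - Γ ω) * π ω))) + (((μtS ω - μt ω) / πt ω) * π ω + ((-μtS ω / πt ω) * (Γ ω * π ω) + (-μtS ω / (πt ω * ηt ω)) * (H ω * ((1 - Γ ω) * π ω))))))) ∂P
      = (∫ ω, μt ω ∂P) + ∫ ω, (1 / πt ω) * (M_R ω * (Γ ω * π ω)) + ((1 / (πt ω * ηt ω)) * (M_S ω * (H ω * ((1 - Γ ω) * π ω))) + (((μtS ω - μt ω) / πt ω) * π ω + ((-μtS ω / πt ω) * (Γ ω * π ω) + (-μtS ω / (πt ω * ηt ω)) * (H ω * ((1 - Γ ω) * π ω))))) ∂P :=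
    integral_add hμt_int t12345
  rw [← u5, ← u4, ← u3, ← u2, ← u1]
  -- step 4: the integrand now equals μ almost everywhere
  rw [sub_eq_zero]
  refine integral_congr_ae ?_
  rcases hrob with ⟨hr1, hr2, hr3⟩ | ⟨hr1, hr2⟩ | ⟨hr1, hr2⟩
  · filter_upwards [hr1, hr2, hr3] with ω e1 e2 e3
    have hp := hπt0 ω
    have hq := hηt0 ω
    rw [hμtdef, hμdef]
    dsimp only
    rw [e1, e2, e3]
    field_simp
    ring
  · filter_upwards [hr1, hr2] with ω e1 e2
    have hp := hπt0 ω
    have hq := hηt0 ω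
    rw [hμtdef, hμdef]
    dsimp only
    rw [e1, ← e2]
    field_simp
    ring
  · filter_upwards [hr1, hr2] with ω e1 e2
    have hp := hπt0 ω
    have hq := hηt0 ω
    rw [hμtdef, hμdef]
    dsimp only
    rw [← e1, ← e2]
    field_simp
    ring
end

section
/- Product-error bias decomposition for the MAR-efficient estimator (Theorem 2, second part): assume D := π·(Γ + (1−Γ)·H) ≥ ε almost surely for some ε > 0, M_MAR is integrable, and candidate nuisances π̃, γ̃, η̃, μ̃_MAR satisfy D̃ := π̃·(γ̃ + (1−γ̃)·η̃) ≥ ε almost surely. Then E[ μ̃_MAR + 1{A=a}·(R+S)·(Y − μ̃_MAR)/D̃ ] − E[M_MAR] = E[(1 − D/D̃)·(μ̃_MAR − M_MAR)]. The left-hand side is the paper's Bias_{τ_a*}(P̃; P). -/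
open MeasureTheory

/-- Product-error bias decomposition for the MAR-efficient estimator (Theorem 2,
second part): with `D := π(Γ + (1−Γ)H) ≥ ε` and `D̃ := π̃(γ̃ + (1−γ̃)η̃) ≥ ε` a.s.,
`E[μ̃_MAR + 1{A=a}(R+S)(Y − μ̃_MAR)/D̃] − E[M_MAR] = E[(1 − D/D̃)(μ̃_MAR − M_MAR)]`. -/
theorem product_error_bias_tau_star
    {Ω : Type*} [MeasurableSpace Ω] (P : Measure Ω) [IsProbabilityMeasure P]
    {d : ℕ} (L : Ω → (Fin d → ℝ)) (A R S Y : Ω → ℝ)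
    (hL : Measurable L) (hA : Measurable A) (hR : Measurable R)
    (hS : Measurable S) (hY : Integrable Y P)
    (hA01 : ∀ ω, A ω = 0 ∨ A ω = 1)
    (hR01 : ∀ ω, R ω = 0 ∨ R ω = 1)
    (hS01 : ∀ ω, S ω = 0 ∨ S ω = 1)
    (hSR : ∀ ω, S ω * R ω = 0)
    (a : ℝ) (ha : a = 0 ∨ a = 1)
    (𝓛 : MeasurableSpace Ω) (h𝓛 : 𝓛 = MeasurableSpace.comap L inferInstance)
    (ind : Ω → ℝ) (hind : ind = fun ω => if A ω = a then (1:ℝ) else 0)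
    -- arm-a nuisance random variables
    (π Γ H M_MAR : Ω → ℝ)
    (hπ_meas : Measurable[𝓛] π) (hπ_int : Integrable π P)
    (hΓ_meas : Measurable[𝓛] Γ) (hΓ_int : Integrable Γ P)
    (hH_meas : Measurable[𝓛] H) (hH_int : Integrable H P)
    (hMMAR_meas : Measurable[𝓛] M_MAR) (hMMAR_int : Integrable M_MAR P)
    (hπ01 : ∀ ω, 0 ≤ π ω ∧ π ω ≤ 1)
    (hΓ01 : ∀ ω, 0 ≤ Γ ω ∧ Γ ω ≤ 1)
    (hH01 : ∀ ω, 0 ≤ H ω ∧ H ω ≤ 1)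
    -- characterizations
    (hπ : P[ind | 𝓛] =ᵐ[P] π)
    (hΓ : P[fun ω => ind ω * R ω | 𝓛] =ᵐ[P] fun ω => Γ ω * π ω)
    (hH : P[fun ω => ind ω * S ω | 𝓛]
      =ᵐ[P] fun ω => H ω * (P[fun ω' => ind ω' * (1 - R ω') | 𝓛]) ω)
    (hMMAR : P[fun ω => ind ω * (R ω + S ω) * Y ω | 𝓛]
      =ᵐ[P] fun ω => M_MAR ω * (P[fun ω' => ind ω' * (R ω' + S ω') | 𝓛]) ω)
    -- true and candidate denominators, with positivity
    (ε : ℝ) (hε : 0 < ε)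
    (D : Ω → ℝ) (hDdef : D = fun ω => π ω * (Γ ω + (1 - Γ ω) * H ω))
    (hDpos : ∀ᵐ ω ∂P, ε ≤ D ω)
    -- candidate (possibly misspecified) nuisances
    (πt ηt γt μtM : Ω → ℝ)
    (hπt_meas : Measurable[𝓛] πt) (hηt_meas : Measurable[𝓛] ηt)
    (hγt_meas : Measurable[𝓛] γt) (hμtM_meas : Measurable[𝓛] μtM)
    (hπt_bdd : ∃ B, ∀ ω, |πt ω| ≤ B) (hηt_bdd : ∃ B, ∀ ω, |ηt ω| ≤ B)
    (hμtM_bdd : ∃ B, ∀ ω, |μtM ω| ≤ B)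
    (hγt01 : ∀ ω, 0 ≤ γt ω ∧ γt ω ≤ 1)
    (Dt : Ω → ℝ) (hDtdef : Dt = fun ω => πt ω * (γt ω + (1 - γt ω) * ηt ω))
    (hDtpos : ∀ᵐ ω ∂P, ε ≤ Dt ω) :
    ∫ ω, (μtM ω + ind ω * (R ω + S ω) * (Y ω - μtM ω) / Dt ω) ∂P
      - ∫ ω, M_MAR ω ∂P
    = ∫ ω, (1 - D ω / Dt ω) * (μtM ω - M_MAR ω) ∂P := by
  rename_i mΩ hPP
  have hm : 𝓛 ≤ mΩ := by
    rw [h𝓛]; exact hL.comap_le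
  haveI : SigmaFinite (P.trim hm) := inferInstance
  -- bounded measurable functions are integrable
  have intb : ∀ (f : Ω → ℝ), Measurable[mΩ] f → ∀ C : ℝ, (∀ ω, |f ω| ≤ C) → Integrable f P := by
    intro f hf C hC
    refine (integrable_const C).mono' hf.aestronglyMeasurable ?_
    exact Filter.Eventually.of_forall fun ω => by simpa [Real.norm_eq_abs] using hC ω
  have hind_m : Measurable[mΩ] ind := by
    rw [hind]
    exact Measurable.ite (hA (measurableSet_singleton a)) measurable_const measurable_const
  have hind01 : ∀ ω, ind ω = 0 ∨ ind ω = 1 := by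
    intro ω; rw [hind]; dsimp only; split
    · exact Or.inr rfl
    · exact Or.inl rfl
  have hRS01 : ∀ ω, R ω + S ω = 0 ∨ R ω + S ω = 1 := by
    intro ω; have hsr := hSR ω
    rcases hR01 ω with hr | hr <;> rcases hS01 ω with hs | hs <;>
      simp [hr, hs] at hsr ⊢
  have hg01 : ∀ ω, ind ω * (R ω + S ω) = 0 ∨ ind ω * (R ω + S ω) = 1 := by
    intro ω
    rcases hind01 ω with h | h <;> rcases hRS01 ω with h2 | h2 <;> simp [h, h2]
  have hgb : ∀ ω, |ind ω * (R ω + S ω)| ≤ 1 := fun ω => by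
    rcases hg01 ω with h | h <;> simp [h]
  have hindb : ∀ ω, |ind ω| ≤ 1 := fun ω => by rcases hind01 ω with h | h <;> simp [h]
  have hg_m : Measurable[mΩ] fun ω => ind ω * (R ω + S ω) := hind_m.mul (hR.add hS)
  obtain ⟨B0, hB0⟩ := hμtM_bdd
  set B' : ℝ := max B0 0 with hB'def
  have hB' : ∀ ω, |μtM ω| ≤ B' := fun ω => (hB0 ω).trans (le_max_left _ _)
  have hB'0 : 0 ≤ B' := le_max_right _ _
  have hμtM_m : Measurable[mΩ] μtM := hμtM_meas.mono hm le_rfl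
  have hμtM_int : Integrable μtM P := intb _ hμtM_m B' hB'
  have hπt_m : Measurable[mΩ] πt := hπt_meas.mono hm le_rfl
  have hγt_m : Measurable[mΩ] γt := hγt_meas.mono hm le_rfl
  have hηt_m : Measurable[mΩ] ηt := hηt_meas.mono hm le_rfl
  have hDt_m : Measurable[mΩ] Dt := by
    rw [hDtdef]
    exact hπt_m.mul (hγt_m.add ((measurable_const.sub hγt_m).mul hηt_m))
  have hDt_sm : StronglyMeasurable[𝓛] fun ω => (Dt ω)⁻¹ := by
    rw [hDtdef]
    exact ((hπt_meas.mul (hγt_meas.add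
      ((measurable_const.sub hγt_meas).mul hηt_meas))).inv).stronglyMeasurable
  have hDtinv_b : ∀ᵐ ω ∂P, |(Dt ω)⁻¹| ≤ ε⁻¹ := by
    filter_upwards [hDtpos] with ω h
    rw [abs_of_nonneg (inv_nonneg.2 (hε.le.trans h))]
    exact inv_anti₀ hε h
  -- integrability facts
  have hind_int : Integrable ind P := intb _ hind_m 1 hindb
  have hindR_int : Integrable (fun ω => ind ω * R ω) P := by
    refine intb _ (hind_m.mul hR) 1 fun ω => ?_
    rcases hind01 ω with h | h <;> rcases hR01 ω with h2 | h2 <;> simp [h, h2]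
  have hindS_int : Integrable (fun ω => ind ω * S ω) P := by
    refine intb _ (hind_m.mul hS) 1 fun ω => ?_
    rcases hind01 ω with h | h <;> rcases hS01 ω with h2 | h2 <;> simp [h, h2]
  have hg_int : Integrable (fun ω => ind ω * (R ω + S ω)) P := intb _ hg_m 1 hgb
  have hgY_int : Integrable (fun ω => ind ω * (R ω + S ω) * Y ω) P := by
    refine hY.abs.mono' (hg_m.aestronglyMeasurable.mul hY.aestronglyMeasurable) ?_
    refine Filter.Eventually.of_forall fun ω => ?_
    rw [Real.norm_eq_abs, abs_mul]
    exact mul_le_of_le_one_left (abs_nonneg _) (hgb ω)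
  have hgμ_int : Integrable (fun ω => μtM ω * (ind ω * (R ω + S ω))) P := by
    refine intb _ (hμtM_m.mul hg_m) B' fun ω => ?_
    rw [abs_mul]
    calc |μtM ω| * |ind ω * (R ω + S ω)| ≤ B' * 1 :=
          mul_le_mul (hB' ω) (hgb ω) (abs_nonneg _) hB'0
      _ = B' := mul_one _
  have hgYμ_int : Integrable (fun ω => ind ω * (R ω + S ω) * (Y ω - μtM ω)) P := by
    have e : (fun ω => ind ω * (R ω + S ω) * (Y ω - μtM ω))
        = fun ω => ind ω * (R ω + S ω) * Y ω - μtM ω * (ind ω * (R ω + S ω)) := by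
      funext ω; ring
    rw [e]; exact hgY_int.sub hgμ_int
  have hf_int : Integrable
      (fun ω => (Dt ω)⁻¹ * (ind ω * (R ω + S ω) * (Y ω - μtM ω))) P := by
    have hbound : Integrable (fun ω => ε⁻¹ * (|Y ω| + B')) P :=
      (hY.abs.add (integrable_const B')).const_mul _
    refine hbound.mono'
      (hDt_m.inv.aestronglyMeasurable.mul hgYμ_int.aestronglyMeasurable) ?_
    filter_upwards [hDtinv_b] with ω hω
    rw [Real.norm_eq_abs, abs_mul, abs_mul]
    have h1 : |Y ω - μtM ω| ≤ |Y ω| + B' :=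
      (abs_sub _ _).trans (by gcongr; exact hB' ω)
    calc |(Dt ω)⁻¹| * (|ind ω * (R ω + S ω)| * |Y ω - μtM ω|)
        ≤ ε⁻¹ * (1 * (|Y ω| + B')) := by
          refine mul_le_mul hω ?_ (by positivity) (inv_nonneg.2 hε.le)
          exact mul_le_mul (hgb ω) h1 (abs_nonneg _) one_pos.le
      _ = ε⁻¹ * (|Y ω| + B') := by ring
  -- conditional expectation computations
  have hE1 : P[fun ω => ind ω * (1 - R ω)|𝓛] =ᵐ[P] fun ω => π ω - Γ ω * π ω := by
    have e : (fun ω => ind ω * (1 - R ω)) =ᵐ[P] (ind - fun ω => ind ω * R ω) :=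
      Filter.Eventually.of_forall fun ω => by simp [Pi.sub_apply]; ring
    calc P[fun ω => ind ω * (1 - R ω)|𝓛]
        =ᵐ[P] P[ind - fun ω => ind ω * R ω|𝓛] := condExp_congr_ae e
      _ =ᵐ[P] P[ind|𝓛] - P[fun ω => ind ω * R ω|𝓛] := condExp_sub hind_int hindR_int _
      _ =ᵐ[P] fun ω => π ω - Γ ω * π ω := by
          filter_upwards [hπ, hΓ] with ω h1 h2
          simp [Pi.sub_apply, h1, h2]
  have hES : P[fun ω => ind ω * S ω|𝓛] =ᵐ[P] fun ω => H ω * (π ω - Γ ω * π ω) := by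
    filter_upwards [hH, hE1] with ω h1 h2
    rw [h1, h2]
  have hEg : P[fun ω => ind ω * (R ω + S ω)|𝓛] =ᵐ[P] D := by
    have e : (fun ω => ind ω * (R ω + S ω))
        =ᵐ[P] ((fun ω => ind ω * R ω) + fun ω => ind ω * S ω) :=
      Filter.Eventually.of_forall fun ω => by simp [Pi.add_apply]; ring
    calc P[fun ω => ind ω * (R ω + S ω)|𝓛]
        =ᵐ[P] P[(fun ω => ind ω * R ω) + fun ω => ind ω * S ω|𝓛] := condExp_congr_ae e
      _ =ᵐ[P] P[fun ω => ind ω * R ω|𝓛] + P[fun ω => ind ω * S ω|𝓛] :=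
          condExp_add hindR_int hindS_int _
      _ =ᵐ[P] D := by
          filter_upwards [hΓ, hES] with ω h1 h2
          rw [Pi.add_apply, h1, h2]
          simp only [hDdef]; ring
  have hEgY : P[fun ω => ind ω * (R ω + S ω) * Y ω|𝓛]
      =ᵐ[P] fun ω => M_MAR ω * D ω := by
    filter_upwards [hMMAR, hEg] with ω h1 h2
    rw [h1, h2]
  have hEgμ : P[fun ω => μtM ω * (ind ω * (R ω + S ω))|𝓛]
      =ᵐ[P] fun ω => μtM ω * D ω := by
    have h := condExp_mul_of_stronglyMeasurable_left (μ := P) (m := 𝓛)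
      hμtM_meas.stronglyMeasurable hgμ_int hg_int
    refine h.trans ?_
    filter_upwards [hEg] with ω h2
    rw [Pi.mul_apply, h2]
  have hEgYμ : P[fun ω => ind ω * (R ω + S ω) * (Y ω - μtM ω)|𝓛]
      =ᵐ[P] fun ω => M_MAR ω * D ω - μtM ω * D ω := by
    have e : (fun ω => ind ω * (R ω + S ω) * (Y ω - μtM ω))
        =ᵐ[P] ((fun ω => ind ω * (R ω + S ω) * Y ω)
            - fun ω => μtM ω * (ind ω * (R ω + S ω))) :=
      Filter.Eventually.of_forall fun ω => by simp [Pi.sub_apply]; ring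
    calc P[fun ω => ind ω * (R ω + S ω) * (Y ω - μtM ω)|𝓛]
        =ᵐ[P] P[(fun ω => ind ω * (R ω + S ω) * Y ω)
            - fun ω => μtM ω * (ind ω * (R ω + S ω))|𝓛] := condExp_congr_ae e
      _ =ᵐ[P] P[fun ω => ind ω * (R ω + S ω) * Y ω|𝓛]
            - P[fun ω => μtM ω * (ind ω * (R ω + S ω))|𝓛] :=
          condExp_sub hgY_int hgμ_int _
      _ =ᵐ[P] fun ω => M_MAR ω * D ω - μtM ω * D ω := by
          filter_upwards [hEgY, hEgμ] with ω h1 h2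
          rw [Pi.sub_apply, h1, h2]
  have hEf : P[fun ω => (Dt ω)⁻¹ * (ind ω * (R ω + S ω) * (Y ω - μtM ω))|𝓛]
      =ᵐ[P] fun ω => (Dt ω)⁻¹ * (M_MAR ω * D ω - μtM ω * D ω) := by
    have h := condExp_mul_of_stronglyMeasurable_left (μ := P) hDt_sm hf_int hgYμ_int
    refine h.trans ?_
    filter_upwards [hEgYμ] with ω h2
    rw [Pi.mul_apply, h2]
  -- integrability of the limit integrand pieces
  have hD_m : Measurable[mΩ] D := by
    rw [hDdef]
    exact (hπ_meas.mono hm le_rfl).mul ((hΓ_meas.mono hm le_rfl).add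
      ((measurable_const.sub (hΓ_meas.mono hm le_rfl)).mul (hH_meas.mono hm le_rfl)))
  have hD01 : ∀ ω, 0 ≤ D ω ∧ D ω ≤ 1 := fun ω => by
    obtain ⟨h1, h2⟩ := hπ01 ω; obtain ⟨h3, h4⟩ := hΓ01 ω; obtain ⟨h5, h6⟩ := hH01 ω
    simp only [hDdef]
    have hc0 : 0 ≤ Γ ω + (1 - Γ ω) * H ω := by
      nlinarith [mul_nonneg (sub_nonneg.2 h4) h5]
    have hc1 : Γ ω + (1 - Γ ω) * H ω ≤ 1 := by
      nlinarith [mul_nonneg (sub_nonneg.2 h4) (sub_nonneg.2 h6)]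
    exact ⟨mul_nonneg h1 hc0, by nlinarith [mul_nonneg (sub_nonneg.2 h2) hc0]⟩
  have hh_int : Integrable (fun ω => (Dt ω)⁻¹ * (M_MAR ω * D ω - μtM ω * D ω)) P := by
    have hbound : Integrable (fun ω => ε⁻¹ * (|M_MAR ω| + B')) P :=
      (hMMAR_int.abs.add (integrable_const B')).const_mul _
    have hM_m : AEStronglyMeasurable[mΩ] M_MAR P := hMMAR_int.aestronglyMeasurable
    refine hbound.mono' (hDt_m.inv.aestronglyMeasurable.mul
      ((hM_m.mul hD_m.aestronglyMeasurable).sub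
        (hμtM_m.aestronglyMeasurable.mul hD_m.aestronglyMeasurable))) ?_
    filter_upwards [hDtinv_b] with ω hω
    rw [Real.norm_eq_abs, abs_mul]
    have hDb : |D ω| ≤ 1 := abs_le.2 ⟨by linarith [(hD01 ω).1], (hD01 ω).2⟩
    have h1 : |M_MAR ω * D ω - μtM ω * D ω| ≤ |M_MAR ω| + B' := by
      calc |M_MAR ω * D ω - μtM ω * D ω| = |(M_MAR ω - μtM ω) * D ω| := by
            rw [sub_mul]
        _ = |M_MAR ω - μtM ω| * |D ω| := abs_mul _ _
        _ ≤ (|M_MAR ω| + B') * 1 :=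
            mul_le_mul ((abs_sub _ _).trans (by gcongr; exact hB' ω)) hDb
              (abs_nonneg _) (by positivity)
        _ = |M_MAR ω| + B' := mul_one _
    exact mul_le_mul hω h1 (abs_nonneg _) (inv_nonneg.2 hε.le)
  -- key integral identity
  have key : ∫ ω, ind ω * (R ω + S ω) * (Y ω - μtM ω) / Dt ω ∂P
      = ∫ ω, (Dt ω)⁻¹ * (M_MAR ω * D ω - μtM ω * D ω) ∂P := by
    have e1 : (fun ω => ind ω * (R ω + S ω) * (Y ω - μtM ω) / Dt ω)
        = fun ω => (Dt ω)⁻¹ * (ind ω * (R ω + S ω) * (Y ω - μtM ω)) := by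
      funext ω; rw [div_eq_mul_inv]; ring
    rw [e1, ← integral_condExp (μ := P) (f := fun ω => (Dt ω)⁻¹ * (ind ω * (R ω + S ω) * (Y ω - μtM ω))) hm]
    exact integral_congr_ae hEf
  have hdiv_int : Integrable
      (fun ω => ind ω * (R ω + S ω) * (Y ω - μtM ω) / Dt ω) P :=
    hf_int.congr (Filter.Eventually.of_forall fun ω => by
      show (Dt ω)⁻¹ * (ind ω * (R ω + S ω) * (Y ω - μtM ω))
          = ind ω * (R ω + S ω) * (Y ω - μtM ω) / Dt ω
      rw [div_eq_mul_inv]; ring)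
  -- assemble
  have hRHS : ∫ ω, (1 - D ω / Dt ω) * (μtM ω - M_MAR ω) ∂P
      = ∫ ω, ((μtM ω - M_MAR ω) + (Dt ω)⁻¹ * (M_MAR ω * D ω - μtM ω * D ω)) ∂P := by
    refine integral_congr_ae (Filter.Eventually.of_forall fun ω => ?_)
    show (1 - D ω / Dt ω) * (μtM ω - M_MAR ω)
        = μtM ω - M_MAR ω + (Dt ω)⁻¹ * (M_MAR ω * D ω - μtM ω * D ω)
    rw [div_eq_mul_inv]; ring
  have hsub_int : Integrable (fun ω => μtM ω - M_MAR ω) P := hμtM_int.sub hMMAR_int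
  rw [integral_add hμtM_int hdiv_int, key, hRHS,
    integral_add hsub_int hh_int, integral_sub hμtM_int hMMAR_int]
  ring
end

section
/- Double robustness of the MAR-efficient estimator (section 3.1): in the setting of the product-error bias decomposition for τ_a*, the bias E[ μ̃_MAR + 1{A=a}·(R+S)·(Y − μ̃_MAR)/D̃ ] − E[M_MAR] equals zero if μ̃_MAR = M_MAR almost everywhere, or if (π̃, γ̃, η̃) = (π, Γ, H) almost everywhere (more generally, if D̃ = D almost everywhere). -/
open MeasureTheory

/-- Double robustness of the MAR-efficient estimator (section 3.1): the bias
`E[μ̃_MAR + 1{A=a}(R+S)(Y − μ̃_MAR)/D̃] − E[M_MAR]` vanishes if `μ̃_MAR = M_MAR`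
a.e., or if `(π̃, γ̃, η̃) = (π, Γ, H)` a.e. (more generally, if `D̃ = D` a.e.). -/
theorem double_robustness_tau_star
    {Ω : Type*} [MeasurableSpace Ω] (P : Measure Ω) [IsProbabilityMeasure P]
    {d : ℕ} (L : Ω → (Fin d → ℝ)) (A R S Y : Ω → ℝ)
    (hL : Measurable L) (hA : Measurable A) (hR : Measurable R)
    (hS : Measurable S) (hY : Integrable Y P)
    (hA01 : ∀ ω, A ω = 0 ∨ A ω = 1)
    (hR01 : ∀ ω, R ω = 0 ∨ R ω = 1)
    (hS01 : ∀ ω, S ω = 0 ∨ S ω = 1)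
    (hSR : ∀ ω, S ω * R ω = 0)
    (a : ℝ) (ha : a = 0 ∨ a = 1)
    (𝓛 : MeasurableSpace Ω) (h𝓛 : 𝓛 = MeasurableSpace.comap L inferInstance)
    (ind : Ω → ℝ) (hind : ind = fun ω => if A ω = a then (1:ℝ) else 0)
    -- arm-a nuisance random variables
    (π Γ H M_MAR : Ω → ℝ)
    (hπ_meas : Measurable[𝓛] π) (hπ_int : Integrable π P)
    (hΓ_meas : Measurable[𝓛] Γ) (hΓ_int : Integrable Γ P)
    (hH_meas : Measurable[𝓛] H) (hH_int : Integrable H P)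
    (hMMAR_meas : Measurable[𝓛] M_MAR) (hMMAR_int : Integrable M_MAR P)
    (hπ01 : ∀ ω, 0 ≤ π ω ∧ π ω ≤ 1)
    (hΓ01 : ∀ ω, 0 ≤ Γ ω ∧ Γ ω ≤ 1)
    (hH01 : ∀ ω, 0 ≤ H ω ∧ H ω ≤ 1)
    -- characterizations
    (hπ : P[ind | 𝓛] =ᵐ[P] π)
    (hΓ : P[fun ω => ind ω * R ω | 𝓛] =ᵐ[P] fun ω => Γ ω * π ω)
    (hH : P[fun ω => ind ω * S ω | 𝓛]
      =ᵐ[P] fun ω => H ω * (P[fun ω' => ind ω' * (1 - R ω') | 𝓛]) ω)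
    (hMMAR : P[fun ω => ind ω * (R ω + S ω) * Y ω | 𝓛]
      =ᵐ[P] fun ω => M_MAR ω * (P[fun ω' => ind ω' * (R ω' + S ω') | 𝓛]) ω)
    -- true and candidate denominators, with positivity
    (ε : ℝ) (hε : 0 < ε)
    (D : Ω → ℝ) (hDdef : D = fun ω => π ω * (Γ ω + (1 - Γ ω) * H ω))
    (hDpos : ∀ᵐ ω ∂P, ε ≤ D ω)
    -- candidate (possibly misspecified) nuisances
    (πt ηt γt μtM : Ω → ℝ)
    (hπt_meas : Measurable[𝓛] πt) (hηt_meas : Measurable[𝓛] ηt)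
    (hγt_meas : Measurable[𝓛] γt) (hμtM_meas : Measurable[𝓛] μtM)
    (hπt_bdd : ∃ B, ∀ ω, |πt ω| ≤ B) (hηt_bdd : ∃ B, ∀ ω, |ηt ω| ≤ B)
    (hμtM_bdd : ∃ B, ∀ ω, |μtM ω| ≤ B)
    (hγt01 : ∀ ω, 0 ≤ γt ω ∧ γt ω ≤ 1)
    (Dt : Ω → ℝ) (hDtdef : Dt = fun ω => πt ω * (γt ω + (1 - γt ω) * ηt ω))
    (hDtpos : ∀ᵐ ω ∂P, ε ≤ Dt ω)
    -- any one of the robustness conditions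
    (hrob : (μtM =ᵐ[P] M_MAR)
      ∨ (πt =ᵐ[P] π ∧ γt =ᵐ[P] Γ ∧ ηt =ᵐ[P] H)
      ∨ (Dt =ᵐ[P] D)) :
    ∫ ω, (μtM ω + ind ω * (R ω + S ω) * (Y ω - μtM ω) / Dt ω) ∂P
      - ∫ ω, M_MAR ω ∂P = 0 := by
  rename_i mΩ _
  have hm : 𝓛 ≤ mΩ := h𝓛.trans_le hL.comap_le
  haveI : SigmaFinite (P.trim hm) := by
    have : IsFiniteMeasure (P.trim hm) := isFiniteMeasure_trim hm
    infer_instance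
  -- basic measurability / bounds
  have hind_meas : Measurable[mΩ] ind := by
    subst hind
    exact Measurable.ite (hA (measurableSet_singleton a)) measurable_const
      measurable_const
  have hind_bd : ∀ ω, |ind ω| ≤ 1 := by
    intro ω; subst hind; dsimp only; split <;> norm_num
  have hR_bd : ∀ ω, |R ω| ≤ 1 := by
    intro ω; rcases hR01 ω with h | h <;> rw [h] <;> norm_num
  have hS_bd : ∀ ω, |S ω| ≤ 1 := by
    intro ω; rcases hS01 ω with h | h <;> rw [h] <;> norm_num
  -- integrability helper for bounded measurable functions
  have int_bdd : ∀ (f : Ω → ℝ) (C : ℝ), Measurable[mΩ] f → (∀ ω, |f ω| ≤ C) →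
      Integrable f P := by
    intro f C hf hC
    exact Integrable.mono' (integrable_const C) hf.aestronglyMeasurable
      (Filter.Eventually.of_forall fun ω => by simpa using hC ω)
  -- key integrable functions
  have h_indR_int : Integrable (fun ω => ind ω * R ω) P := by
    refine int_bdd _ 1 (hind_meas.mul hR) fun ω => ?_
    rw [abs_mul]
    calc |ind ω| * |R ω| ≤ 1 * 1 :=
          mul_le_mul (hind_bd ω) (hR_bd ω) (abs_nonneg _) zero_le_one
      _ = 1 := by norm_num
  have h_indS_int : Integrable (fun ω => ind ω * S ω) P := by
    refine int_bdd _ 1 (hind_meas.mul hS) fun ω => ?_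
    rw [abs_mul]
    calc |ind ω| * |S ω| ≤ 1 * 1 :=
          mul_le_mul (hind_bd ω) (hS_bd ω) (abs_nonneg _) zero_le_one
      _ = 1 := by norm_num
  have h_ind_int : Integrable ind P := int_bdd _ 1 hind_meas hind_bd
  have h_ind1R_int : Integrable (fun ω => ind ω * (1 - R ω)) P := by
    have : (fun ω => ind ω * (1 - R ω)) = fun ω => ind ω - ind ω * R ω := by
      funext ω; ring
    rw [this]; exact h_ind_int.sub h_indR_int
  have hg2_eq : (fun ω => ind ω * (R ω + S ω))
      = fun ω => ind ω * R ω + ind ω * S ω := by funext ω; ring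
  have hg2_int : Integrable (fun ω => ind ω * (R ω + S ω)) P := by
    rw [hg2_eq]; exact h_indR_int.add h_indS_int
  have hg2_bd : ∀ ω, |ind ω * (R ω + S ω)| ≤ 2 := by
    intro ω
    rw [abs_mul]
    calc |ind ω| * |R ω + S ω| ≤ 1 * 2 := by
          refine mul_le_mul (hind_bd ω) ?_ (abs_nonneg _) zero_le_one
          calc |R ω + S ω| ≤ |R ω| + |S ω| := abs_add_le _ _
            _ ≤ 1 + 1 := add_le_add (hR_bd ω) (hS_bd ω)
            _ = 2 := by norm_num
      _ = 2 := by norm_num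
  have hg1_int : Integrable (fun ω => ind ω * (R ω + S ω) * Y ω) P :=
    hY.bdd_mul (c := 2) ((hind_meas.mul (hR.add hS)).aestronglyMeasurable) (Filter.Eventually.of_forall fun ω => by
      rw [Real.norm_eq_abs]; exact hg2_bd ω)
  -- conditional expectation of ind*(R+S) equals D
  have hD_condexp : P[fun ω => ind ω * (R ω + S ω) | 𝓛] =ᵐ[P] D := by
    have h1 : P[fun ω => ind ω * (R ω + S ω) | 𝓛]
        =ᵐ[P] P[fun ω => ind ω * R ω | 𝓛] + P[fun ω => ind ω * S ω | 𝓛] := by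
      rw [hg2_eq]; exact condExp_add h_indR_int h_indS_int _
    have h2 : P[fun ω => ind ω * (1 - R ω) | 𝓛]
        =ᵐ[P] fun ω => π ω - Γ ω * π ω := by
      have heq : (fun ω => ind ω * (1 - R ω)) = (ind - fun ω => ind ω * R ω) := by
        funext ω; simp only [Pi.sub_apply]; ring
      rw [heq]
      filter_upwards [condExp_sub (μ := P) (m := 𝓛) h_ind_int h_indR_int, hπ, hΓ]
        with ω h0 h1 h2
      rw [h0, Pi.sub_apply, h1, h2]
    have h3 : P[fun ω => ind ω * S ω | 𝓛]
        =ᵐ[P] fun ω => H ω * (π ω - Γ ω * π ω) := by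
      filter_upwards [hH, h2] with ω h0 h1
      rw [h0, h1]
    filter_upwards [h1, h3, hΓ] with ω e1 e3 eΓ
    simp only [Pi.add_apply] at e1
    rw [e1, e3, eΓ, hDdef]
    ring
  -- conditional expectation of ind*(R+S)*Y equals M_MAR * D
  have hMD_condexp : P[fun ω => ind ω * (R ω + S ω) * Y ω | 𝓛]
      =ᵐ[P] fun ω => M_MAR ω * D ω := by
    filter_upwards [hMMAR, hD_condexp] with ω h1 h2
    rw [h1, h2]
  -- pull-out lemma
  have pull : ∀ (f g : Ω → ℝ), Measurable[𝓛] f → (∃ C, ∀ᵐ ω ∂P, |f ω| ≤ C) →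
      Integrable g P →
      ∫ ω, f ω * g ω ∂P = ∫ ω, f ω * (P[g | 𝓛]) ω ∂P := by
    intro f g hf ⟨C, hC⟩ hg
    have hfg_int : Integrable (fun ω => f ω * g ω) P :=
      hg.bdd_mul (c := C) ((hf.mono hm le_rfl).aestronglyMeasurable)
        (by filter_upwards [hC] with ω h using by rw [Real.norm_eq_abs]; exact h)
    have hpull : P[(fun ω => f ω * g ω) | 𝓛] =ᵐ[P] fun ω => f ω * (P[g | 𝓛]) ω :=
      condExp_mul_of_stronglyMeasurable_left hf.stronglyMeasurable hfg_int hg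
    calc ∫ ω, f ω * g ω ∂P
        = ∫ ω, (P[(fun ω => f ω * g ω) | 𝓛]) ω ∂P := (integral_condExp hm).symm
      _ = ∫ ω, f ω * (P[g | 𝓛]) ω ∂P := integral_congr_ae hpull
  -- measurability & bounds of the candidate multipliers
  have hDt_meas : Measurable[𝓛] Dt := by
    rw [hDtdef]
    exact hπt_meas.mul (hγt_meas.add ((measurable_const.sub hγt_meas).mul hηt_meas))
  have hinvDt_bd : ∀ᵐ ω ∂P, |(Dt ω)⁻¹| ≤ ε⁻¹ := by
    filter_upwards [hDtpos] with ω h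
    have h0 : 0 < Dt ω := lt_of_lt_of_le hε h
    rw [abs_of_pos (inv_pos.mpr h0)]
    exact inv_anti₀ hε h
  obtain ⟨Bμ, hBμ⟩ := hμtM_bdd
  -- first pulled integral
  have hI1 : ∫ ω, (Dt ω)⁻¹ * (ind ω * (R ω + S ω) * Y ω) ∂P
      = ∫ ω, (Dt ω)⁻¹ * (M_MAR ω * D ω) ∂P := by
    rw [pull (fun ω => (Dt ω)⁻¹) _ hDt_meas.inv ⟨ε⁻¹, hinvDt_bd⟩ hg1_int]
    exact integral_congr_ae (by
      filter_upwards [hMD_condexp] with ω h; rw [h])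
  -- second pulled integral
  have hμDt_meas : Measurable[𝓛] fun ω => μtM ω * (Dt ω)⁻¹ :=
    hμtM_meas.mul hDt_meas.inv
  have hμDt_bd : ∀ᵐ ω ∂P, |μtM ω * (Dt ω)⁻¹| ≤ |Bμ| * ε⁻¹ := by
    filter_upwards [hinvDt_bd] with ω h
    rw [abs_mul]
    exact mul_le_mul ((hBμ ω).trans (le_abs_self _)) h (abs_nonneg _) (abs_nonneg _)
  have hI2 : ∫ ω, (μtM ω * (Dt ω)⁻¹) * (ind ω * (R ω + S ω)) ∂P
      = ∫ ω, (μtM ω * (Dt ω)⁻¹) * D ω ∂P := by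
    rw [pull _ _ hμDt_meas ⟨|Bμ| * ε⁻¹, hμDt_bd⟩ hg2_int]
    exact integral_congr_ae (by
      filter_upwards [hD_condexp] with ω h; rw [h])
  -- split the main integral
  have hμtM_int : Integrable μtM P :=
    int_bdd _ Bμ (hμtM_meas.mono hm le_rfl) hBμ
  have hfa_int : Integrable (fun ω => (Dt ω)⁻¹ * (ind ω * (R ω + S ω) * Y ω)) P :=
    hg1_int.bdd_mul (c := ε⁻¹) ((hDt_meas.inv.mono hm le_rfl).aestronglyMeasurable)
      (by filter_upwards [hinvDt_bd] with ω h using by rw [Real.norm_eq_abs]; exact h)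
  have hfb_int : Integrable (fun ω => (μtM ω * (Dt ω)⁻¹) * (ind ω * (R ω + S ω))) P :=
    hg2_int.bdd_mul (c := |Bμ| * ε⁻¹)
      ((hμDt_meas.mono hm le_rfl).aestronglyMeasurable)
      (by filter_upwards [hμDt_bd] with ω h using by rw [Real.norm_eq_abs]; exact h)
  have hsplit : (fun ω => μtM ω + ind ω * (R ω + S ω) * (Y ω - μtM ω) / Dt ω)
      = fun ω => μtM ω + ((Dt ω)⁻¹ * (ind ω * (R ω + S ω) * Y ω)
        - (μtM ω * (Dt ω)⁻¹) * (ind ω * (R ω + S ω))) := by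
    funext ω; field_simp
  have hfab_int : Integrable (fun ω => (Dt ω)⁻¹ * (ind ω * (R ω + S ω) * Y ω)
      - (μtM ω * (Dt ω)⁻¹) * (ind ω * (R ω + S ω))) P := hfa_int.sub hfb_int
  have hmain : ∫ ω, (μtM ω + ind ω * (R ω + S ω) * (Y ω - μtM ω) / Dt ω) ∂P
      = ∫ ω, μtM ω ∂P + (∫ ω, (Dt ω)⁻¹ * (ind ω * (R ω + S ω) * Y ω) ∂P
        - ∫ ω, (μtM ω * (Dt ω)⁻¹) * (ind ω * (R ω + S ω)) ∂P) := by
    rw [hsplit, integral_add hμtM_int hfab_int, integral_sub hfa_int hfb_int]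
  rw [hmain, hI1, hI2]
  -- remaining integrands are integrable (D is bounded by 1)
  have hD_bd : ∀ ω, |D ω| ≤ 1 := by
    intro ω
    rw [hDdef]
    dsimp only
    obtain ⟨h1, h2⟩ := hπ01 ω
    obtain ⟨h3, h4⟩ := hΓ01 ω
    obtain ⟨h5, h6⟩ := hH01 ω
    have hge : 0 ≤ Γ ω + (1 - Γ ω) * H ω := by nlinarith
    have hle : Γ ω + (1 - Γ ω) * H ω ≤ 1 := by nlinarith
    rw [abs_le]
    constructor
    · nlinarith [mul_nonneg h1 hge]
    · nlinarith [mul_le_one₀ h2 hge hle]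
  have hD_meas : Measurable[mΩ] D := by
    rw [hDdef]
    exact ((hπ_meas.mono hm le_rfl).mul
      (((hΓ_meas.mono hm le_rfl)).add
        ((measurable_const.sub (hΓ_meas.mono hm le_rfl)).mul (hH_meas.mono hm le_rfl))))
  have hMD_int : Integrable (fun ω => M_MAR ω * D ω) P := by
    have : (fun ω => M_MAR ω * D ω) = fun ω => D ω * M_MAR ω := by funext ω; ring
    rw [this]
    exact hMMAR_int.bdd_mul (c := 1) hD_meas.aestronglyMeasurable (Filter.Eventually.of_forall fun ω => by
      rw [Real.norm_eq_abs]; exact hD_bd ω)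
  have hJ1_int : Integrable (fun ω => (Dt ω)⁻¹ * (M_MAR ω * D ω)) P :=
    hMD_int.bdd_mul (c := ε⁻¹) ((hDt_meas.inv.mono hm le_rfl).aestronglyMeasurable)
      (by filter_upwards [hinvDt_bd] with ω h using by rw [Real.norm_eq_abs]; exact h)
  have hD_int : Integrable D P := int_bdd _ 1 hD_meas hD_bd
  have hJ2_int : Integrable (fun ω => (μtM ω * (Dt ω)⁻¹) * D ω) P :=
    hD_int.bdd_mul (c := |Bμ| * ε⁻¹)
      ((hμDt_meas.mono hm le_rfl).aestronglyMeasurable)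
      (by filter_upwards [hμDt_bd] with ω h using by rw [Real.norm_eq_abs]; exact h)
  -- combine everything into a single integral
  have hJd_int : Integrable (fun ω => (Dt ω)⁻¹ * (M_MAR ω * D ω)
      - (μtM ω * (Dt ω)⁻¹) * D ω) P := hJ1_int.sub hJ2_int
  have hJs_int : Integrable (fun ω => μtM ω + ((Dt ω)⁻¹ * (M_MAR ω * D ω)
      - (μtM ω * (Dt ω)⁻¹) * D ω)) P := hμtM_int.add hJd_int
  have hcomb : ∫ ω, μtM ω ∂P + (∫ ω, (Dt ω)⁻¹ * (M_MAR ω * D ω) ∂P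
        - ∫ ω, (μtM ω * (Dt ω)⁻¹) * D ω ∂P) - ∫ ω, M_MAR ω ∂P
      = ∫ ω, (μtM ω + ((Dt ω)⁻¹ * (M_MAR ω * D ω)
          - (μtM ω * (Dt ω)⁻¹) * D ω) - M_MAR ω) ∂P := by
    rw [integral_sub hJs_int hMMAR_int, integral_add hμtM_int hJd_int,
      integral_sub hJ1_int hJ2_int]
  rw [hcomb]
  -- reduce all robustness cases to: Dt = D a.e. or μtM = M_MAR a.e.
  have hDtD : (μtM =ᵐ[P] M_MAR) ∨ (Dt =ᵐ[P] D) := by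
    rcases hrob with h | ⟨h1, h2, h3⟩ | h
    · exact Or.inl h
    · refine Or.inr ?_
      filter_upwards [h1, h2, h3] with ω e1 e2 e3
      rw [hDtdef, hDdef]; dsimp only; rw [e1, e2, e3]
    · exact Or.inr h
  have hzero : (fun ω => μtM ω + ((Dt ω)⁻¹ * (M_MAR ω * D ω)
      - (μtM ω * (Dt ω)⁻¹) * D ω) - M_MAR ω) =ᵐ[P] 0 := by
    rcases hDtD with h | h
    · filter_upwards [h] with ω e
      simp only [Pi.zero_apply]
      rw [e]; ring
    · filter_upwards [h, hDtpos] with ω e hpos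
      have hne : Dt ω ≠ 0 := ne_of_gt (lt_of_lt_of_le hε hpos)
      simp only [Pi.zero_apply]
      rw [← e]
      field_simp
      ring
  rw [integral_congr_ae hzero]
  simp
end
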